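/- arXiv:2101.02470 — 6 statements merged into one kernel-verified Lean document; each statement's English description precedes it below -/
import Mathlib

section
/- Let 1 < p < ∞ and let w be a strictly positive density on U satisfying (★). Then for every ψ ∈ L^∞, the function ψ̃(ξ) := ψ(ξ) − ∑_{i=1}^n (w_i^c(ξ_i^c)/w(ξ)) ∫ ψ(ξ)w(ξ)dξ_i^c + (n−1)∫_U ψ(η)w(η)dη belongs to N, i.e. ψ̃ ∈ L^p(w) and ∫ ψ̃(ξ)w(ξ)dξ_i^c = 0 for a.e. ξ_i, for every 1 ≤ i ≤ n. -/
open MeasureTheory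

noncomputable section

/-- `I` is a closed interval of the form `(-∞,b]`, `[a,∞)`, or `[a,b]` with `a < b`. -/
def IsClosedIntervalType (I : Set ℝ) : Prop :=
  (∃ b : ℝ, I = Set.Iic b) ∨ (∃ a : ℝ, I = Set.Ici a) ∨ (∃ a b : ℝ, a < b ∧ I = Set.Icc a b)

/-- Integrate out all coordinates except the `i`-th one, at value `t` of the `i`-th
coordinate: `margC i F t = ∫ F dξᵢᶜ` evaluated at `ξᵢ = t`. -/
def margC {n : ℕ} (i : Fin n) (F : (Fin n → ℝ) → ℝ) (t : ℝ) : ℝ :=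
  ∫ y : {j : Fin n // j ≠ i} → ℝ, F (fun j => if h : j = i then t else y ⟨j, h⟩)

/-- Integrate out the `i`-th coordinate: `margO i F ξ = ∫ F dξᵢ`, a function of `ξ`
depending only on `ξᵢᶜ`. -/
def margO {n : ℕ} (i : Fin n) (F : (Fin n → ℝ) → ℝ) (ξ : Fin n → ℝ) : ℝ :=
  ∫ t : ℝ, F (Function.update ξ i t)

/-- The weighted measure `w(ξ)dξ`; `L^p(w)` is `ℒ^p` of this measure. -/
def wMeasure {n : ℕ} (w : (Fin n → ℝ) → ℝ) : Measure (Fin n → ℝ) :=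
  volume.withDensity (fun ξ => ENNReal.ofReal (w ξ))

/-- `w` is a strictly positive density on `U` (extended by zero off `U`). -/
structure IsDensityOn {n : ℕ} (w : (Fin n → ℝ) → ℝ) (U : Set (Fin n → ℝ)) : Prop where
  measurable : Measurable w
  pos : ∀ ξ ∈ U, 0 < w ξ
  zero : ∀ ξ ∉ U, w ξ = 0
  integral_one : (∫ ξ, w ξ) = 1

/-- Condition (★): `wᵢ·wᵢᶜ/w ∈ L^p(w)` for all `1 ≤ i ≤ n`. -/
def StarCondition {n : ℕ} (w : (Fin n → ℝ) → ℝ) (p : ℝ) : Prop :=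
  ∀ i : Fin n,
    MemLp (fun ξ => margC i w (ξ i) * margO i w ξ / w ξ) (ENNReal.ofReal p) (wMeasure w)

/-- The Smirnov property for exponent `q`. -/
def SmirnovProperty {n : ℕ} (w : (Fin n → ℝ) → ℝ) (q : ℝ) : Prop :=
  ∀ Ψ : Fin n → ℝ → ℝ,
    (∀ i, MemLp (fun ξ => Ψ i (ξ i)) 1 (wMeasure w)) →
    MemLp (fun ξ => (1 / (n : ℝ)) * ∑ i, Ψ i (ξ i)) (ENNReal.ofReal q) (wMeasure w) →
    ∀ i, MemLp (fun ξ => Ψ i (ξ i)) (ENNReal.ofReal q) (wMeasure w)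

/-- Membership in `N = {φ ∈ L^p(w) : ∫ φ w dξᵢᶜ = 0 a.e., ∀ i}`. -/
def MemN {n : ℕ} (w : (Fin n → ℝ) → ℝ) (p : ℝ) (φ : (Fin n → ℝ) → ℝ) : Prop :=
  MemLp φ (ENNReal.ofReal p) (wMeasure w) ∧
  ∀ i : Fin n, ∀ᵐ t : ℝ, margC i (fun ξ => φ ξ * w ξ) t = 0

namespace PT

variable {ι : Type*} [Fintype ι] [DecidableEq ι]

def eqUnique (i : ι) : Unique {j : ι // j = i} where
  default := ⟨i, rfl⟩
  uniq := fun x => Subtype.ext x.2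

def eSplit (i : ι) : (ι → ℝ) ≃ᵐ ℝ × ({j : ι // j ≠ i} → ℝ) :=
  (MeasurableEquiv.piEquivPiSubtypeProd (fun _ : ι => ℝ) (fun j => j = i)).trans
    ((@MeasurableEquiv.funUnique {j : ι // j = i} ℝ (eqUnique i) _).prodCongr (MeasurableEquiv.refl _))

theorem mp_eSplit (i : ι) :
    MeasurePreserving (eSplit i) volume ((volume : Measure ℝ).prod volume) := by
  have h1 := volume_preserving_piEquivPiSubtypeProd (fun _ : ι => ℝ) (fun j => j = i)
  rw [MeasureTheory.Measure.volume_eq_prod] at h1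
  have h2 := (@volume_preserving_funUnique {j : ι // j = i} ℝ (eqUnique i) _).prod
      (MeasurePreserving.id (volume : Measure ({j : ι // j ≠ i} → ℝ)))
  have hco : ⇑(eSplit i) =
      (Prod.map (⇑(@MeasurableEquiv.funUnique { j // j = i } ℝ (eqUnique i) _)) id) ∘
        ⇑(MeasurableEquiv.piEquivPiSubtypeProd (fun _ : ι => ℝ) (fun j => j = i)) := rfl
  rw [hco]
  refine MeasurePreserving.comp h2 ?_
  convert h1 using 2
  congr!
  · rfl
  · congr 1; congr 1; exact Subsingleton.elim _ _

theorem eSplit_symm_eq (i : ι) (t : ℝ) (y : {j : ι // j ≠ i} → ℝ) :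
    (eSplit i).symm (t, y) = fun j => if h : j = i then t else y ⟨j, h⟩ := rfl

theorem eSplit_symm_self (i : ι) (t : ℝ) (y : {j : ι // j ≠ i} → ℝ) :
    (eSplit i).symm (t, y) i = t := by
  rw [eSplit_symm_eq]; exact dif_pos rfl

theorem eSplit_symm_ne (i : ι) (t : ℝ) (y : {j : ι // j ≠ i} → ℝ) {m : ι} (h : m ≠ i) :
    (eSplit i).symm (t, y) m = y ⟨m, h⟩ := by
  rw [eSplit_symm_eq]; exact dif_neg h

/-- remove the `i`-th coordinate -/
def proj (i : ι) (ξ : ι → ℝ) : {j : ι // j ≠ i} → ℝ := fun j => ξ j.1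

theorem proj_measurable (i : ι) : Measurable (proj i) :=
  measurable_pi_lambda _ fun m => measurable_pi_apply m.1

theorem proj_eSplit_symm (i : ι) (t : ℝ) (y : {j : ι // j ≠ i} → ℝ) :
    proj i ((eSplit i).symm (t, y)) = y := by
  funext m
  exact eSplit_symm_ne i t y m.2

theorem proj_update (i : ι) (ξ : ι → ℝ) (s : ℝ) :
    proj i (Function.update ξ i s) = proj i ξ := by
  funext m
  exact Function.update_of_ne m.2 s ξ

theorem update_eq_eSplit_symm (i : ι) (ξ : ι → ℝ) (t : ℝ) :
    Function.update ξ i t = (eSplit i).symm (t, proj i ξ) := by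
  funext m
  rcases eq_or_ne m i with rfl | h
  · rw [Function.update_self, eSplit_symm_self]
  · rw [Function.update_of_ne h, eSplit_symm_ne i t _ h]; rfl

theorem eSplit_symm_update (i : ι) (t s : ℝ) (y : {j : ι // j ≠ i} → ℝ) :
    Function.update ((eSplit i).symm (t, y)) i s = (eSplit i).symm (s, y) := by
  rw [update_eq_eSplit_symm, proj_eSplit_symm]

theorem ae_eval (i : ι) {P : ℝ → Prop} (h : ∀ᵐ t : ℝ, P t) :
    ∀ᵐ ξ : ι → ℝ, P (ξ i) := by
  rw [ae_iff] at h ⊢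
  obtain ⟨T, hsub, hTm, hT0⟩ := exists_measurable_superset_of_null h
  refine measure_mono_null (t := eSplit i ⁻¹' (T ×ˢ Set.univ)) (fun ξ hξ => ?_) ?_
  · exact Set.mem_preimage.2 ⟨hsub hξ, Set.mem_univ _⟩
  · rw [(mp_eSplit i).measure_preimage ((hTm.prod MeasurableSet.univ).nullMeasurableSet)]
    simp [Measure.prod_prod, hT0]

theorem slice_ae (i : ι) {P : (ι → ℝ) → Prop} (h : ∀ᵐ ξ : ι → ℝ, P ξ) :
    ∀ᵐ t : ℝ, ∀ᵐ y : {j : ι // j ≠ i} → ℝ, P ((eSplit i).symm (t, y)) := by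
  have h2 : ∀ᵐ z : ℝ × ({j : ι // j ≠ i} → ℝ)
      ∂((volume : Measure ℝ).prod volume), P ((eSplit i).symm z) :=
    (MeasurePreserving.symm _ (mp_eSplit i)).quasiMeasurePreserving.ae h
  exact Measure.ae_ae_of_ae_prod h2

theorem integrable_comp (i : ι) {F : (ι → ℝ) → ℝ} :
    Integrable (fun z : ℝ × ({j : ι // j ≠ i} → ℝ) => F ((eSplit i).symm z))
      ((volume : Measure ℝ).prod volume) ↔ Integrable F volume :=
  (MeasurePreserving.symm _ (mp_eSplit i)).integrable_comp_emb
    (MeasurableEquiv.measurableEmbedding _)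

theorem integral_comp (i : ι) (F : (ι → ℝ) → ℝ) :
    ∫ z : ℝ × ({j : ι // j ≠ i} → ℝ), F ((eSplit i).symm z)
      ∂((volume : Measure ℝ).prod volume) = ∫ ξ, F ξ :=
  (MeasurePreserving.symm _ (mp_eSplit i)).integral_comp
    (MeasurableEquiv.measurableEmbedding _) F

theorem ae_integrable_slice (i : ι) {F : (ι → ℝ) → ℝ} (hF : Integrable F volume) :
    ∀ᵐ t : ℝ, Integrable (fun y => F ((eSplit i).symm (t, y))) volume :=
  ((integrable_comp i).2 hF).prod_right_ae

theorem integrable_intslice (i : ι) {F : (ι → ℝ) → ℝ} (hF : Integrable F volume) :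
    Integrable (fun t : ℝ => ∫ y, F ((eSplit i).symm (t, y))) volume :=
  ((integrable_comp i).2 hF).integral_prod_left

theorem integrable_intslice' (i : ι) {F : (ι → ℝ) → ℝ} (hF : Integrable F volume) :
    Integrable (fun y : {j : ι // j ≠ i} → ℝ => ∫ t : ℝ, F ((eSplit i).symm (t, y))) volume :=
  ((integrable_comp i).2 hF).integral_prod_right

theorem integral_intslice (i : ι) {F : (ι → ℝ) → ℝ} (hF : Integrable F volume) :
    ∫ t : ℝ, ∫ y, F ((eSplit i).symm (t, y)) = ∫ ξ, F ξ := by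
  rw [← integral_comp i F]
  exact (integral_prod _ ((integrable_comp i).2 hF)).symm

theorem integral_intslice' (i : ι) {F : (ι → ℝ) → ℝ} (hF : Integrable F volume) :
    ∫ y : {j : ι // j ≠ i} → ℝ, ∫ t : ℝ, F ((eSplit i).symm (t, y)) = ∫ ξ, F ξ := by
  rw [← integral_comp i F]
  exact (integral_prod_symm _ ((integrable_comp i).2 hF)).symm

theorem sm_intslice (i : ι) {F : (ι → ℝ) → ℝ} (hF : Measurable F) :
    StronglyMeasurable (fun t : ℝ => ∫ y, F ((eSplit i).symm (t, y))) :=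
  (hF.comp (eSplit i).symm.measurable).stronglyMeasurable.integral_prod_right'

theorem sm_intslice' (i : ι) {F : (ι → ℝ) → ℝ} (hF : Measurable F) :
    StronglyMeasurable (fun y : {j : ι // j ≠ i} → ℝ => ∫ t : ℝ, F ((eSplit i).symm (t, y))) :=
  (hF.comp (eSplit i).symm.measurable).stronglyMeasurable.integral_prod_left'

theorem nested_point (i j : ι) (hji : j ≠ i) (t s s₀ : ℝ)
    (z : {m : {l : ι // l ≠ i} // m ≠ ⟨j, hji⟩} → ℝ) :
    (eSplit i).symm (t, (eSplit (⟨j, hji⟩ : {l : ι // l ≠ i})).symm (s, z)) =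
      Function.update
        ((eSplit i).symm (t, (eSplit (⟨j, hji⟩ : {l : ι // l ≠ i})).symm (s₀, z))) j s := by
  funext m
  rcases eq_or_ne m j with rfl | hmj
  · rw [Function.update_self, eSplit_symm_ne i t _ hji, eSplit_symm_self]
  · rw [Function.update_of_ne hmj]
    rcases eq_or_ne m i with rfl | hmi
    · rw [eSplit_symm_self, eSplit_symm_self]
    · have hsub : (⟨m, hmi⟩ : {l : ι // l ≠ i}) ≠ ⟨j, hji⟩ :=
        fun hc => hmj (congrArg Subtype.val hc)
      rw [eSplit_symm_ne i t _ hmi, eSplit_symm_ne i t _ hmi,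
        eSplit_symm_ne _ s z hsub, eSplit_symm_ne _ s₀ z hsub]

end PT

theorem margC_eq {n : ℕ} (i : Fin n) (F : (Fin n → ℝ) → ℝ) (t : ℝ) :
    margC i F t = ∫ y, F ((PT.eSplit i).symm (t, y)) := rfl

theorem margO_eq {n : ℕ} (j : Fin n) (w : (Fin n → ℝ) → ℝ) (ξ : Fin n → ℝ) :
    margO j w ξ = ∫ s : ℝ, w ((PT.eSplit j).symm (s, PT.proj j ξ)) := by
  unfold margO
  congr 1
  funext s
  rw [PT.update_eq_eSplit_symm]


theorem psi_tilde_mem_N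
    {n : ℕ} (hn : 1 ≤ n) (I : Fin n → Set ℝ) (hI : ∀ i, IsClosedIntervalType (I i))
    (U : Set (Fin n → ℝ)) (hU : U = Set.univ.pi I)
    (w : (Fin n → ℝ) → ℝ) (hw : IsDensityOn w U)
    (p : ℝ) (hp : 1 < p) (hstar : StarCondition w p)
    (ψ : (Fin n → ℝ) → ℝ) (hψ : MemLp ψ ⊤ (wMeasure w)) :
    MemN w p (fun ξ => ψ ξ -
      (∑ i : Fin n, margO i w ξ / w ξ * margC i (fun η => ψ η * w η) (ξ i)) +
      ((n : ℝ) - 1) * ∫ η, ψ η * w η) := by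
  have hwmeas := hw.measurable
  have hw0 : ∀ ξ, 0 ≤ w ξ := by
    intro ξ
    by_cases hξ : ξ ∈ U
    · exact (hw.pos ξ hξ).le
    · exact (hw.zero ξ hξ).ge
  have hwint : Integrable w (volume : Measure (Fin n → ℝ)) := by
    by_contra hcon
    have h1 := hw.integral_one
    rw [integral_undef hcon] at h1
    exact zero_ne_one h1
  -- the weighted measure is a finite measure
  have hwm_univ : wMeasure w Set.univ = 1 := by
    rw [wMeasure, withDensity_apply _ MeasurableSet.univ, Measure.restrict_univ,
      ← ofReal_integral_eq_lintegral_ofReal hwint (Filter.Eventually.of_forall hw0),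
      hw.integral_one, ENNReal.ofReal_one]
  haveI : IsFiniteMeasure (wMeasure w) := ⟨by rw [hwm_univ]; exact ENNReal.one_lt_top⟩
  have hac : wMeasure w ≪ (volume : Measure (Fin n → ℝ)) :=
    withDensity_absolutelyContinuous _ _
  -- a bounded measurable representative of ψ
  set C : ℝ := (eLpNormEssSup ψ (wMeasure w)).toReal with hCdef
  have hC0 : 0 ≤ C := ENNReal.toReal_nonneg
  have hCne : eLpNormEssSup ψ (wMeasure w) ≠ ⊤ := by
    have := hψ.2
    rw [eLpNorm_exponent_top] at this
    exact this.ne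
  have hbd : ∀ᵐ ξ ∂(wMeasure w), ‖ψ ξ‖ ≤ C := by
    filter_upwards [enorm_ae_le_eLpNormEssSup ψ (wMeasure w)] with ξ h
    have h2 : ((‖ψ ξ‖₊ : ENNReal)).toReal ≤ C := ENNReal.toReal_mono hCne h
    simpa using h2
  obtain ⟨ψm, hψm_sm, hψ_eq⟩ := hψ.1
  set ψ₁ : (Fin n → ℝ) → ℝ := fun ξ => max (-C) (min C (ψm ξ)) with hψ₁def
  have hψ₁meas : Measurable ψ₁ :=
    measurable_const.max (measurable_const.min hψm_sm.measurable)
  have hψ₁bd : ∀ ξ, |ψ₁ ξ| ≤ C := by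
    intro ξ
    refine abs_le.2 ⟨le_max_left _ _, max_le (by linarith) (min_le_left _ _)⟩
  have hψψ₁ : ψ =ᵐ[wMeasure w] ψ₁ := by
    filter_upwards [hψ_eq, hbd] with ξ h1 h2
    rw [Real.norm_eq_abs] at h2
    have h2' := abs_le.1 h2
    rw [hψ₁def]
    simp only [← h1]
    rw [min_eq_right h2'.2, max_eq_right h2'.1]
  have key0 : ∀ᵐ ξ ∂(volume : Measure (Fin n → ℝ)),
      ENNReal.ofReal (w ξ) ≠ 0 → ψ ξ = ψ₁ ξ :=
    (ae_withDensity_iff (hwmeas.ennreal_ofReal)).1 hψψ₁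
  have hofReal_ne : ∀ ξ, w ξ ≠ 0 → ENNReal.ofReal (w ξ) ≠ 0 := by
    intro ξ hz
    simpa [ENNReal.ofReal_eq_zero, not_le] using lt_of_le_of_ne (hw0 ξ) (Ne.symm hz)
  have hprod_ae : (fun ξ => ψ ξ * w ξ) =ᵐ[volume] (fun ξ => ψ₁ ξ * w ξ) := by
    filter_upwards [key0] with ξ h
    by_cases hz : w ξ = 0
    · simp [hz]
    · rw [h (hofReal_ne ξ hz)]
  -- notation
  set W : (Fin n → ℝ) → ℝ := fun ξ => ψ₁ ξ * w ξ with hWdef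
  have hWmeas : Measurable W := hψ₁meas.mul hwmeas
  have hWbd : ∀ ξ, ‖W ξ‖ ≤ C * w ξ := by
    intro ξ
    rw [Real.norm_eq_abs, hWdef]
    simp only []
    rw [abs_mul, abs_of_nonneg (hw0 ξ)]
    exact mul_le_mul_of_nonneg_right (hψ₁bd ξ) (hw0 ξ)
  have hWint : Integrable W volume :=
    (hwint.const_mul C).mono' hWmeas.aestronglyMeasurable (Filter.Eventually.of_forall hWbd)
  set c : ℝ := ∫ ξ, W ξ with hcdef
  have hcψ : (∫ η, ψ η * w η) = c := integral_congr_ae hprod_ae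
  set k : Fin n → ℝ → ℝ := fun j t => ∫ y, w ((PT.eSplit j).symm (t, y)) with hkdef
  set K : Fin n → ℝ → ℝ := fun j t => ∫ y, W ((PT.eSplit j).symm (t, y)) with hKdef
  set g : (j : Fin n) → ({l : Fin n // l ≠ j} → ℝ) → ℝ :=
    fun j y => ∫ s : ℝ, w ((PT.eSplit j).symm (s, y)) with hgdef
  have hmargCw : ∀ (j : Fin n) (t : ℝ), margC j w t = k j t := fun j t => margC_eq j w t
  have hmargO : ∀ (j : Fin n) (ξ : Fin n → ℝ), margO j w ξ = g j (PT.proj j ξ) :=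
    fun j ξ => margO_eq j w ξ
  have hkint : ∀ j, Integrable (k j) volume := fun j => PT.integrable_intslice j hwint
  have hKint : ∀ j, Integrable (K j) volume := fun j => PT.integrable_intslice j hWint
  have hgint : ∀ j, Integrable (g j) volume := fun j => PT.integrable_intslice' j hwint
  have hg0 : ∀ j y, 0 ≤ g j y := fun j y => integral_nonneg (fun s => hw0 _)
  have hk0 : ∀ j t, 0 ≤ k j t := fun j t => integral_nonneg (fun y => hw0 _)
  have hksm : ∀ j, StronglyMeasurable (k j) := fun j => PT.sm_intslice j hwmeas
  have hKsm : ∀ j, StronglyMeasurable (K j) := fun j => PT.sm_intslice j hWmeas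
  have hgsm : ∀ j, StronglyMeasurable (g j) := fun j => PT.sm_intslice' j hwmeas
  have hgInt1 : ∀ j, (∫ y, g j y) = 1 := by
    intro j
    rw [hgdef]
    rw [PT.integral_intslice' j hwint, hw.integral_one]
  have hKInt : ∀ j, (∫ t, K j t) = c := fun j => PT.integral_intslice j hWint
  -- pointwise (a.e.) bound |K j| ≤ C * k j
  have hKbd : ∀ j, ∀ᵐ t : ℝ, |K j t| ≤ C * k j t := by
    intro j
    filter_upwards [PT.ae_integrable_slice j hwint] with t ht
    have h1 : ‖∫ y, W ((PT.eSplit j).symm (t, y))‖ ≤ ∫ y, C * w ((PT.eSplit j).symm (t, y)) :=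
      norm_integral_le_of_norm_le (ht.const_mul C)
        (Filter.Eventually.of_forall fun y => hWbd _)
    rw [integral_const_mul, Real.norm_eq_abs] at h1
    exact h1
  set H : (j : Fin n) → (Fin n → ℝ) → ℝ :=
    fun j ξ => K j (ξ j) * g j (PT.proj j ξ) with hHdef
  have hHmeas : ∀ j, Measurable (H j) := by
    intro j
    exact ((hKsm j).measurable.comp (measurable_pi_apply j)).mul
      ((hgsm j).measurable.comp (PT.proj_measurable j))
  have hHint : ∀ j, Integrable (H j) volume := by
    intro j
    refine Integrable.mono' (g := fun ξ => C * k j (ξ j) * g j (PT.proj j ξ)) ?_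
      (hHmeas j).aestronglyMeasurable ?_
    · refine (PT.integrable_comp j).1 ?_
      have heq : (fun z : ℝ × ({l : Fin n // l ≠ j} → ℝ) =>
            C * k j (((PT.eSplit j).symm z) j) * g j (PT.proj j ((PT.eSplit j).symm z)))
          = fun z => (C * k j z.1) * g j z.2 := by
        funext z
        obtain ⟨s, y⟩ := z
        rw [PT.eSplit_symm_self, PT.proj_eSplit_symm]
      rw [heq]
      exact ((hkint j).const_mul C).mul_prod (hgint j)
    · filter_upwards [PT.ae_eval j (hKbd j)] with ξ hξ
      rw [Real.norm_eq_abs, hHdef]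
      simp only []
      rw [abs_mul, abs_of_nonneg (hg0 j _)]
      exact mul_le_mul_of_nonneg_right hξ (hg0 j _)
  -- the product-structure zero lemma
  have hUnotin : ∀ ξ : Fin n → ℝ, w ξ = 0 → ∃ m : Fin n, ξ m ∉ I m := by
    intro ξ h0
    by_contra hcon
    push_neg at hcon
    have hmem : ξ ∈ U := by
      rw [hU, Set.mem_univ_pi]
      exact hcon
    exact absurd h0 (ne_of_gt (hw.pos ξ hmem))
  have hwz : ∀ ξ : Fin n → ℝ, (∃ m : Fin n, ξ m ∉ I m) → w ξ = 0 := by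
    intro ξ ⟨m, hm⟩
    refine hw.zero ξ ?_
    rw [hU, Set.mem_univ_pi]
    push_neg
    exact ⟨m, hm⟩
  have hHzero : ∀ (j : Fin n) (ξ : Fin n → ℝ), w ξ = 0 → H j ξ = 0 := by
    intro j ξ h0
    obtain ⟨m, hm⟩ := hUnotin ξ h0
    by_cases hmj : m = j
    · rw [hmj] at hm
      have hKz : K j (ξ j) = 0 := by
        rw [hKdef]
        simp only []
        have hz : ∀ y : {l : Fin n // l ≠ j} → ℝ, W ((PT.eSplit j).symm (ξ j, y)) = 0 := by
          intro y
          have hwz' : w ((PT.eSplit j).symm (ξ j, y)) = 0 := by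
            refine hwz _ ⟨j, ?_⟩
            rw [PT.eSplit_symm_self]
            exact hm
          rw [hWdef]
          simp only []
          rw [hwz', mul_zero]
        rw [show (fun y : {l : Fin n // l ≠ j} → ℝ => W ((PT.eSplit j).symm (ξ j, y)))
            = fun _ => (0 : ℝ) from funext hz]
        exact integral_zero _ _
      rw [hHdef]
      simp only []
      rw [hKz, zero_mul]
    · have hgz : g j (PT.proj j ξ) = 0 := by
        rw [hgdef]
        simp only []
        have hz : ∀ s : ℝ, w ((PT.eSplit j).symm (s, PT.proj j ξ)) = 0 := by
          intro s
          refine hwz _ ⟨m, ?_⟩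
          rw [PT.eSplit_symm_ne j s _ hmj]
          exact hm
        rw [show (fun s : ℝ => w ((PT.eSplit j).symm (s, PT.proj j ξ)))
            = fun _ => (0 : ℝ) from funext hz]
        exact integral_zero _ _
      rw [hHdef]
      simp only []
      rw [hgz, mul_zero]
  -- term identity
  have hterm : ∀ (j : Fin n) (ξ : Fin n → ℝ),
      g j (PT.proj j ξ) / w ξ * K j (ξ j) * w ξ = H j ξ := by
    intro j ξ
    by_cases hz : w ξ = 0
    · rw [hz, mul_zero, hHzero j ξ hz]
    · rw [hHdef]
      simp only []
      field_simp
  -- part 1 : Memℒp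
  have hstar' : ∀ j : Fin n, MemLp (fun ξ => k j (ξ j) * (g j (PT.proj j ξ) / w ξ))
      (ENNReal.ofReal p) (wMeasure w) := by
    intro j
    have heq : (fun ξ => margC j w (ξ j) * margO j w ξ / w ξ)
        = fun ξ => k j (ξ j) * (g j (PT.proj j ξ) / w ξ) := by
      funext ξ
      rw [hmargCw, hmargO, mul_div_assoc]
    have h0 := hstar j
    rwa [heq] at h0
  have hfℒp : ∀ j : Fin n, MemLp (fun ξ => g j (PT.proj j ξ) / w ξ * K j (ξ j))
      (ENNReal.ofReal p) (wMeasure w) := by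
    intro j
    refine MemLp.of_le_mul (hstar' j) ?_ (c := C) ?_
    · exact ((((hgsm j).measurable.comp (PT.proj_measurable j)).div hwmeas).mul
        ((hKsm j).measurable.comp (measurable_pi_apply j))).aestronglyMeasurable
    · have hvol : ∀ᵐ ξ ∂(volume : Measure (Fin n → ℝ)),
          ‖g j (PT.proj j ξ) / w ξ * K j (ξ j)‖
            ≤ C * ‖k j (ξ j) * (g j (PT.proj j ξ) / w ξ)‖ := by
        filter_upwards [PT.ae_eval j (hKbd j)] with ξ hξ
        rw [Real.norm_eq_abs, Real.norm_eq_abs, abs_mul, abs_mul, abs_of_nonneg (hk0 j _)]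
        calc |g j (PT.proj j ξ) / w ξ| * |K j (ξ j)|
            ≤ |g j (PT.proj j ξ) / w ξ| * (C * k j (ξ j)) :=
              mul_le_mul_of_nonneg_left hξ (abs_nonneg _)
          _ = C * (k j (ξ j) * |g j (PT.proj j ξ) / w ξ|) := by ring
      exact hvol.filter_mono hac.ae_le
  have hψ₁ℒp : MemLp ψ₁ (ENNReal.ofReal p) (wMeasure w) :=
    MemLp.of_bound hψ₁meas.aestronglyMeasurable C
      (Filter.Eventually.of_forall fun ξ => by rw [Real.norm_eq_abs]; exact hψ₁bd ξ)
  have hsumℒp : MemLp (fun ξ => ∑ j : Fin n, g j (PT.proj j ξ) / w ξ * K j (ξ j))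
      (ENNReal.ofReal p) (wMeasure w) :=
    memLp_finset_sum Finset.univ (fun j _ => hfℒp j)
  have hφ₁ℒp : MemLp (fun ξ => ψ₁ ξ - (∑ j : Fin n, g j (PT.proj j ξ) / w ξ * K j (ξ j))
      + ((n : ℝ) - 1) * c) (ENNReal.ofReal p) (wMeasure w) := by
    exact (hψ₁ℒp.sub hsumℒp).add (memLp_const _)
  -- slice equalities for K
  have hKae : ∀ j : Fin n, ∀ᵐ t : ℝ, margC j (fun η => ψ η * w η) t = K j t := by
    intro j
    filter_upwards [PT.slice_ae j hprod_ae] with t ht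
    rw [margC_eq]
    exact integral_congr_ae ht
  have hφeq : (fun ξ => ψ ξ -
      (∑ i : Fin n, margO i w ξ / w ξ * margC i (fun η => ψ η * w η) (ξ i)) +
      ((n : ℝ) - 1) * ∫ η, ψ η * w η)
      =ᵐ[wMeasure w] (fun ξ => ψ₁ ξ - (∑ j : Fin n, g j (PT.proj j ξ) / w ξ * K j (ξ j))
        + ((n : ℝ) - 1) * c) := by
    have hall : ∀ᵐ ξ ∂(wMeasure w), ∀ j : Fin n,
        margC j (fun η => ψ η * w η) (ξ j) = K j (ξ j) :=
      (ae_all_iff.2 fun j => PT.ae_eval j (hKae j)).filter_mono hac.ae_le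
    filter_upwards [hψψ₁, hall] with ξ h1 h2
    rw [h1, hcψ]
    have hsum : (∑ i : Fin n, margO i w ξ / w ξ * margC i (fun η => ψ η * w η) (ξ i))
        = ∑ j : Fin n, g j (PT.proj j ξ) / w ξ * K j (ξ j) :=
      Finset.sum_congr rfl fun j _ => by rw [h2 j, hmargO j ξ]
    rw [hsum]
  refine ⟨hφ₁ℒp.ae_eq hφeq.symm, ?_⟩
  -- part 2 : marginals vanish
  intro i
  set Φ : (Fin n → ℝ) → ℝ :=
    fun ξ => W ξ - (∑ j : Fin n, H j ξ) + ((n : ℝ) - 1) * c * w ξ with hΦdef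
  have hφw : (fun ξ => (ψ ξ -
      (∑ i : Fin n, margO i w ξ / w ξ * margC i (fun η => ψ η * w η) (ξ i)) +
      ((n : ℝ) - 1) * ∫ η, ψ η * w η) * w ξ) =ᵐ[volume] Φ := by
    have h1 : ∀ᵐ ξ ∂(volume : Measure (Fin n → ℝ)), ENNReal.ofReal (w ξ) ≠ 0 →
        (ψ ξ - (∑ i : Fin n, margO i w ξ / w ξ * margC i (fun η => ψ η * w η) (ξ i)) +
          ((n : ℝ) - 1) * ∫ η, ψ η * w η)
        = (ψ₁ ξ - (∑ j : Fin n, g j (PT.proj j ξ) / w ξ * K j (ξ j)) + ((n : ℝ) - 1) * c) :=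
      (ae_withDensity_iff (hwmeas.ennreal_ofReal)).1 hφeq
    filter_upwards [h1] with ξ h
    by_cases hz : w ξ = 0
    · rw [hz, mul_zero, hΦdef]
      simp only []
      rw [Finset.sum_eq_zero fun j _ => hHzero j ξ hz, hWdef]
      simp only []
      rw [hz]
      ring
    · rw [h (hofReal_ne ξ hz), hΦdef, hWdef]
      simp only []
      rw [add_mul, sub_mul, Finset.sum_mul]
      rw [Finset.sum_congr rfl fun j _ => hterm j ξ]
  have hsliceeq : ∀ᵐ t : ℝ, margC i (fun ξ =>
      (ψ ξ - (∑ i : Fin n, margO i w ξ / w ξ * margC i (fun η => ψ η * w η) (ξ i)) +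
        ((n : ℝ) - 1) * ∫ η, ψ η * w η) * w ξ) t
      = ∫ y, Φ ((PT.eSplit i).symm (t, y)) := by
    filter_upwards [PT.slice_ae i hφw] with t ht
    rw [margC_eq]
    exact integral_congr_ae ht
  -- E1 : the i-th term
  have hE1 : ∀ t : ℝ, (∫ y, H i ((PT.eSplit i).symm (t, y))) = K i t := by
    intro t
    have heq : (fun y : {l : Fin n // l ≠ i} → ℝ => H i ((PT.eSplit i).symm (t, y)))
        = fun y => K i t * g i y := by
      funext y
      rw [hHdef]
      simp only []
      rw [PT.eSplit_symm_self, PT.proj_eSplit_symm]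
    rw [heq, integral_const_mul, hgInt1 i, mul_one]
  -- E2 : the terms with j ≠ i
  have hE2 : ∀ᵐ t : ℝ, ∀ j : Fin n, j ≠ i →
      (∫ y, H j ((PT.eSplit i).symm (t, y))) = c * k i t := by
    filter_upwards [PT.ae_integrable_slice i hwint] with t ht
    intro j hji
    have hcomp : (∫ y, H j ((PT.eSplit i).symm (t, y))) =
        ∫ z : ℝ × ({m : {l : Fin n // l ≠ i} // m ≠ ⟨j, hji⟩} → ℝ),
          H j ((PT.eSplit i).symm (t, (PT.eSplit (⟨j, hji⟩ : {l : Fin n // l ≠ i})).symm z))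
          ∂((volume : Measure ℝ).prod volume) :=
      (PT.integral_comp (⟨j, hji⟩ : {l : Fin n // l ≠ i})
        (fun y => H j ((PT.eSplit i).symm (t, y)))).symm
    set M : ({m : {l : Fin n // l ≠ i} // m ≠ ⟨j, hji⟩} → ℝ) → ℝ :=
      fun z2 => g j (PT.proj j ((PT.eSplit i).symm
        (t, (PT.eSplit (⟨j, hji⟩ : {l : Fin n // l ≠ i})).symm (0, z2)))) with hMdef
    have hform : ∀ (s : ℝ) (z : {m : {l : Fin n // l ≠ i} // m ≠ ⟨j, hji⟩} → ℝ),
        H j ((PT.eSplit i).symm (t, (PT.eSplit (⟨j, hji⟩ : {l : Fin n // l ≠ i})).symm (s, z)))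
          = K j s * M z := by
      intro s z
      rw [hHdef, hMdef]
      simp only []
      congr 1
      · rw [PT.eSplit_symm_ne i t _ hji, PT.eSplit_symm_self]
      · rw [PT.nested_point i j hji t s 0 z, PT.proj_update]
    rw [hcomp]
    rw [show (fun z : ℝ × ({m : {l : Fin n // l ≠ i} // m ≠ ⟨j, hji⟩} → ℝ) =>
          H j ((PT.eSplit i).symm (t, (PT.eSplit (⟨j, hji⟩ : {l : Fin n // l ≠ i})).symm z)))
        = fun z => K j z.1 * M z.2 from
      funext fun z => by obtain ⟨s, z2⟩ := z; exact hform s z2]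
    rw [integral_prod_mul (K j) M, hKInt j]
    congr 1
    -- remaining: ∫ z2, M z2 = k i t
    have hM : ∀ z2 : {m : {l : Fin n // l ≠ i} // m ≠ ⟨j, hji⟩} → ℝ,
        M z2 = ∫ s : ℝ, w ((PT.eSplit i).symm
              (t, (PT.eSplit (⟨j, hji⟩ : {l : Fin n // l ≠ i})).symm (s, z2))) := by
      intro z2
      rw [hMdef]
      simp only []
      rw [← hmargO j _, margO]
      congr 1
      funext s
      rw [← PT.nested_point i j hji t s 0 z2]
    rw [show M = fun z2 => ∫ s : ℝ, w ((PT.eSplit i).symm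
            (t, (PT.eSplit (⟨j, hji⟩ : {l : Fin n // l ≠ i})).symm (s, z2))) from funext hM]
    have h5 : Integrable (fun z : ℝ × ({m : {l : Fin n // l ≠ i} // m ≠ ⟨j, hji⟩} → ℝ) =>
        w ((PT.eSplit i).symm (t, (PT.eSplit (⟨j, hji⟩ : {l : Fin n // l ≠ i})).symm z)))
        ((volume : Measure ℝ).prod volume) :=
      (PT.integrable_comp (⟨j, hji⟩ : {l : Fin n // l ≠ i})).2 ht
    rw [← integral_prod_symm _ h5]
    exact PT.integral_comp (⟨j, hji⟩ : {l : Fin n // l ≠ i})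
      (fun y => w ((PT.eSplit i).symm (t, y)))
  -- final computation
  have hfinal : ∀ᵐ t : ℝ, (∫ y, Φ ((PT.eSplit i).symm (t, y))) = 0 := by
    have hHslice : ∀ᵐ t : ℝ, ∀ j : Fin n,
        Integrable (fun y => H j ((PT.eSplit i).symm (t, y))) volume :=
      ae_all_iff.2 fun j => PT.ae_integrable_slice i (hHint j)
    filter_upwards [PT.ae_integrable_slice i hWint, PT.ae_integrable_slice i hwint,
      hHslice, hE2] with t h1 h2 h3 h4
    have hsum : Integrable (fun y => ∑ j : Fin n, H j ((PT.eSplit i).symm (t, y))) volume :=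
      integrable_finset_sum _ fun j _ => h3 j
    have hexpand : (fun y : {l : Fin n // l ≠ i} → ℝ => Φ ((PT.eSplit i).symm (t, y)))
        = fun y => (W ((PT.eSplit i).symm (t, y))
            - ∑ j : Fin n, H j ((PT.eSplit i).symm (t, y)))
          + ((n : ℝ) - 1) * c * w ((PT.eSplit i).symm (t, y)) := by
      funext y
      rw [hΦdef]
    rw [hexpand,
      integral_add (f := fun y => W ((PT.eSplit i).symm (t, y))
          - ∑ j : Fin n, H j ((PT.eSplit i).symm (t, y)))
        (g := fun y => ((n : ℝ) - 1) * c * w ((PT.eSplit i).symm (t, y)))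
        (h1.sub hsum) (h2.const_mul (((n : ℝ) - 1) * c)),
      integral_sub h1 hsum, integral_finset_sum _ fun j _ => h3 j, integral_const_mul]
    have hsplit : (∑ j : Fin n, ∫ y, H j ((PT.eSplit i).symm (t, y)))
        = K i t + ((n : ℝ) - 1) * c * k i t := by
      rw [← Finset.add_sum_erase _ _ (Finset.mem_univ i), hE1 t]
      congr 1
      rw [Finset.sum_congr rfl (fun j hj => h4 j (Finset.ne_of_mem_erase hj)),
        Finset.sum_const, Finset.card_erase_of_mem (Finset.mem_univ i), Finset.card_univ,
        Fintype.card_fin, nsmul_eq_mul, Nat.cast_sub hn, Nat.cast_one]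
      ring
    have hKit : (∫ y, W ((PT.eSplit i).symm (t, y))) = K i t := rfl
    have hkit : (∫ y, w ((PT.eSplit i).symm (t, y))) = k i t := rfl
    rw [hKit, hkit, hsplit]
    ring
  filter_upwards [hsliceeq, hfinal] with t ht1 ht2
  rw [ht1, ht2]

end
end

section
/- Let 1 < p < ∞ with conjugate exponent q = p/(p-1), let w be a strictly positive density on U satisfying (★), and let f ∈ L^q(w). If ∫_U f(ξ)ψ̃(ξ)w(ξ)dξ = 0 for every ψ ∈ L^∞, where ψ̃(ξ) := ψ(ξ) − ∑_{i=1}^n (w_i^c(ξ_i^c)/w(ξ)) ∫ ψ(ξ)w(ξ)dξ_i^c + (n−1)∫_U ψ(η)w(η)dη, then f(ξ) = (1/n)∑_{i=1}^n Ψ_i(ξ_i) holds w-almost everywhere, where Ψ_i(ξ_i) := n ∫ f(ξ)w_i^c(ξ_i^c)dξ_i^c − (n−1)∫_U f(η)w(η)dη belongs to L^1(w) for each 1 ≤ i ≤ n. -/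
open MeasureTheory

noncomputable section

open scoped ENNReal NNReal

namespace SmirnovAux


variable {n : ℕ}

/-- insert `t` at coordinate `i`, other coords from `y`. -/
def mkx (i : Fin n) (t : ℝ) (y : {j : Fin n // j ≠ i} → ℝ) : Fin n → ℝ :=
  fun j => if h : j = i then t else y ⟨j, h⟩

def resx (i : Fin n) (ξ : Fin n → ℝ) : {j : Fin n // j ≠ i} → ℝ := fun j => ξ j.1

@[simp] lemma mkx_self (i : Fin n) (t : ℝ) (y : {j : Fin n // j ≠ i} → ℝ) :
    mkx i t y i = t := by simp [mkx]

@[simp] lemma resx_mkx (i : Fin n) (t : ℝ) (y : {j : Fin n // j ≠ i} → ℝ) :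
    resx i (mkx i t y) = y := by
  funext j; simp [resx, mkx, j.2]

lemma update_eq_mkx (i : Fin n) (ξ : Fin n → ℝ) (t : ℝ) :
    Function.update ξ i t = mkx i t (resx i ξ) := by
  funext j
  by_cases h : j = i
  · subst h; simp [mkx]
  · simp [Function.update_of_ne h, mkx, h, resx]

lemma mkx_eq_self (i : Fin n) (ξ : Fin n → ℝ) : mkx i (ξ i) (resx i ξ) = ξ := by
  funext j; by_cases h : j = i <;> simp [mkx, h, resx]

instance uniqueEq (i : Fin n) : Unique {j : Fin n // j = i} :=
  ⟨⟨⟨i, rfl⟩⟩, by rintro ⟨j, rfl⟩; rfl⟩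

/-- the measurable equiv splitting off coordinate `i`. -/
def eqx (i : Fin n) : (Fin n → ℝ) ≃ᵐ ℝ × ({j : Fin n // j ≠ i} → ℝ) :=
  (MeasurableEquiv.piEquivPiSubtypeProd (fun _ : Fin n => ℝ) (fun j => j = i)).trans
    ((MeasurableEquiv.piUnique (fun _ : {j : Fin n // j = i} => ℝ)).prodCongr
      (MeasurableEquiv.refl _))

lemma eqx_symm_apply (i : Fin n) (t : ℝ) (y : {j : Fin n // j ≠ i} → ℝ) :
    (eqx i).symm (t, y) = mkx i t y := by
  funext j
  simp only [eqx, MeasurableEquiv.trans, MeasurableEquiv.symm, MeasurableEquiv.prodCongr,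
    MeasurableEquiv.piUnique, MeasurableEquiv.piEquivPiSubtypeProd, MeasurableEquiv.coe_mk,
    Equiv.symm, Equiv.trans, Equiv.prodCongr, MeasurableEquiv.refl]
  rfl

lemma eqx_apply (i : Fin n) (ξ : Fin n → ℝ) : eqx i ξ = (ξ i, resx i ξ) := rfl

lemma eqx_mp (i : Fin n) :
    MeasurePreserving (eqx i) volume (volume.prod volume) := by
  have h1 := MeasureTheory.volume_preserving_piEquivPiSubtypeProd
    (fun _ : Fin n => ℝ) (fun j => j = i)
  have h2 : MeasurePreserving (MeasurableEquiv.piUnique (fun _ : {j : Fin n // j = i} => ℝ))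
      volume volume := MeasureTheory.volume_preserving_piUnique _
  rw [Measure.volume_eq_prod] at h1
  have h1' : MeasurePreserving
      (MeasurableEquiv.piEquivPiSubtypeProd (fun _ : Fin n => ℝ) (fun j => j = i)) volume
      ((volume : Measure ({j : Fin n // j = i} → ℝ)).prod volume) := by
    convert h1 using 5
    rfl
  exact (h2.prod (MeasurePreserving.id (volume : Measure ({j : Fin n // j ≠ i} → ℝ)))).comp h1'


lemma margC_eq (i : Fin n) (F : (Fin n → ℝ) → ℝ) (t : ℝ) :
    margC i F t = ∫ y, F (mkx i t y) := rfl

lemma margO_eq (i : Fin n) (F : (Fin n → ℝ) → ℝ) (ξ : Fin n → ℝ) :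
    margO i F ξ = ∫ t, F (mkx i t (resx i ξ)) := by
  simp only [margO, update_eq_mkx]

lemma margO_mkx (i : Fin n) (F : (Fin n → ℝ) → ℝ) (t : ℝ) (y : {j : Fin n // j ≠ i} → ℝ) :
    margO i F (mkx i t y) = ∫ s, F (mkx i s y) := by
  rw [margO_eq, resx_mkx]

lemma lintegral_mkx (i : Fin n) (F : (Fin n → ℝ) → ℝ≥0∞) (hF : Measurable F) :
    ∫⁻ ξ, F ξ = ∫⁻ t, ∫⁻ y, F (mkx i t y) := by
  rw [← ((eqx_mp i).symm (eqx i)).lintegral_comp hF]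
  rw [MeasureTheory.lintegral_prod (fun z => F ((eqx i).symm z))
    ((hF.comp (eqx i).symm.measurable).aemeasurable)]
  simp only [eqx_symm_apply]

lemma integrable_comp_symm (i : Fin n) (F : (Fin n → ℝ) → ℝ) (hF : Integrable F volume) :
    Integrable (fun z : ℝ × ({j : Fin n // j ≠ i} → ℝ) => F ((eqx i).symm z))
      (volume.prod volume) := by
  have h := (((eqx_mp i).symm (eqx i)).integrable_comp_emb
    (eqx i).symm.measurableEmbedding).mpr hF
  exact h

lemma integral_mkx (i : Fin n) (F : (Fin n → ℝ) → ℝ) (hF : Integrable F volume) :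
    ∫ ξ, F ξ = ∫ t, ∫ y, F (mkx i t y) := by
  rw [← ((eqx_mp i).symm (eqx i)).integral_comp (eqx i).symm.measurableEmbedding F]
  rw [MeasureTheory.integral_prod _ (integrable_comp_symm i F hF)]
  simp only [eqx_symm_apply]

lemma measurable_resx (i : Fin n) : Measurable (resx i) :=
  measurable_pi_lambda _ fun j => measurable_pi_apply j.1

lemma measurable_margC (i : Fin n) (F : (Fin n → ℝ) → ℝ) (hF : Measurable F) :
    Measurable (margC i F) := by
  have h : StronglyMeasurable fun t : ℝ =>
      ∫ y, (fun z : ℝ × ({j : Fin n // j ≠ i} → ℝ) => F ((eqx i).symm z)) (t, y) :=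
    (hF.stronglyMeasurable.comp_measurable (eqx i).symm.measurable).integral_prod_right'
  have h2 : margC i F = fun t => ∫ y, F ((eqx i).symm (t, y)) := by
    funext t; simp only [margC_eq, eqx_symm_apply]
  rw [h2]; exact h.measurable

lemma measurable_margO (i : Fin n) (F : (Fin n → ℝ) → ℝ) (hF : Measurable F) :
    Measurable (margO i F) := by
  have h : StronglyMeasurable fun y : {j : Fin n // j ≠ i} → ℝ =>
      ∫ t, (fun z : ℝ × ({j : Fin n // j ≠ i} → ℝ) => F ((eqx i).symm z)) (t, y) :=
    (hF.stronglyMeasurable.comp_measurable (eqx i).symm.measurable).integral_prod_left'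
  have h2 : margO i F = (fun y => ∫ t, F ((eqx i).symm (t, y))) ∘ resx i := by
    funext ξ; simp only [margO_eq, Function.comp, eqx_symm_apply]
  rw [h2]; exact h.measurable.comp (measurable_resx i)

lemma slice_null (i : Fin n) (S : Set (Fin n → ℝ)) (hS : volume S = 0) :
    ∀ᵐ t : ℝ, volume {y : {j : Fin n // j ≠ i} → ℝ | mkx i t y ∈ S} = 0 := by
  obtain ⟨T, hST, hTm, hT⟩ := exists_measurable_superset_of_null hS
  have hP : (volume.prod volume) ((eqx i).symm ⁻¹' T) = 0 := by
    rw [((eqx_mp i).symm (eqx i)).measure_preimage hTm.nullMeasurableSet]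
    exact hT
  have hPm : MeasurableSet ((eqx i).symm ⁻¹' T) := (eqx i).symm.measurable hTm
  have := (Measure.measure_prod_null hPm).mp hP
  filter_upwards [this] with t ht
  refine measure_mono_null ?_ ht
  intro y hy
  simp only [Set.mem_preimage, Set.mem_setOf_eq] at hy ⊢
  rw [eqx_symm_apply]
  exact hST hy

lemma marg_null (i : Fin n) (A : Set ℝ) (hA : volume A = 0) :
    volume {ξ : Fin n → ℝ | ξ i ∈ A} = 0 := by
  obtain ⟨T, hAT, hTm, hT⟩ := exists_measurable_superset_of_null hA
  have h2 : volume ((eqx i) ⁻¹' (T ×ˢ (Set.univ : Set ({j : Fin n // j ≠ i} → ℝ)))) = 0 := by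
    rw [(eqx_mp i).measure_preimage (hTm.prod MeasurableSet.univ).nullMeasurableSet,
      Measure.prod_prod, hT, zero_mul]
  refine measure_mono_null ?_ h2
  intro ξ hξ
  simp only [Set.mem_setOf_eq] at hξ
  simp only [Set.mem_preimage, eqx_apply, Set.mem_prod, Set.mem_univ, and_true]
  exact hAT hξ


section WM
variable {w : (Fin n → ℝ) → ℝ}

lemma wM_ac : wMeasure w ≪ (volume : Measure (Fin n → ℝ)) :=
  withDensity_absolutelyContinuous _ _

lemma lintegral_wM (hwm : Measurable w) (g : (Fin n → ℝ) → ℝ≥0∞) (hg : Measurable g) :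
    ∫⁻ ξ, g ξ ∂(wMeasure w) = ∫⁻ ξ, ENNReal.ofReal (w ξ) * g ξ := by
  rw [wMeasure, lintegral_withDensity_eq_lintegral_mul _ hwm.ennreal_ofReal hg]
  rfl

lemma integral_wM (hwm : Measurable w) (hw0 : ∀ ξ, 0 ≤ w ξ) (g : (Fin n → ℝ) → ℝ) :
    ∫ ξ, g ξ ∂(wMeasure w) = ∫ ξ, g ξ * w ξ := by
  have h1 : wMeasure w = volume.withDensity (fun ξ => ((w ξ).toNNReal : ℝ≥0∞)) := rfl
  rw [h1, integral_withDensity_eq_integral_smul hwm.real_toNNReal g]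
  congr 1; funext ξ
  simp [NNReal.smul_def, Real.coe_toNNReal _ (hw0 ξ), mul_comm]

lemma integrable_wM_iff (hwm : Measurable w) (hw0 : ∀ ξ, 0 ≤ w ξ) (g : (Fin n → ℝ) → ℝ) :
    Integrable g (wMeasure w) ↔ Integrable (fun ξ => g ξ * w ξ) volume := by
  rw [wMeasure, integrable_withDensity_iff hwm.ennreal_ofReal
    (Filter.Eventually.of_forall fun ξ => ENNReal.ofReal_lt_top)]
  constructor <;> (intro h; refine h.congr (Filter.Eventually.of_forall fun ξ => ?_)) <;>
    simp [ENNReal.toReal_ofReal (hw0 ξ)]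

lemma ae_ne_zero_wM (hwm : Measurable w) : ∀ᵐ ξ ∂(wMeasure w), w ξ ≠ 0 := by
  rw [ae_iff]
  have hms : MeasurableSet {ξ : Fin n → ℝ | ¬ w ξ ≠ 0} := by
    have h : {ξ : Fin n → ℝ | ¬ w ξ ≠ 0} = w ⁻¹' {0} := by ext ξ; simp
    rw [h]; exact hwm (measurableSet_singleton 0)
  have h0 : ∫⁻ ξ in {ξ : Fin n → ℝ | ¬ w ξ ≠ 0}, ENNReal.ofReal (w ξ) ∂volume
      = ∫⁻ _ in {ξ : Fin n → ℝ | ¬ w ξ ≠ 0}, (0:ℝ≥0∞) ∂volume :=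
    setLIntegral_congr_fun hms (fun ξ hξ => by
      simp only [Set.mem_setOf_eq, not_not] at hξ; simp [hξ])
  rw [wMeasure, withDensity_apply _ hms, h0]
  simp

lemma meas_rep (hwm : Measurable w) (hw0 : ∀ ξ, 0 ≤ w ξ) {g : (Fin n → ℝ) → ℝ}
    (hg : AEStronglyMeasurable g (wMeasure w)) :
    ∃ g' : (Fin n → ℝ) → ℝ, Measurable g' ∧ (∀ ξ, w ξ = 0 → g' ξ = 0) ∧
      ∃ N : Set (Fin n → ℝ), MeasurableSet N ∧ volume N = 0 ∧
        ∀ ξ, g ξ ≠ g' ξ → ξ ∈ N ∪ {ξ | w ξ = 0} := by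
  obtain ⟨g₀, hg₀, heq⟩ := hg
  have hS : wMeasure w {ξ | ¬ g ξ = g₀ ξ} = 0 := ae_iff.mp heq
  obtain ⟨T, hST, hTm, hT⟩ := exists_measurable_superset_of_null hS
  have hT' : ∫⁻ ξ in T, ENNReal.ofReal (w ξ) ∂volume = 0 := by
    rw [← withDensity_apply _ hTm]; exact hT
  have hae := (lintegral_eq_zero_iff hwm.ennreal_ofReal).mp hT'
  have hae2 : ∀ᵐ ξ : Fin n → ℝ ∂volume, ξ ∈ T → ENNReal.ofReal (w ξ) = 0 :=
    (ae_restrict_iff' hTm).mp (by filter_upwards [hae] with ξ h; simpa using h)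
  obtain ⟨N, hNn, hNm, hN⟩ := exists_measurable_superset_of_null (ae_iff.mp hae2)
  have hms0 : MeasurableSet {ξ : Fin n → ℝ | w ξ = 0} := by
    have h : {ξ : Fin n → ℝ | w ξ = 0} = w ⁻¹' {0} := rfl
    rw [h]; exact hwm (measurableSet_singleton 0)
  refine ⟨fun ξ => if w ξ = 0 then 0 else g₀ ξ, ?_, fun ξ h => by simp [h], N, hNm, hN, ?_⟩
  · exact Measurable.ite hms0 measurable_const hg₀.measurable
  · intro ξ hξ
    by_cases hwξ : w ξ = 0
    · exact Or.inr hwξ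
    · simp only [hwξ, if_neg, ite_false] at hξ
      left
      refine hNn ?_
      simp only [Set.mem_setOf_eq]
      intro hcon
      have h2 := hcon (hST hξ)
      rw [ENNReal.ofReal_eq_zero] at h2
      exact absurd (le_antisymm h2 (hw0 ξ)) hwξ

end WM

section Main
variable {n : ℕ} {I : Fin n → Set ℝ} {U : Set (Fin n → ℝ)} {w : (Fin n → ℝ) → ℝ}

lemma mem_U (hw : IsDensityOn w U) (hU : U = Set.univ.pi I) {ξ : Fin n → ℝ}
    (h : w ξ ≠ 0) : ∀ j, ξ j ∈ I j := by
  intro j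
  by_contra hj
  refine h (hw.zero ξ ?_)
  rw [hU]
  intro hmem
  exact hj (hmem j (Set.mem_univ j))

lemma wic_mem (hw : IsDensityOn w U) (hU : U = Set.univ.pi I) (i : Fin n)
    {y : {j : Fin n // j ≠ i} → ℝ} (h : (∫ s, w (mkx i s y)) ≠ 0) {t : ℝ}
    (ht : t ∈ I i) : w (mkx i t y) ≠ 0 := by
  have hex : ∃ s, w (mkx i s y) ≠ 0 := by
    by_contra hcon
    push_neg at hcon
    exact h (by simp [hcon])
  obtain ⟨s, hs⟩ := hex
  have hmem := mem_U hw hU hs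
  have hin : mkx i t y ∈ U := by
    rw [hU]
    intro j _
    by_cases hj : j = i
    · subst hj; simpa [mkx] using ht
    · have := hmem j
      simpa [mkx, hj] using this
  exact (hw.pos _ hin).ne'

lemma wi_mem (hw : IsDensityOn w U) (hU : U = Set.univ.pi I) (i : Fin n)
    {t : ℝ} (h : margC i w t ≠ 0) : t ∈ I i := by
  have hex : ∃ y, w (mkx i t y) ≠ 0 := by
    by_contra hcon
    push_neg at hcon
    exact h (by rw [margC_eq]; simp [hcon])
  obtain ⟨y, hy⟩ := hex
  have := mem_U hw hU hy i
  simpa [mkx] using this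

lemma wi_mul_wic_zero (hw : IsDensityOn w U) (hU : U = Set.univ.pi I) (i : Fin n)
    {ξ : Fin n → ℝ} (h : w ξ = 0) : margC i w (ξ i) * margO i w ξ = 0 := by
  by_contra hcon
  have h1 : margC i w (ξ i) ≠ 0 := fun h' => hcon (by rw [h', zero_mul])
  have h2 : margO i w ξ ≠ 0 := fun h' => hcon (by rw [h', mul_zero])
  rw [margO_eq] at h2
  have := wic_mem hw hU i h2 (wi_mem hw hU i h1)
  rw [mkx_eq_self] at this
  exact this h


lemma nonneg_of_density (hw : IsDensityOn w U) : ∀ ξ, 0 ≤ w ξ := fun ξ => by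
  by_cases h : ξ ∈ U
  · exact (hw.pos ξ h).le
  · rw [hw.zero ξ h]

lemma measurable_wic (hwm : Measurable w) (i : Fin n) :
    Measurable (fun y : {j : Fin n // j ≠ i} → ℝ => ∫ s, w (mkx i s y)) := by
  have h : StronglyMeasurable fun y : {j : Fin n // j ≠ i} → ℝ =>
      ∫ s, w ((eqx i).symm (s, y)) :=
    (hwm.stronglyMeasurable.comp_measurable (eqx i).symm.measurable).integral_prod_left'
  have h2 : (fun y : {j : Fin n // j ≠ i} → ℝ => ∫ s, w (mkx i s y))
      = fun y => ∫ s, w ((eqx i).symm (s, y)) := by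
    funext y; simp only [eqx_symm_apply]
  rw [h2]; exact h.measurable

lemma measurable_mkx_left (i : Fin n) (t : ℝ) :
    Measurable (fun y : {j : Fin n // j ≠ i} → ℝ => mkx i t y) := by
  have h2 : (fun y : {j : Fin n // j ≠ i} → ℝ => mkx i t y)
      = fun y => (eqx i).symm (t, y) := by funext y; rw [eqx_symm_apply]
  rw [h2]; exact (eqx i).symm.measurable.comp measurable_prodMk_left

lemma measurable_Fi (hwm : Measurable w) (i : Fin n) {f' : (Fin n → ℝ) → ℝ}
    (hf'm : Measurable f') :
    Measurable (fun t : ℝ => ∫ y, f' (mkx i t y) * (∫ s, w (mkx i s y))) := by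
  have h : StronglyMeasurable fun t : ℝ =>
      ∫ y, f' ((eqx i).symm (t, y)) * (∫ s, w (mkx i s y)) :=
    (((hf'm.comp (eqx i).symm.measurable).mul
      ((measurable_wic hwm i).comp measurable_snd)).stronglyMeasurable).integral_prod_right'
  have h2 : (fun t : ℝ => ∫ y, f' (mkx i t y) * (∫ s, w (mkx i s y)))
      = fun t => ∫ y, f' ((eqx i).symm (t, y)) * (∫ s, w (mkx i s y)) := by
    funext t; simp only [eqx_symm_apply]
  rw [h2]; exact h.measurable

lemma memL1_Fi (hw : IsDensityOn w U) (hU : U = Set.univ.pi I) (i : Fin n)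
    {f' : (Fin n → ℝ) → ℝ} (hf'm : Measurable f') (hf'0 : ∀ ξ, w ξ = 0 → f' ξ = 0)
    (hInt : Integrable
      (fun ξ => f' ξ * (margC i w (ξ i) * margO i w ξ / w ξ)) (wMeasure w))
    (hwInt : Integrable w volume) :
    MemLp (fun ξ => ∫ y, f' (mkx i (ξ i) y) * (∫ s, w (mkx i s y))) 1 (wMeasure w) := by
  have hwm := hw.measurable
  have hw0 := nonneg_of_density hw
  set Fi : ℝ → ℝ := fun t => ∫ y, f' (mkx i t y) * (∫ s, w (mkx i s y)) with hFidef
  have hFim : Measurable Fi := measurable_Fi hwm i hf'm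
  rw [memLp_one_iff_integrable]
  refine ⟨(hFim.comp (measurable_pi_apply i)).aestronglyMeasurable, ?_⟩
  rw [hasFiniteIntegral_iff_norm]
  have m1 : Measurable fun ξ : Fin n → ℝ => ENNReal.ofReal ‖Fi (ξ i)‖ :=
    (hFim.comp (measurable_pi_apply i)).norm.ennreal_ofReal
  -- the target bound function
  set Φ : (Fin n → ℝ) → ℝ := fun ξ => f' ξ * (margC i w (ξ i) * margO i w ξ / w ξ) with hΦdef
  have hΦm : Measurable Φ :=
    hf'm.mul ((((measurable_margC i w hwm).comp (measurable_pi_apply i)).mul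
      (measurable_margO i w hwm)).div hwm)
  have key : ∫⁻ ξ, ENNReal.ofReal ‖Fi (ξ i)‖ ∂(wMeasure w)
      ≤ ∫⁻ ξ, ENNReal.ofReal ‖Φ ξ‖ ∂(wMeasure w) := by
    rw [lintegral_wM hwm _ m1, lintegral_wM hwm _ hΦm.norm.ennreal_ofReal]
    rw [lintegral_mkx i (fun ξ => ENNReal.ofReal (w ξ) * ENNReal.ofReal ‖Fi (ξ i)‖)
      (hwm.ennreal_ofReal.mul m1)]
    -- step 1 : rewrite inner integrals
    have step1 : ∀ t : ℝ, (∫⁻ y, ENNReal.ofReal (w (mkx i t y))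
          * ENNReal.ofReal ‖Fi ((mkx i t y) i)‖)
        = (∫⁻ y, ENNReal.ofReal (w (mkx i t y))) * ENNReal.ofReal ‖Fi t‖ := by
      intro t
      rw [← lintegral_mul_const (ENNReal.ofReal ‖Fi t‖)
        (f := fun y => ENNReal.ofReal (w (mkx i t y)))
        ((hwm.comp (measurable_mkx_left i t)).ennreal_ofReal)]
      congr 1; funext y; rw [mkx_self]
    simp only [step1]
    -- slice integrability
    have hslice : ∀ᵐ t : ℝ, Integrable (fun y => w (mkx i t y)) volume := by
      filter_upwards [(integrable_comp_symm i w hwInt).prod_right_ae] with t ht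
      have h2 : (fun y : {j : Fin n // j ≠ i} → ℝ => w (mkx i t y))
          = fun y => w ((eqx i).symm (t, y)) := by funext y; rw [eqx_symm_apply]
      rw [h2]; exact ht
    have step3 : ∀ᵐ t : ℝ, (∫⁻ y, ENNReal.ofReal (w (mkx i t y)))
        = ENNReal.ofReal (margC i w t) := by
      filter_upwards [hslice] with t ht
      rw [margC_eq, ofReal_integral_eq_lintegral_ofReal ht
        (Filter.Eventually.of_forall fun y => hw0 _)]
    -- pointwise bound on Fi
    have step4 : ∀ t : ℝ, ENNReal.ofReal ‖Fi t‖
        ≤ ∫⁻ y, ENNReal.ofReal ‖f' (mkx i t y) * (∫ s, w (mkx i s y))‖ := by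
      intro t
      rw [ofReal_norm]
      refine le_trans (enorm_integral_le_lintegral_enorm _) ?_
      refine le_of_eq (lintegral_congr fun y => ?_)
      rw [ofReal_norm]
    refine le_trans (lintegral_mono_ae (g := fun t => ENNReal.ofReal (margC i w t) *
        (∫⁻ y, ENNReal.ofReal ‖f' (mkx i t y) * (∫ s, w (mkx i s y))‖)) ?_) ?_
    · -- bound by ∫⁻ t, ofReal (margC i w t) * (∫⁻ y, ofReal ‖f' * wic‖)
      filter_upwards [step3] with t ht
      rw [ht]
      exact mul_le_mul_right (step4 t) _
    -- now equality chain back to Φ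
    have hbm : Measurable fun z : ℝ × ({j : Fin n // j ≠ i} → ℝ) =>
        ENNReal.ofReal ‖f' ((eqx i).symm z) * (∫ s, w (mkx i s z.2))‖ :=
      ((hf'm.comp (eqx i).symm.measurable).mul
        ((measurable_wic hwm i).comp measurable_snd)).norm.ennreal_ofReal
    have step6 : ∀ t : ℝ, ENNReal.ofReal (margC i w t)
          * (∫⁻ y, ENNReal.ofReal ‖f' (mkx i t y) * (∫ s, w (mkx i s y))‖)
        = ∫⁻ y, ENNReal.ofReal ‖f' (mkx i t y) * (∫ s, w (mkx i s y))‖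
            * ENNReal.ofReal (margC i w t) := by
      intro t
      rw [mul_comm, ← lintegral_mul_const]
      have h2 : (fun y : {j : Fin n // j ≠ i} → ℝ =>
          ENNReal.ofReal ‖f' (mkx i t y) * (∫ s, w (mkx i s y))‖)
          = fun y => ENNReal.ofReal ‖f' ((eqx i).symm (t, y)) * (∫ s, w (mkx i s y))‖ := by
        funext y; rw [eqx_symm_apply]
      rw [h2]
      exact hbm.comp measurable_prodMk_left
    simp only [step6]
    -- transport back via mkx
    have hΨm : Measurable fun ξ : Fin n → ℝ =>
        ENNReal.ofReal ‖f' ξ * (∫ s, w (mkx i s (resx i ξ)))‖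
          * ENNReal.ofReal (margC i w (ξ i)) :=
      ((hf'm.mul ((measurable_wic hwm i).comp (measurable_resx i))).norm.ennreal_ofReal).mul
        (((measurable_margC i w hwm).comp (measurable_pi_apply i)).ennreal_ofReal)
    have step7 := (lintegral_mkx i _ hΨm).symm
    simp only [mkx_self, resx_mkx] at step7
    rw [step7]
    -- pointwise identity
    refine le_of_eq (lintegral_congr fun ξ => ?_)
    by_cases hwξ : w ξ = 0
    · rw [hf'0 ξ hwξ, hwξ]
      simp
    · have hpos : 0 < w ξ := lt_of_le_of_ne (hw0 ξ) (Ne.symm hwξ)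
      have hb0 : 0 ≤ margO i w ξ := by
        rw [margO_eq]; exact integral_nonneg fun s => hw0 _
      have ha0 : 0 ≤ margC i w (ξ i) := by
        rw [margC_eq]; exact integral_nonneg fun y => hw0 _
      have hmo : (∫ s, w (mkx i s (resx i ξ))) = margO i w ξ := (margO_eq i w ξ).symm
      rw [hmo]
      rw [Real.norm_eq_abs, Real.norm_eq_abs, abs_mul, abs_mul,
        abs_of_nonneg hb0, abs_of_nonneg (by positivity : (0:ℝ) ≤
          margC i w (ξ i) * margO i w ξ / w ξ)]
      rw [← ENNReal.ofReal_mul (by positivity), ← ENNReal.ofReal_mul (hw0 ξ)]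
      congr 1
      field_simp
  refine lt_of_le_of_lt key ?_
  have h2 := hInt.2
  rw [hasFiniteIntegral_iff_norm] at h2
  exact h2


lemma ae_eq_wM (hwm : Measurable w) {g g' : (Fin n → ℝ) → ℝ} {N : Set (Fin n → ℝ)}
    (hNn : volume N = 0) (h : ∀ ξ, g ξ ≠ g' ξ → ξ ∈ N ∪ {ξ | w ξ = 0}) :
    g =ᵐ[wMeasure w] g' := by
  have h1 : wMeasure w N = 0 := wM_ac hNn
  have h3 : ∀ᵐ ξ ∂(wMeasure w), ξ ∉ N := by
    rw [ae_iff]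
    simpa [not_not] using h1
  filter_upwards [ae_ne_zero_wM hwm, h3] with ξ hξ1 hξ2
  by_contra hne
  rcases h ξ hne with hN | hE
  · exact hξ2 hN
  · exact hξ1 hE

lemma marg_null_wM (i : Fin n) {A : Set ℝ} (hA : volume A = 0) :
    ∀ᵐ ξ ∂(wMeasure w), ξ i ∉ A := by
  have h : wMeasure w {ξ : Fin n → ℝ | ξ i ∈ A} = 0 := wM_ac (marg_null i A hA)
  rw [ae_iff]
  simpa [not_not] using h

lemma Fi_transfer (hw : IsDensityOn w U) (hU : U = Set.univ.pi I) (i : Fin n)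
    (f f' : (Fin n → ℝ) → ℝ) {N : Set (Fin n → ℝ)} (hNn : volume N = 0)
    (hNf : ∀ ξ, f ξ ≠ f' ξ → ξ ∈ N ∪ {ξ | w ξ = 0}) :
    ∀ᵐ ξ ∂(wMeasure w), margC i (fun η => f η * margO i w η) (ξ i)
      = ∫ y, f' (mkx i (ξ i) y) * (∫ s, w (mkx i s y)) := by
  have hgood : ∀ t, t ∈ I i → volume {y : {j : Fin n // j ≠ i} → ℝ | mkx i t y ∈ N} = 0 →
      margC i (fun η => f η * margO i w η) t = ∫ y, f' (mkx i t y) * (∫ s, w (mkx i s y)) := by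
    intro t htI htN
    rw [margC_eq]
    have h1 : ∀ y : {j : Fin n // j ≠ i} → ℝ,
        (fun η => f η * margO i w η) (mkx i t y) = f (mkx i t y) * (∫ s, w (mkx i s y)) := by
      intro y; simp only [margO_mkx]
    rw [integral_congr_ae (Filter.Eventually.of_forall h1)]
    refine integral_congr_ae ?_
    rw [Filter.eventuallyEq_iff_exists_mem]
    refine ⟨{y | mkx i t y ∈ N}ᶜ, ?_, ?_⟩
    · rw [mem_ae_iff]
      simpa using htN
    · intro y hy
      simp only [Set.mem_compl_iff, Set.mem_setOf_eq] at hy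
      by_cases hwic : (∫ s, w (mkx i s y)) = 0
      · simp [hwic]
      · have hne : f (mkx i t y) = f' (mkx i t y) := by
          by_contra hcon
          rcases hNf _ hcon with hN | hE
          · exact hy hN
          · exact wic_mem hw hU i hwic htI hE
        simp only [hne]
  have hslices := slice_null i N hNn
  have hB : volume {t : ℝ | ¬ volume {y : {j : Fin n // j ≠ i} → ℝ | mkx i t y ∈ N} = 0}
      = 0 := ae_iff.mp hslices
  filter_upwards [marg_null_wM i hB, ae_ne_zero_wM hw.measurable] with ξ h1 h2
  have htI : ξ i ∈ I i := mem_U hw hU h2 i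
  simp only [Set.mem_setOf_eq, not_not] at h1
  exact hgood (ξ i) htI h1


lemma T_identity (hw : IsDensityOn w U) (hU : U = Set.univ.pi I) (i : Fin n)
    {f' : (Fin n → ℝ) → ℝ} (hf'm : Measurable f') (hf'0 : ∀ ξ, w ξ = 0 → f' ξ = 0)
    (hInt : Integrable
      (fun ξ => f' ξ * (margC i w (ξ i) * margO i w ξ / w ξ)) (wMeasure w))
    (hwInt : Integrable w volume)
    {ψ : (Fin n → ℝ) → ℝ} (hψm : Measurable ψ) {C : ℝ} (hC : ∀ ξ, |ψ ξ| ≤ C) :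
    Integrable (fun ξ => f' ξ * (margO i w ξ / w ξ
      * margC i (fun η => ψ η * w η) (ξ i)) * w ξ) volume ∧
    ∫ ξ, f' ξ * (margO i w ξ / w ξ * margC i (fun η => ψ η * w η) (ξ i)) * w ξ
      = ∫ ξ, ψ ξ * (∫ y, f' (mkx i (ξ i) y) * (∫ s, w (mkx i s y))) ∂(wMeasure w) := by
  have hwm := hw.measurable
  have hw0 := nonneg_of_density hw
  have hC0 : 0 ≤ C := le_trans (abs_nonneg _) (hC (fun _ => 0))
  set Gi : ℝ → ℝ := margC i (fun η => ψ η * w η) with hGidef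
  have hGim : Measurable Gi := measurable_margC i _ (hψm.mul hwm)
  set Fi : ℝ → ℝ := fun t => ∫ y, f' (mkx i t y) * (∫ s, w (mkx i s y)) with hFidef
  have hFim : Measurable Fi := measurable_Fi hwm i hf'm
  have hwim : Measurable (margC i w) := measurable_margC i w hwm
  have hwom : Measurable (margO i w) := measurable_margO i w hwm
  have hwo0 : ∀ ξ, 0 ≤ margO i w ξ := by
    intro ξ; rw [margO_eq]; exact integral_nonneg fun s => hw0 _
  have hwi0 : ∀ t, 0 ≤ margC i w t := by
    intro t; rw [margC_eq]; exact integral_nonneg fun y => hw0 _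
  -- step 0 : remove the division
  set H : (Fin n → ℝ) → ℝ := fun ξ => f' ξ * margO i w ξ * Gi (ξ i) with hHdef
  have hHm : Measurable H := (hf'm.mul hwom).mul (hGim.comp (measurable_pi_apply i))
  have step0 : ∀ ξ, f' ξ * (margO i w ξ / w ξ * Gi (ξ i)) * w ξ = H ξ := by
    intro ξ
    by_cases hwξ : w ξ = 0
    · rw [hf'0 ξ hwξ]; simp [hHdef, hf'0 ξ hwξ]
    · rw [hHdef]; field_simp
  -- a.e. bound on Gi
  have hslice : ∀ᵐ t : ℝ, Integrable (fun y => w (mkx i t y)) volume := by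
    filter_upwards [(integrable_comp_symm i w hwInt).prod_right_ae] with t ht
    have h2 : (fun y : {j : Fin n // j ≠ i} → ℝ => w (mkx i t y))
        = fun y => w ((eqx i).symm (t, y)) := by funext y; rw [eqx_symm_apply]
    rw [h2]; exact ht
  have hGi_bd : ∀ᵐ t : ℝ, |Gi t| ≤ C * margC i w t := by
    filter_upwards [hslice] with t ht
    have hψw : Integrable (fun y => ψ (mkx i t y) * w (mkx i t y)) volume := by
      refine (ht.const_mul C).mono'
        (((hψm.comp (measurable_mkx_left i t)).mul
          (hwm.comp (measurable_mkx_left i t))).aestronglyMeasurable)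
        (Filter.Eventually.of_forall fun y => ?_)
      rw [Real.norm_eq_abs, abs_mul]
      calc |ψ (mkx i t y)| * |w (mkx i t y)| ≤ C * |w (mkx i t y)| :=
            mul_le_mul_of_nonneg_right (hC _) (abs_nonneg _)
        _ = C * w (mkx i t y) := by rw [abs_of_nonneg (hw0 _)]
    have h1 : |Gi t| ≤ ∫ y, ‖ψ (mkx i t y) * w (mkx i t y)‖ := by
      rw [hGidef, margC_eq, ← Real.norm_eq_abs]
      exact norm_integral_le_integral_norm _
    refine le_trans h1 ?_
    have h2 : ∫ y, ‖ψ (mkx i t y) * w (mkx i t y)‖ ≤ ∫ y, C * w (mkx i t y) := by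
      refine integral_mono hψw.norm (ht.const_mul C) fun y => ?_
      rw [Real.norm_eq_abs, abs_mul]
      calc |ψ (mkx i t y)| * |w (mkx i t y)| ≤ C * |w (mkx i t y)| :=
            mul_le_mul_of_nonneg_right (hC _) (abs_nonneg _)
        _ = C * w (mkx i t y) := by rw [abs_of_nonneg (hw0 _)]
    refine le_trans h2 ?_
    rw [integral_const_mul, margC_eq]
  -- dominating function
  have hΦw : Integrable
      (fun ξ => f' ξ * (margC i w (ξ i) * margO i w ξ / w ξ) * w ξ) volume := by
    have := (integrable_wM_iff hwm hw0
      (fun ξ => f' ξ * (margC i w (ξ i) * margO i w ξ / w ξ))).mp hInt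
    exact this
  have hD : Integrable
      (fun ξ => C * (|f' ξ| * (margC i w (ξ i) * margO i w ξ))) volume := by
    refine ((hΦw.abs.congr (Filter.Eventually.of_forall fun ξ => ?_)).const_mul C)
    show |f' ξ * (margC i w (ξ i) * margO i w ξ / w ξ) * w ξ|
      = |f' ξ| * (margC i w (ξ i) * margO i w ξ)
    by_cases hwξ : w ξ = 0
    · rw [hf'0 ξ hwξ]
      simp [wi_mul_wic_zero hw hU i hwξ]
    · have hpos : 0 < w ξ := lt_of_le_of_ne (hw0 ξ) (Ne.symm hwξ)
      rw [abs_mul, abs_mul, abs_div, abs_mul, abs_of_nonneg (hw0 ξ),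
        abs_of_nonneg (hwi0 (ξ i)), abs_of_nonneg (hwo0 ξ)]
      field_simp
  have hmarg : ∀ᵐ ξ : Fin n → ℝ ∂volume, |Gi (ξ i)| ≤ C * margC i w (ξ i) := by
    rw [ae_iff] at hGi_bd ⊢
    exact measure_mono_null (fun ξ h => h) (marg_null i _ hGi_bd)
  have hHInt : Integrable H volume := by
    refine hD.mono' hHm.aestronglyMeasurable ?_
    filter_upwards [hmarg] with ξ hξ
    show ‖f' ξ * margO i w ξ * Gi (ξ i)‖ ≤ C * (|f' ξ| * (margC i w (ξ i) * margO i w ξ))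
    rw [Real.norm_eq_abs, abs_mul, abs_mul, abs_of_nonneg (hwo0 ξ)]
    calc |f' ξ| * margO i w ξ * |Gi (ξ i)|
        ≤ |f' ξ| * margO i w ξ * (C * margC i w (ξ i)) :=
          mul_le_mul_of_nonneg_left hξ (mul_nonneg (abs_nonneg _) (hwo0 ξ))
      _ = C * (|f' ξ| * (margC i w (ξ i) * margO i w ξ)) := by ring
  constructor
  · exact hHInt.congr (Filter.Eventually.of_forall fun ξ => (step0 ξ).symm)
  -- the Fubini chain
  have e1 : ∫ ξ, f' ξ * (margO i w ξ / w ξ * Gi (ξ i)) * w ξ = ∫ ξ, H ξ :=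
    integral_congr_ae (Filter.Eventually.of_forall step0)
  have e2 : ∫ ξ, H ξ = ∫ t, Fi t * Gi t := by
    rw [integral_mkx i H hHInt]
    congr 1; funext t
    have h1 : ∀ y : {j : Fin n // j ≠ i} → ℝ,
        H (mkx i t y) = f' (mkx i t y) * (∫ s, w (mkx i s y)) * Gi t := by
      intro y
      show f' (mkx i t y) * margO i w (mkx i t y) * Gi ((mkx i t y) i) = _
      rw [margO_mkx, mkx_self]
    rw [integral_congr_ae (Filter.Eventually.of_forall h1), integral_mul_const]
  -- second Fubini for K
  set K : (Fin n → ℝ) → ℝ := fun ξ => ψ ξ * Fi (ξ i) * w ξ with hKdef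
  have hKm : Measurable K :=
    (hψm.mul (hFim.comp (measurable_pi_apply i))).mul hwm
  have hFiL1 : MemLp (fun ξ => ∫ y, f' (mkx i (ξ i) y) * (∫ s, w (mkx i s y))) 1
      (wMeasure w) := memL1_Fi hw hU i hf'm hf'0 hInt hwInt
  have hFiw : Integrable (fun ξ => Fi (ξ i) * w ξ) volume :=
    (integrable_wM_iff hwm hw0 (fun ξ => Fi (ξ i))).mp
      (memLp_one_iff_integrable.mp hFiL1)
  have habs : Integrable (fun ξ => |Fi (ξ i)| * w ξ) volume := by
    refine hFiw.abs.congr (Filter.Eventually.of_forall fun ξ => ?_)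
    show |Fi (ξ i) * w ξ| = |Fi (ξ i)| * w ξ
    rw [abs_mul, abs_of_nonneg (hw0 ξ)]
  have hKInt : Integrable K volume := by
    refine (habs.const_mul C).mono' hKm.aestronglyMeasurable
      (Filter.Eventually.of_forall fun ξ => ?_)
    show ‖ψ ξ * Fi (ξ i) * w ξ‖ ≤ C * (|Fi (ξ i)| * w ξ)
    rw [Real.norm_eq_abs, abs_mul, abs_mul, abs_of_nonneg (hw0 ξ)]
    calc |ψ ξ| * |Fi (ξ i)| * w ξ ≤ C * |Fi (ξ i)| * w ξ := by
          refine mul_le_mul_of_nonneg_right (mul_le_mul_of_nonneg_right (hC ξ)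
            (abs_nonneg _)) (hw0 ξ)
      _ = C * (|Fi (ξ i)| * w ξ) := by ring
  have e3 : ∫ ξ, K ξ = ∫ t, Fi t * Gi t := by
    rw [integral_mkx i K hKInt]
    congr 1; funext t
    have h1 : ∀ y : {j : Fin n // j ≠ i} → ℝ,
        K (mkx i t y) = Fi t * (ψ (mkx i t y) * w (mkx i t y)) := by
      intro y
      show ψ (mkx i t y) * Fi ((mkx i t y) i) * w (mkx i t y) = _
      rw [mkx_self]; ring
    rw [integral_congr_ae (Filter.Eventually.of_forall h1), integral_const_mul]
    rw [hGidef, margC_eq]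
  have e4 : ∫ ξ, ψ ξ * (∫ y, f' (mkx i (ξ i) y) * (∫ s, w (mkx i s y))) ∂(wMeasure w)
      = ∫ ξ, K ξ := by
    rw [integral_wM hwm hw0]
  rw [e1, e2, ← e3, e4]

end Main

end SmirnovAux

open SmirnovAux

/-- Lemma `lem: lem2` (4): under condition (★), if `f ∈ L^q(w)` satisfies
`∫ f ψ̃ w = 0` for all `ψ ∈ L^∞`, then `f = (1/n)∑ᵢ Ψᵢ(ξᵢ)` a.e., with
`Ψᵢ(ξᵢ) = n∫ f wᵢᶜ dξᵢᶜ - (n-1)∫ f w ∈ L^1(w)`. -/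
theorem orthogonal_implies_sum_of_marginals
    {n : ℕ} (hn : 1 ≤ n) (I : Fin n → Set ℝ) (hI : ∀ i, IsClosedIntervalType (I i))
    (U : Set (Fin n → ℝ)) (hU : U = Set.univ.pi I)
    (w : (Fin n → ℝ) → ℝ) (hw : IsDensityOn w U)
    (p q : ℝ) (hp : 1 < p) (hq : q = p / (p - 1))
    (hstar : StarCondition w p)
    (f : (Fin n → ℝ) → ℝ) (hf : MemLp f (ENNReal.ofReal q) (wMeasure w))
    (horth : ∀ ψ : (Fin n → ℝ) → ℝ, MemLp ψ ⊤ (wMeasure w) →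
      (∫ ξ, f ξ * (ψ ξ -
        (∑ i : Fin n, margO i w ξ / w ξ * margC i (fun η => ψ η * w η) (ξ i)) +
        ((n : ℝ) - 1) * ∫ η, ψ η * w η) * w ξ) = 0) :
    (∀ i : Fin n, MemLp (fun ξ =>
        (n : ℝ) * margC i (fun η => f η * margO i w η) (ξ i) -
        ((n : ℝ) - 1) * ∫ η, f η * w η) 1 (wMeasure w)) ∧
    (∀ᵐ ξ ∂(wMeasure w), f ξ = (1 / (n : ℝ)) * ∑ i : Fin n,
        ((n : ℝ) * margC i (fun η => f η * margO i w η) (ξ i) -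
        ((n : ℝ) - 1) * ∫ η, f η * w η)) := by
  classical
  have hwm := hw.measurable
  have hw0 := SmirnovAux.nonneg_of_density hw
  have hwInt : Integrable w volume := by
    by_contra h
    have h1 := hw.integral_one
    rw [integral_undef h] at h1
    norm_num at h1
  have hprob : IsProbabilityMeasure (wMeasure w) := by
    constructor
    rw [wMeasure, withDensity_apply _ MeasurableSet.univ, Measure.restrict_univ,
      ← ofReal_integral_eq_lintegral_ofReal hwInt (Filter.Eventually.of_forall hw0),
      hw.integral_one, ENNReal.ofReal_one]
  have hp1 : (0:ℝ) < p - 1 := by linarith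
  have hq1 : 1 < q := by
    rw [hq, lt_div_iff₀ hp1]; linarith
  have hq0 : (0:ℝ) < q := by linarith
  -- measurable representative of f
  obtain ⟨f', hf'm, hf'0, N, hNm, hNn, hNf⟩ := meas_rep hwm hw0 hf.1
  have hff' : f =ᵐ[wMeasure w] f' := ae_eq_wM hwm hNn hNf
  have hf' : MemLp f' (ENNReal.ofReal q) (wMeasure w) := hf.ae_eq hff'
  have hf'1 : MemLp f' 1 (wMeasure w) :=
    hf'.mono_exponent (ENNReal.one_le_ofReal.mpr hq1.le)
  have hf'w : Integrable (fun ξ => f' ξ * w ξ) volume :=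
    (integrable_wM_iff hwm hw0 f').mp (memLp_one_iff_integrable.mp hf'1)
  -- Hölder
  have hInt : ∀ i : Fin n, Integrable
      (fun ξ => f' ξ * (margC i w (ξ i) * margO i w ξ / w ξ)) (wMeasure w) := by
    intro i
    have hconj : (1 : ℝ≥0∞) / 1 = 1 / ENNReal.ofReal p + 1 / ENNReal.ofReal q := by
      have h1 : (1:ℝ≥0∞) / ENNReal.ofReal p = ENNReal.ofReal (1/p) := by
        rw [ENNReal.ofReal_div_of_pos (by linarith), ENNReal.ofReal_one]
      have h2 : (1:ℝ≥0∞) / ENNReal.ofReal q = ENNReal.ofReal (1/q) := by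
        rw [ENNReal.ofReal_div_of_pos hq0, ENNReal.ofReal_one]
      have h3 : 1/p + 1/q = 1 := by
        rw [hq, one_div_div, ← add_div, div_eq_one_iff_eq (by linarith)]
        ring
      rw [h1, h2, ← ENNReal.ofReal_add (by positivity) (by positivity), h3,
        ENNReal.ofReal_one, div_one]
    have hsm : MemLp ((fun ξ => margC i w (ξ i) * margO i w ξ / w ξ) • f') 1 (wMeasure w) := by
        haveI : ENNReal.HolderTriple (ENNReal.ofReal p) (ENNReal.ofReal q) 1 :=
          ⟨by simpa only [one_div, inv_one] using hconj.symm⟩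
        exact MemLp.smul hf' (hstar i)
    refine memLp_one_iff_integrable.mp (hsm.ae_eq (Filter.Eventually.of_forall fun ξ => ?_))
    show (fun ξ => margC i w (ξ i) * margO i w ξ / w ξ) ξ • f' ξ = _
    simp only [smul_eq_mul]
    ring
  have hcc' : (∫ η, f η * w η) = ∫ η, f' η * w η := by
    refine integral_congr_ae ?_
    have hNae : ∀ᵐ ξ : Fin n → ℝ ∂volume, ξ ∉ N := by
      rw [ae_iff]; simpa [not_not] using hNn
    filter_upwards [hNae] with ξ hξ
    by_cases hfe : f ξ = f' ξ
    · rw [hfe]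
    · rcases hNf ξ hfe with hN | hE
      · exact absurd hN hξ
      · rw [Set.mem_setOf_eq] at hE
        rw [hE, mul_zero, mul_zero]
  have hFiL1 : ∀ i : Fin n, MemLp
      (fun ξ => ∫ y, f' (mkx i (ξ i) y) * (∫ s, w (mkx i s y))) 1 (wMeasure w) :=
    fun i => memL1_Fi hw hU i hf'm hf'0 (hInt i) hwInt
  have htrans : ∀ i : Fin n, ∀ᵐ ξ ∂(wMeasure w),
      margC i (fun η => f η * margO i w η) (ξ i)
        = ∫ y, f' (mkx i (ξ i) y) * (∫ s, w (mkx i s y)) :=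
    fun i => Fi_transfer hw hU i f f' hNn hNf
  -- Claim C : orthogonality against all bounded measurable ψ
  have claimC : ∀ (ψ : (Fin n → ℝ) → ℝ) (C : ℝ), Measurable ψ → (∀ ξ, |ψ ξ| ≤ C) →
      ∫ ξ, ψ ξ * (f' ξ - (∑ i : Fin n, ∫ y, f' (mkx i (ξ i) y) * (∫ s, w (mkx i s y)))
        + ((n:ℝ) - 1) * ∫ η, f η * w η) ∂(wMeasure w) = 0 := by
    intro ψ C hψm hC
    have hψtop : MemLp ψ ⊤ (wMeasure w) :=
      memLp_top_of_bound hψm.aestronglyMeasurable C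
        (Filter.Eventually.of_forall fun ξ => by rw [Real.norm_eq_abs]; exact hC ξ)
    have h0 := horth ψ hψtop
    have hT := fun i : Fin n => T_identity hw hU i hf'm hf'0 (hInt i) hwInt hψm hC
    set cψ : ℝ := ∫ η, ψ η * w η with hcψ
    -- replace f by f'
    have hstep1 : ∫ ξ, f' ξ * (ψ ξ -
        (∑ i : Fin n, margO i w ξ / w ξ * margC i (fun η => ψ η * w η) (ξ i)) +
        ((n : ℝ) - 1) * cψ) * w ξ = 0 := by
      rw [← h0]
      refine integral_congr_ae ?_
      have hNae : ∀ᵐ ξ : Fin n → ℝ ∂volume, ξ ∉ N := by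
        rw [ae_iff]; simpa [not_not] using hNn
      filter_upwards [hNae] with ξ hξ
      by_cases hfe : f ξ = f' ξ
      · rw [hfe]
      · rcases hNf ξ hfe with hN | hE
        · exact absurd hN hξ
        · rw [Set.mem_setOf_eq] at hE
          rw [hE, mul_zero, mul_zero]
    -- expand the integrand
    have hexp : (fun ξ => f' ξ * (ψ ξ -
        (∑ i : Fin n, margO i w ξ / w ξ * margC i (fun η => ψ η * w η) (ξ i)) +
        ((n : ℝ) - 1) * cψ) * w ξ)
        = fun ξ => (f' ξ * ψ ξ * w ξ
          - ∑ i : Fin n, f' ξ * (margO i w ξ / w ξ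
              * margC i (fun η => ψ η * w η) (ξ i)) * w ξ)
          + ((n:ℝ) - 1) * cψ * (f' ξ * w ξ) := by
      funext ξ
      have hS : f' ξ * (∑ i : Fin n, margO i w ξ / w ξ
            * margC i (fun η => ψ η * w η) (ξ i)) * w ξ
          = ∑ i : Fin n, f' ξ * (margO i w ξ / w ξ
            * margC i (fun η => ψ η * w η) (ξ i)) * w ξ := by
        rw [Finset.mul_sum, Finset.sum_mul]
      rw [← hS]
      ring
    rw [hexp] at hstep1
    -- integrability of the pieces
    have hT1 : Integrable (fun ξ => f' ξ * ψ ξ * w ξ) volume := by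
      refine (hf'w.abs.const_mul C).mono'
        (((hf'm.mul hψm).mul hwm).aestronglyMeasurable)
        (Filter.Eventually.of_forall fun ξ => ?_)
      show ‖f' ξ * ψ ξ * w ξ‖ ≤ C * |f' ξ * w ξ|
      rw [Real.norm_eq_abs, abs_mul, abs_mul, abs_mul, abs_of_nonneg (hw0 ξ)]
      calc |f' ξ| * |ψ ξ| * w ξ ≤ |f' ξ| * C * w ξ :=
            mul_le_mul_of_nonneg_right
              (mul_le_mul_of_nonneg_left (hC ξ) (abs_nonneg _)) (hw0 ξ)
        _ = C * (|f' ξ| * w ξ) := by ring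
    have hT3 : Integrable (fun ξ => ((n:ℝ) - 1) * cψ * (f' ξ * w ξ)) volume :=
      hf'w.const_mul _
    have hsub : Integrable (fun ξ => f' ξ * ψ ξ * w ξ
        - ∑ i : Fin n, f' ξ * (margO i w ξ / w ξ
            * margC i (fun η => ψ η * w η) (ξ i)) * w ξ) volume :=
      hT1.sub (integrable_finset_sum _ fun i _ => (hT i).1)
    rw [integral_add hsub hT3, integral_sub hT1
      (integrable_finset_sum _ fun i _ => (hT i).1),
      integral_finset_sum _ (fun i _ => (hT i).1)] at hstep1
    -- rewrite each piece
    have e1 : ∫ ξ, f' ξ * ψ ξ * w ξ = ∫ ξ, f' ξ * ψ ξ ∂(wMeasure w) :=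
      (integral_wM hwm hw0 _).symm
    have e3 : ∫ ξ, ((n:ℝ) - 1) * cψ * (f' ξ * w ξ)
        = ((n:ℝ) - 1) * cψ * ∫ η, f η * w η := by
      rw [integral_const_mul, hcc']
    rw [e1, e3] at hstep1
    have e2 : ∀ i : Fin n, ∫ ξ, f' ξ * (margO i w ξ / w ξ
          * margC i (fun η => ψ η * w η) (ξ i)) * w ξ
        = ∫ ξ, ψ ξ * (∫ y, f' (mkx i (ξ i) y) * (∫ s, w (mkx i s y))) ∂(wMeasure w) :=
      fun i => (hT i).2
    simp only [e2] at hstep1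
    -- expand the goal over μ
    have hψf : Integrable (fun ξ => ψ ξ * f' ξ) (wMeasure w) :=
      (memLp_one_iff_integrable.mp hf'1).bdd_mul hψm.aestronglyMeasurable
        (Filter.Eventually.of_forall fun ξ => by rw [Real.norm_eq_abs]; exact hC ξ)
    have hψFi : ∀ i : Fin n, Integrable
        (fun ξ => ψ ξ * (∫ y, f' (mkx i (ξ i) y) * (∫ s, w (mkx i s y)))) (wMeasure w) :=
      fun i => (memLp_one_iff_integrable.mp (hFiL1 i)).bdd_mul hψm.aestronglyMeasurable
        (Filter.Eventually.of_forall fun ξ => by rw [Real.norm_eq_abs]; exact hC ξ)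
    have hψc : Integrable (fun ξ => ψ ξ * (((n:ℝ) - 1) * ∫ η, f η * w η)) (wMeasure w) :=
      (integrable_const _).bdd_mul hψm.aestronglyMeasurable
        (Filter.Eventually.of_forall fun ξ => by rw [Real.norm_eq_abs]; exact hC ξ)
    have hgoalexp : (fun ξ => ψ ξ * (f' ξ
        - (∑ i : Fin n, ∫ y, f' (mkx i (ξ i) y) * (∫ s, w (mkx i s y)))
        + ((n:ℝ) - 1) * ∫ η, f η * w η))
        = fun ξ => (ψ ξ * f' ξ
          - ∑ i : Fin n, ψ ξ * (∫ y, f' (mkx i (ξ i) y) * (∫ s, w (mkx i s y))))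
          + ψ ξ * (((n:ℝ) - 1) * ∫ η, f η * w η) := by
      funext ξ
      have hS : ψ ξ * (∑ i : Fin n, ∫ y, f' (mkx i (ξ i) y) * (∫ s, w (mkx i s y)))
          = ∑ i : Fin n, ψ ξ * (∫ y, f' (mkx i (ξ i) y) * (∫ s, w (mkx i s y))) := by
        rw [Finset.mul_sum]
      rw [← hS]
      ring
    have hsub2 : Integrable (fun ξ => ψ ξ * f' ξ
        - ∑ i : Fin n, ψ ξ * (∫ y, f' (mkx i (ξ i) y) * (∫ s, w (mkx i s y))))
        (wMeasure w) := hψf.sub (integrable_finset_sum _ fun i _ => hψFi i)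
    rw [hgoalexp, integral_add hsub2 hψc,
      integral_sub hψf (integrable_finset_sum _ fun i _ => hψFi i),
      integral_finset_sum _ (fun i _ => hψFi i)]
    -- last constant piece
    have e4 : ∫ ξ, ψ ξ * (((n:ℝ) - 1) * ∫ η, f η * w η) ∂(wMeasure w)
        = ((n:ℝ) - 1) * cψ * ∫ η, f η * w η := by
      have : ∫ ξ, ψ ξ * (((n:ℝ) - 1) * ∫ η, f η * w η) ∂(wMeasure w)
          = (∫ ξ, ψ ξ ∂(wMeasure w)) * (((n:ℝ) - 1) * ∫ η, f η * w η) :=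
        integral_mul_const _ _
      rw [this, integral_wM hwm hw0 ψ, ← hcψ]
      ring
    have e5 : ∫ ξ, ψ ξ * f' ξ ∂(wMeasure w) = ∫ ξ, f' ξ * ψ ξ ∂(wMeasure w) := by
      congr 1; funext ξ; ring
    rw [e4, e5]
    linarith [hstep1]
  -- Claim D : the function g vanishes a.e.
  have hFim : ∀ i : Fin n, Measurable
      (fun t : ℝ => ∫ y, f' (mkx i t y) * (∫ s, w (mkx i s y))) :=
    fun i => measurable_Fi hwm i hf'm
  set g : (Fin n → ℝ) → ℝ := fun ξ => f' ξ
      - (∑ i : Fin n, ∫ y, f' (mkx i (ξ i) y) * (∫ s, w (mkx i s y)))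
      + ((n:ℝ) - 1) * ∫ η, f η * w η with hgdef
  have hgm : Measurable g := by
    refine (hf'm.sub (Finset.measurable_sum _ fun i _ =>
      (hFim i).comp (measurable_pi_apply i))).add_const _
  have hgInt : Integrable g (wMeasure w) := by
    refine ((memLp_one_iff_integrable.mp hf'1).sub
      (integrable_finset_sum _ fun i _ => memLp_one_iff_integrable.mp (hFiL1 i))).add
      (integrable_const _)
  have hg0 : ∀ᵐ ξ ∂(wMeasure w), g ξ = 0 := by
    have hψm : Measurable (fun ξ => if 0 ≤ g ξ then (1:ℝ) else -1) :=
      Measurable.ite (measurableSet_le measurable_const hgm) measurable_const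
        measurable_const
    have hbd : ∀ ξ, |if 0 ≤ g ξ then (1:ℝ) else -1| ≤ 1 := fun ξ => by
      by_cases h : 0 ≤ g ξ <;> simp [h]
    have h1 := claimC _ 1 hψm hbd
    have h2 : ∫ ξ, |g ξ| ∂(wMeasure w) = 0 := by
      rw [← h1]
      refine integral_congr_ae (Filter.Eventually.of_forall fun ξ => ?_)
      by_cases h : 0 ≤ g ξ
      · simp only [h, if_true, one_mul, abs_of_nonneg h]; rfl
      · push_neg at h
        simp only [not_le.mpr h, if_false, abs_of_neg h]
        ring
    have h3 := (integral_eq_zero_iff_of_nonneg_ae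
      (Filter.Eventually.of_forall fun ξ => abs_nonneg (g ξ)) hgInt.abs).mp h2
    filter_upwards [h3] with ξ hξ
    simpa using hξ
  constructor
  · intro i
    have h1 : MemLp (fun ξ => (n:ℝ) * (∫ y, f' (mkx i (ξ i) y) * (∫ s, w (mkx i s y)))
        - ((n:ℝ) - 1) * ∫ η, f η * w η) 1 (wMeasure w) :=
      ((hFiL1 i).const_mul _).sub (memLp_const _)
    refine h1.ae_eq ?_
    filter_upwards [htrans i] with ξ hξ
    rw [hξ]
  · filter_upwards [hg0, hff', ae_all_iff.mpr htrans] with ξ h1 h2 h3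
    have hn0 : (n:ℝ) ≠ 0 := Nat.cast_ne_zero.mpr (by omega)
    rw [h2]
    have hrw : ∑ i : Fin n, ((n:ℝ) * margC i (fun η => f η * margO i w η) (ξ i)
          - ((n:ℝ) - 1) * ∫ η, f η * w η)
        = ∑ i : Fin n, ((n:ℝ) * (∫ y, f' (mkx i (ξ i) y) * (∫ s, w (mkx i s y)))
          - ((n:ℝ) - 1) * ∫ η, f η * w η) :=
      Finset.sum_congr rfl fun i _ => by rw [h3 i]
    rw [hrw]
    have hsum : f' ξ = (∑ i : Fin n, ∫ y, f' (mkx i (ξ i) y) * (∫ s, w (mkx i s y)))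
        - ((n:ℝ) - 1) * ∫ η, f η * w η := by
      have hG : f' ξ - (∑ i : Fin n, ∫ y, f' (mkx i (ξ i) y) * (∫ s, w (mkx i s y)))
          + ((n:ℝ) - 1) * ∫ η, f η * w η = 0 := h1
      linarith
    rw [hsum, Finset.sum_sub_distrib, ← Finset.mul_sum, Finset.sum_const,
      Finset.card_univ, Fintype.card_fin, nsmul_eq_mul]
    field_simp
end
end

section
/- Let 1 < p < ∞ with conjugate exponent q = p/(p-1), let w be a strictly positive density on U, and let f ∈ L^q(w). Then the following are equivalent: (i) ‖sign(f)|f|^{1/(p−1)} + φ‖_p ≥ ‖sign(f)|f|^{1/(p−1)}‖_p for all φ ∈ N (note ‖sign(f)|f|^{1/(p−1)}‖_p = ‖f‖_q^{q/p}); (ii) ∫_U f(ξ)φ(ξ)w(ξ)dξ = 0 for all φ ∈ N. -/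
open MeasureTheory

noncomputable section

section Aux

lemma aux_abs_sign_rpow {p : ℝ} (hp : 1 < p) (x : ℝ) :
    |Real.sign x * |x| ^ (1 / (p - 1))| = |x| ^ (1 / (p - 1)) := by
  rcases eq_or_ne x 0 with rfl | hx
  · have h1 : (0:ℝ) < 1 / (p - 1) := by
      have := sub_pos.mpr hp; positivity
    rw [Real.sign_zero, zero_mul, abs_zero]
    exact (Real.zero_rpow h1.ne').symm
  · have hae : (0:ℝ) < |x| ^ (1 / (p - 1)) := Real.rpow_pos_of_pos (abs_pos.mpr hx) _
    rcases hx.lt_or_gt with h | h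
    · rw [Real.sign_of_neg h, neg_one_mul, abs_neg, abs_of_pos hae]
    · rw [Real.sign_of_pos h, one_mul, abs_of_pos hae]

lemma aux_rpow_collapse {p : ℝ} (hp : 1 < p) {a : ℝ} (ha : 0 < a) :
    (a ^ (1 / (p - 1))) ^ (p - 2) * (a ^ (1 / (p - 1))) = a := by
  have hp1 : (0:ℝ) < p - 1 := sub_pos.mpr hp
  rw [← Real.rpow_mul ha.le, ← Real.rpow_add ha,
    show 1 / (p - 1) * (p - 2) + 1 / (p - 1) = 1 by field_simp; ring, Real.rpow_one]

lemma aux_dual_eq {p : ℝ} (hp : 1 < p) (x : ℝ) :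
    |Real.sign x * |x| ^ (1 / (p - 1))| ^ (p - 2) * (Real.sign x * |x| ^ (1 / (p - 1))) = x := by
  rcases eq_or_ne x 0 with rfl | hx
  · rw [Real.sign_zero, zero_mul, mul_zero]
  · have ha : (0:ℝ) < |x| := abs_pos.mpr hx
    rw [aux_abs_sign_rpow hp]
    rcases hx.lt_or_gt with h | h
    · rw [Real.sign_of_neg h, neg_one_mul, mul_neg, aux_rpow_collapse hp ha,
        abs_of_neg h, neg_neg]
    · rw [Real.sign_of_pos h, one_mul, aux_rpow_collapse hp ha, abs_of_pos h]

lemma aux_mul_dual {p : ℝ} (hp : 1 < p) (x : ℝ) :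
    x * (Real.sign x * |x| ^ (1 / (p - 1))) = |x| ^ (p / (p - 1)) := by
  have hp1 : (0:ℝ) < p - 1 := sub_pos.mpr hp
  have hq0 : (0:ℝ) < p / (p - 1) := by positivity
  rcases eq_or_ne x 0 with rfl | hx
  · rw [abs_zero, Real.zero_rpow hq0.ne', zero_mul]
  · have ha : (0:ℝ) < |x| := abs_pos.mpr hx
    have hstep : |x| * |x| ^ (1 / (p - 1)) = |x| ^ (p / (p - 1)) := by
      rw [show p / (p - 1) = 1 + 1 / (p - 1) by field_simp; ring, Real.rpow_add ha, Real.rpow_one]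
    rcases hx.lt_or_gt with h | h
    · rw [Real.sign_of_neg h, ← hstep, abs_of_neg h]; ring
    · rw [Real.sign_of_pos h, ← hstep, abs_of_pos h]; ring

lemma aux_abs_rpow_p {p : ℝ} (hp : 1 < p) (x : ℝ) :
    |Real.sign x * |x| ^ (1 / (p - 1))| ^ p = |x| ^ (p / (p - 1)) := by
  rw [aux_abs_sign_rpow hp, ← Real.rpow_mul (abs_nonneg x)]
  congr 1
  field_simp

lemma aux_abs_mul_self_rpow {p : ℝ} (hp : 1 < p) (u : ℝ) :
    |(|u| ^ (p - 2) * u)| = |u| ^ (p - 1) := by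
  rcases eq_or_ne u 0 with rfl | hu
  · rw [mul_zero, abs_zero]
    exact (Real.zero_rpow (by linarith : p - 1 ≠ 0)).symm
  · have ha : (0:ℝ) < |u| := abs_pos.mpr hu
    rw [abs_mul, abs_of_nonneg (Real.rpow_nonneg (abs_nonneg u) _),
      ← Real.rpow_add_one (abs_ne_zero.mpr hu), show p - 2 + 1 = p - 1 by ring]

lemma measurable_real_sign : Measurable Real.sign := by
  unfold Real.sign
  exact Measurable.ite measurableSet_Iio measurable_const
    (Measurable.ite measurableSet_Ioi measurable_const measurable_const)

lemma integral_wMeasure {n : ℕ} {w : (Fin n → ℝ) → ℝ} (hwm : Measurable w)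
    (hw0 : ∀ ξ, 0 ≤ w ξ) (h : (Fin n → ℝ) → ℝ) :
    ∫ ξ, h ξ ∂(wMeasure w) = ∫ ξ, h ξ * w ξ := by
  have : wMeasure w = volume.withDensity (fun ξ => ((w ξ).toNNReal : ENNReal)) := rfl
  rw [this, integral_withDensity_eq_integral_smul hwm.real_toNNReal h]
  congr 1
  funext ξ
  rw [NNReal.smul_def, smul_eq_mul, Real.coe_toNNReal _ (hw0 ξ), mul_comm]

end Aux

/-- Corollary `cor: 1`, (i) ⇔ (ii): for `f ∈ L^q(w)`,
`‖sign(f)|f|^{1/(p-1)} + φ‖_p ≥ ‖sign(f)|f|^{1/(p-1)}‖_p` for all `φ ∈ N` iff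
`∫ f φ w = 0` for all `φ ∈ N`. -/


theorem orthogonality_iff_minimality
    {n : ℕ} (hn : 1 ≤ n) (I : Fin n → Set ℝ) (hI : ∀ i, IsClosedIntervalType (I i))
    (U : Set (Fin n → ℝ)) (hU : U = Set.univ.pi I)
    (w : (Fin n → ℝ) → ℝ) (hw : IsDensityOn w U)
    (p q : ℝ) (hp : 1 < p) (hq : q = p / (p - 1))
    (f : (Fin n → ℝ) → ℝ) (hf : MemLp f (ENNReal.ofReal q) (wMeasure w)) :
    (∀ φ : (Fin n → ℝ) → ℝ, MemN w p φ →
        eLpNorm (fun ξ => Real.sign (f ξ) * |f ξ| ^ (1 / (p - 1))) (ENNReal.ofReal p)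
            (wMeasure w) ≤
          eLpNorm (fun ξ => Real.sign (f ξ) * |f ξ| ^ (1 / (p - 1)) + φ ξ)
            (ENNReal.ofReal p) (wMeasure w)) ↔
      (∀ φ : (Fin n → ℝ) → ℝ, MemN w p φ → (∫ ξ, f ξ * φ ξ * w ξ) = 0) := by
  have hp0 : (0:ℝ) < p := lt_trans one_pos hp
  have hp1 : (0:ℝ) < p - 1 := sub_pos.mpr hp
  have he : (0:ℝ) < 1 / (p - 1) := by positivity
  have hq0 : (0:ℝ) < q := by rw [hq]; positivity
  have conj : p.HolderConjugate q := by
    rw [hq]; exact Real.HolderConjugate.conjExponent hp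
  set μ := wMeasure w with hμdef
  have hw0 : ∀ ξ, 0 ≤ w ξ := fun ξ => by
    by_cases hξ : ξ ∈ U
    · exact (hw.pos ξ hξ).le
    · rw [hw.zero ξ hξ]
  have hconv : ∀ h : (Fin n → ℝ) → ℝ, ∫ ξ, h ξ ∂μ = ∫ ξ, h ξ * w ξ :=
    fun h => integral_wMeasure hw.measurable hw0 h
  set g : (Fin n → ℝ) → ℝ := fun ξ => Real.sign (f ξ) * |f ξ| ^ (1 / (p - 1)) with hgdef
  have hpne0 : ENNReal.ofReal p ≠ 0 := (ENNReal.ofReal_pos.mpr hp0).ne'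
  have hqne0 : ENNReal.ofReal q ≠ 0 := (ENNReal.ofReal_pos.mpr hq0).ne'
  -- g ∈ L^p
  have hrp : MemLp (fun ξ => ‖f ξ‖ ^ (1 / (p - 1))) (ENNReal.ofReal p) μ := by
    have h := hf.norm_rpow_div (ENNReal.ofReal (1 / (p - 1)))
    rw [ENNReal.toReal_ofReal he.le, ← ENNReal.ofReal_div_of_pos he,
      show q / (1 / (p - 1)) = p by rw [hq]; field_simp] at h
    exact h
  have hgm : AEStronglyMeasurable g μ :=
    ((measurable_real_sign.comp_aemeasurable hf.1.aemeasurable).mul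
      (hf.1.norm.aemeasurable.pow_const _)).aestronglyMeasurable
  have hg : MemLp g (ENNReal.ofReal p) μ := by
    refine hrp.of_le hgm (Filter.Eventually.of_forall fun ξ => ?_)
    show |Real.sign (f ξ) * |f ξ| ^ (1 / (p - 1))| ≤ |(|f ξ| ^ (1 / (p - 1)))|
    rw [aux_abs_sign_rpow hp, abs_of_nonneg (Real.rpow_nonneg (abs_nonneg _) _)]
  -- conjugate-exponent arithmetic in ℝ≥0∞
  have hexp : (1:ENNReal) / 1 = 1 / ENNReal.ofReal q + 1 / ENNReal.ofReal p := by
    rw [one_div, one_div, one_div, inv_one]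
    exact (conj.symm.inv_add_inv_ennreal).symm
  -- product integrability against f
  have hmul_int : ∀ ψ : (Fin n → ℝ) → ℝ, MemLp ψ (ENNReal.ofReal p) μ →
      Integrable (fun ξ => f ξ * ψ ξ) μ := by
    intro ψ hψ
    have h := hψ.smul hf (hpqr := ⟨by simpa only [one_div] using hexp.symm⟩)
    rw [smul_eq_mul] at h
    exact memLp_one_iff_integrable.mp h
  -- elpnorm-to-integral comparison
  have key : ∀ ψ : (Fin n → ℝ) → ℝ, MemLp ψ (ENNReal.ofReal p) μ →
      eLpNorm g (ENNReal.ofReal p) μ ≤ eLpNorm ψ (ENNReal.ofReal p) μ →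
      ∫ ξ, ‖g ξ‖ ^ p ∂μ ≤ ∫ ξ, ‖ψ ξ‖ ^ p ∂μ := by
    intro ψ hψ hle
    have hA0 : (0:ℝ) ≤ ∫ ξ, ‖g ξ‖ ^ p ∂μ :=
      integral_nonneg fun ξ => Real.rpow_nonneg (norm_nonneg _) _
    have hB0 : (0:ℝ) ≤ ∫ ξ, ‖ψ ξ‖ ^ p ∂μ :=
      integral_nonneg fun ξ => Real.rpow_nonneg (norm_nonneg _) _
    rw [hg.eLpNorm_eq_integral_rpow_norm hpne0 ENNReal.ofReal_ne_top,
      hψ.eLpNorm_eq_integral_rpow_norm hpne0 ENNReal.ofReal_ne_top,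
      ENNReal.toReal_ofReal hp0.le] at hle
    have h2 := (ENNReal.ofReal_le_ofReal_iff (Real.rpow_nonneg hB0 _)).mp hle
    have h3 := Real.rpow_le_rpow (Real.rpow_nonneg hA0 _) h2 hp0.le
    rwa [← Real.rpow_mul hA0, ← Real.rpow_mul hB0, inv_mul_cancel₀ hp0.ne',
      Real.rpow_one, Real.rpow_one] at h3
  constructor
  · -- minimality → orthogonality
    intro hmin φ hφN
    obtain ⟨hφ, hφmarg⟩ := hφN
    -- scalar multiples stay in N
    have hN : ∀ t : ℝ, MemN w p (fun ξ => t * φ ξ) := by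
      intro t
      refine ⟨hφ.const_mul t, fun i => ?_⟩
      filter_upwards [hφmarg i] with s hs
      have hfun : (fun ξ => t * φ ξ * w ξ) = fun ξ => t * (φ ξ * w ξ) := by
        funext ξ; ring
      rw [hfun]
      simp only [margC] at hs ⊢
      rw [integral_const_mul, hs, mul_zero]
    -- the function t ↦ ∫ |g + tφ|^p has a global minimum at 0
    have hmem : ∀ t : ℝ, MemLp (fun ξ => g ξ + t * φ ξ) (ENNReal.ofReal p) μ :=
      fun t => hg.add (hφ.const_mul t)
    have hmin' : ∀ t : ℝ, (∫ ξ, |g ξ + (0:ℝ) * φ ξ| ^ p ∂μ) ≤ ∫ ξ, |g ξ + t * φ ξ| ^ p ∂μ := by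
      intro t
      have hle := hmin (fun ξ => t * φ ξ) (hN t)
      have h2 : (∫ ξ, ‖g ξ‖ ^ p ∂μ) ≤ ∫ ξ, ‖g ξ + t * φ ξ‖ ^ p ∂μ :=
        key (fun ξ => g ξ + t * φ ξ) (hmem t) hle
      calc (∫ ξ, |g ξ + (0:ℝ) * φ ξ| ^ p ∂μ) = ∫ ξ, ‖g ξ‖ ^ p ∂μ := by
            congr 1; funext ξ; rw [zero_mul, add_zero]; rfl
        _ ≤ ∫ ξ, ‖g ξ + t * φ ξ‖ ^ p ∂μ := h2
        _ = ∫ ξ, |g ξ + t * φ ξ| ^ p ∂μ := by congr 1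
    -- differentiate under the integral at t = 0
    have hF_meas : ∀ t : ℝ, AEStronglyMeasurable (fun ξ => |g ξ + t * φ ξ| ^ p) μ := by
      intro t
      exact ((hgm.add (hφ.1.const_mul t)).norm.aemeasurable.pow_const p).aestronglyMeasurable
    have hF_int : Integrable (fun ξ => |g ξ + (0:ℝ) * φ ξ| ^ p) μ := by
      have h := hg.integrable_norm_rpow hpne0 ENNReal.ofReal_ne_top
      rw [ENNReal.toReal_ofReal hp0.le] at h
      refine h.congr (Filter.Eventually.of_forall fun ξ => ?_)
      simp [Real.norm_eq_abs]
    have hF'0_eq : (fun ξ => p * |g ξ + (0:ℝ) * φ ξ| ^ (p - 2) * (g ξ + (0:ℝ) * φ ξ) * φ ξ)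
        = fun ξ => p * (f ξ * φ ξ) := by
      funext ξ
      rw [zero_mul, add_zero]
      have h1 : p * |g ξ| ^ (p - 2) * g ξ * φ ξ = p * ((|g ξ| ^ (p - 2) * g ξ) * φ ξ) := by ring
      rw [h1, hgdef]
      simp only []
      rw [aux_dual_eq hp (f ξ)]
    have hF'_meas : AEStronglyMeasurable
        (fun ξ => p * |g ξ + (0:ℝ) * φ ξ| ^ (p - 2) * (g ξ + (0:ℝ) * φ ξ) * φ ξ) μ := by
      rw [hF'0_eq]
      exact ((hf.1.mul hφ.1).const_mul p)
    have h_bound : ∀ᵐ ξ ∂μ, ∀ t ∈ Metric.ball (0:ℝ) 1,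
        ‖p * |g ξ + t * φ ξ| ^ (p - 2) * (g ξ + t * φ ξ) * φ ξ‖ ≤
          p * (|g ξ| + |φ ξ|) ^ (p - 1) * |φ ξ| := by
      refine Filter.Eventually.of_forall fun ξ => fun t ht => ?_
      have htabs : |t| ≤ 1 := le_of_lt (by simpa [Real.norm_eq_abs] using Metric.mem_ball.mp ht)
      have habs_u : |g ξ + t * φ ξ| ≤ |g ξ| + |φ ξ| := by
        calc |g ξ + t * φ ξ| ≤ |g ξ| + |t * φ ξ| := abs_add_le _ _
          _ = |g ξ| + |t| * |φ ξ| := by rw [abs_mul t (φ ξ)]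
          _ ≤ |g ξ| + 1 * |φ ξ| := by
              have := mul_le_mul_of_nonneg_right htabs (abs_nonneg (φ ξ))
              linarith
          _ = |g ξ| + |φ ξ| := by ring
      have hx : |(|g ξ + t * φ ξ| ^ (p - 2) * (g ξ + t * φ ξ))| ≤ (|g ξ| + |φ ξ|) ^ (p - 1) := by
        rw [aux_abs_mul_self_rpow hp]
        exact Real.rpow_le_rpow (abs_nonneg _) habs_u (by linarith)
      have heq : ‖p * |g ξ + t * φ ξ| ^ (p - 2) * (g ξ + t * φ ξ) * φ ξ‖
          = p * |(|g ξ + t * φ ξ| ^ (p - 2) * (g ξ + t * φ ξ))| * |φ ξ| := by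
        rw [Real.norm_eq_abs, abs_mul, abs_mul, abs_mul, abs_mul,
          abs_of_pos hp0, abs_of_nonneg (Real.rpow_nonneg (abs_nonneg _) _)]
        ring
      rw [heq]
      have h1 : p * |(|g ξ + t * φ ξ| ^ (p - 2) * (g ξ + t * φ ξ))| * |φ ξ|
          ≤ p * ((|g ξ| + |φ ξ|) ^ (p - 1)) * |φ ξ| := by
        apply mul_le_mul_of_nonneg_right _ (abs_nonneg _)
        exact mul_le_mul_of_nonneg_left hx hp0.le
      exact h1
    have hbound_int : Integrable (fun ξ => p * (|g ξ| + |φ ξ|) ^ (p - 1) * |φ ξ|) μ := by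
      have hsum : MemLp (fun ξ => ‖g ξ‖ + ‖φ ξ‖) (ENNReal.ofReal p) μ := hg.norm.add hφ.norm
      have h1 : MemLp (fun ξ => ‖(‖g ξ‖ + ‖φ ξ‖)‖ ^ (p - 1)) (ENNReal.ofReal q) μ := by
        have h := hsum.norm_rpow_div (ENNReal.ofReal (p - 1))
        rw [ENNReal.toReal_ofReal hp1.le, ← ENNReal.ofReal_div_of_pos hp1, ← hq] at h
        exact h
      have h1' : MemLp (fun ξ => (|g ξ| + |φ ξ|) ^ (p - 1)) (ENNReal.ofReal q) μ := by
        refine h1.ae_eq (Filter.Eventually.of_forall fun ξ => ?_)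
        rw [Real.norm_eq_abs, abs_of_nonneg (by positivity : (0:ℝ) ≤ ‖g ξ‖ + ‖φ ξ‖)]
        rfl
      have h2 : Integrable (fun ξ => (|g ξ| + |φ ξ|) ^ (p - 1) * φ ξ) μ := by
        have h := hφ.smul h1' (hpqr := ⟨by simpa only [one_div] using hexp.symm⟩)
        rw [smul_eq_mul] at h
        exact memLp_one_iff_integrable.mp h
      have h3 := (h2.norm.const_mul p)
      refine h3.congr (Filter.Eventually.of_forall fun ξ => ?_)
      show p * ‖(|g ξ| + |φ ξ|) ^ (p - 1) * φ ξ‖ = p * (|g ξ| + |φ ξ|) ^ (p - 1) * |φ ξ|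
      rw [Real.norm_eq_abs, abs_mul,
        abs_of_nonneg (Real.rpow_nonneg (by positivity) _)]
      ring
    have h_diff : ∀ᵐ ξ ∂μ, ∀ t ∈ Metric.ball (0:ℝ) 1,
        HasDerivAt (fun t => |g ξ + t * φ ξ| ^ p)
          (p * |g ξ + t * φ ξ| ^ (p - 2) * (g ξ + t * φ ξ) * φ ξ) t := by
      refine Filter.Eventually.of_forall fun ξ => fun t _ => ?_
      have hinner : HasDerivAt (fun t : ℝ => g ξ + t * φ ξ) (φ ξ) t := by
        simpa using ((hasDerivAt_id t).mul_const (φ ξ)).const_add (g ξ)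
      exact (hasDerivAt_abs_rpow (g ξ + t * φ ξ) hp).comp t hinner
    obtain ⟨hF'int, hderiv⟩ := hasDerivAt_integral_of_dominated_loc_of_deriv_le
      (F := fun t ξ => |g ξ + t * φ ξ| ^ p)
      (F' := fun t ξ => p * |g ξ + t * φ ξ| ^ (p - 2) * (g ξ + t * φ ξ) * φ ξ)
      (x₀ := (0:ℝ)) (Metric.ball_mem_nhds 0 one_pos)
      (Filter.Eventually.of_forall hF_meas) hF_int hF'_meas h_bound hbound_int h_diff
    have hlocmin : IsLocalMin (fun t : ℝ => ∫ ξ, |g ξ + t * φ ξ| ^ p ∂μ) 0 :=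
      Filter.Eventually.of_forall hmin'
    have hz := hlocmin.hasDerivAt_eq_zero hderiv
    have hz2 : p * ∫ ξ, f ξ * φ ξ ∂μ = 0 := by
      rw [← integral_const_mul]
      rw [← hz]
      congr 1
      exact hF'0_eq.symm
    have hz3 : ∫ ξ, f ξ * φ ξ ∂μ = 0 := by
      rcases mul_eq_zero.mp hz2 with h | h
      · exact absurd h hp0.ne'
      · exact h
    rw [← hconv (fun ξ => f ξ * φ ξ)]
    exact hz3
  · -- orthogonality → minimality
    intro horth φ hφN
    have hφ := hφN.1
    have hgφ : MemLp (fun ξ => g ξ + φ ξ) (ENNReal.ofReal p) μ := hg.add hφ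
    have hA0 : (0:ℝ) ≤ ∫ ξ, ‖g ξ‖ ^ p ∂μ :=
      integral_nonneg fun ξ => Real.rpow_nonneg (norm_nonneg _) _
    have hB0 : (0:ℝ) ≤ ∫ ξ, ‖g ξ + φ ξ‖ ^ p ∂μ :=
      integral_nonneg fun ξ => Real.rpow_nonneg (norm_nonneg _) _
    have hfq_eq : (fun ξ => ‖f ξ‖ ^ q) = fun ξ => ‖g ξ‖ ^ p := by
      funext ξ
      show |f ξ| ^ q = |g ξ| ^ p
      rw [hgdef]
      simp only []
      rw [aux_abs_rpow_p hp (f ξ), hq]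
    have hfg_eq : (fun ξ => f ξ * g ξ) = fun ξ => ‖g ξ‖ ^ p := by
      funext ξ
      show f ξ * g ξ = |g ξ| ^ p
      rw [hgdef]
      simp only []
      rw [aux_mul_dual hp (f ξ), aux_abs_rpow_p hp (f ξ)]
    have hfg_int : Integrable (fun ξ => f ξ * g ξ) μ := hmul_int g hg
    have hfφ_int : Integrable (fun ξ => f ξ * φ ξ) μ := hmul_int φ hφ
    have hOrth0 : ∫ ξ, f ξ * φ ξ ∂μ = 0 := by
      rw [hconv (fun ξ => f ξ * φ ξ)]
      exact horth φ hφN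
    have hfgφ_int : Integrable (fun ξ => f ξ * (g ξ + φ ξ)) μ := by
      refine (hfg_int.add hfφ_int).congr (Filter.Eventually.of_forall fun ξ => ?_)
      show f ξ * g ξ + f ξ * φ ξ = f ξ * (g ξ + φ ξ)
      ring
    have hstep : (∫ ξ, ‖g ξ‖ ^ p ∂μ) = ∫ ξ, f ξ * (g ξ + φ ξ) ∂μ := by
      rw [show (fun ξ => f ξ * (g ξ + φ ξ)) = fun ξ => f ξ * g ξ + f ξ * φ ξ from
        funext fun ξ => by ring]
      rw [integral_add hfg_int hfφ_int, hOrth0, add_zero, hfg_eq]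
    have hnorm_int : Integrable (fun ξ => ‖f ξ‖ * ‖g ξ + φ ξ‖) μ := by
      refine hfgφ_int.norm.congr (Filter.Eventually.of_forall fun ξ => ?_)
      show ‖f ξ * (g ξ + φ ξ)‖ = ‖f ξ‖ * ‖g ξ + φ ξ‖
      exact norm_mul _ _
    have hmono : (∫ ξ, f ξ * (g ξ + φ ξ) ∂μ) ≤ ∫ ξ, ‖f ξ‖ * ‖g ξ + φ ξ‖ ∂μ := by
      refine integral_mono_ae hfgφ_int hnorm_int (Filter.Eventually.of_forall fun ξ => ?_)
      calc f ξ * (g ξ + φ ξ) ≤ |f ξ * (g ξ + φ ξ)| := le_abs_self _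
        _ = ‖f ξ‖ * ‖g ξ + φ ξ‖ := by rw [abs_mul]; rfl
    have hholder := integral_mul_norm_le_Lp_mul_Lq conj.symm hf hgφ
    rw [hfq_eq] at hholder
    have hchain : (∫ ξ, ‖g ξ‖ ^ p ∂μ) ≤
        (∫ ξ, ‖g ξ‖ ^ p ∂μ) ^ (1/q) * (∫ ξ, ‖g ξ + φ ξ‖ ^ p ∂μ) ^ (1/p) := by
      calc (∫ ξ, ‖g ξ‖ ^ p ∂μ) = ∫ ξ, f ξ * (g ξ + φ ξ) ∂μ := hstep
        _ ≤ ∫ ξ, ‖f ξ‖ * ‖g ξ + φ ξ‖ ∂μ := hmono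
        _ ≤ _ := hholder
    -- conclude A^(1/p) ≤ B^(1/p)
    have hfinal : (∫ ξ, ‖g ξ‖ ^ p ∂μ) ^ p⁻¹ ≤ (∫ ξ, ‖g ξ + φ ξ‖ ^ p ∂μ) ^ p⁻¹ := by
      rcases hA0.eq_or_lt with hA | hA
      · rw [← hA, Real.zero_rpow (inv_ne_zero hp0.ne')]
        exact Real.rpow_nonneg hB0 _
      · have h1 : (∫ ξ, ‖g ξ‖ ^ p ∂μ) ^ (1/q) * (∫ ξ, ‖g ξ‖ ^ p ∂μ) ^ (1/p)
            = ∫ ξ, ‖g ξ‖ ^ p ∂μ := by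
          rw [one_div, one_div, ← Real.rpow_add hA, add_comm, conj.inv_add_inv_eq_one,
            Real.rpow_one]
        have h2 : (∫ ξ, ‖g ξ‖ ^ p ∂μ) ^ (1/q) * (∫ ξ, ‖g ξ‖ ^ p ∂μ) ^ (1/p)
            ≤ (∫ ξ, ‖g ξ‖ ^ p ∂μ) ^ (1/q) * (∫ ξ, ‖g ξ + φ ξ‖ ^ p ∂μ) ^ (1/p) := by
          rw [h1]; exact hchain
        have h3 := le_of_mul_le_mul_left h2 (Real.rpow_pos_of_pos hA (1/q))
        rwa [one_div] at h3
    rw [hg.eLpNorm_eq_integral_rpow_norm hpne0 ENNReal.ofReal_ne_top,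
      hgφ.eLpNorm_eq_integral_rpow_norm hpne0 ENNReal.ofReal_ne_top,
      ENNReal.toReal_ofReal hp0.le]
    exact ENNReal.ofReal_le_ofReal hfinal
end
end

section
/- Let w(x,y) = w_X(x)·w_Y(y) be a product density on ℝ², where w_X and w_Y are strictly positive probability densities on ℝ. If f, g : ℝ → ℝ are measurable with f(x), g(y) ∈ L^1(w) and the function (x,y) ↦ f(x)+g(y) belongs to L^2(w), then ∫ f(x)² w_X(x)dx < ∞ and ∫ g(y)² w_Y(y)dy < ∞, i.e. f(x) ∈ L^2(w) and g(y) ∈ L^2(w). -/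
open MeasureTheory

noncomputable section

/-- The weighted measure `w(x,y)dxdy` on `ℝ²`. -/
def wMeasure2 (w : ℝ × ℝ → ℝ) : Measure (ℝ × ℝ) :=
  volume.withDensity (fun z => ENNReal.ofReal (w z))

/-- `w` is a strictly positive (probability) density on `ℝ²`. -/
def IsDensity2 (w : ℝ × ℝ → ℝ) : Prop :=
  Measurable w ∧ (∀ z, 0 < w z) ∧ (∫ z, w z) = 1

/-- The Smirnov property on `ℝ²` for exponent `q`: whenever `f(x)+g(y) ∈ L^q(w)` with
`f(x), g(y) ∈ L^1(w)`, then `f(x), g(y) ∈ L^q(w)`. -/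
def SmirnovProperty2 (w : ℝ × ℝ → ℝ) (q : ℝ) : Prop :=
  ∀ f g : ℝ → ℝ, Measurable f → Measurable g →
    MemLp (fun z : ℝ × ℝ => f z.1) 1 (wMeasure2 w) →
    MemLp (fun z : ℝ × ℝ => g z.2) 1 (wMeasure2 w) →
    MemLp (fun z : ℝ × ℝ => f z.1 + g z.2) (ENNReal.ofReal q) (wMeasure2 w) →
    MemLp (fun z : ℝ × ℝ => f z.1) (ENNReal.ofReal q) (wMeasure2 w) ∧
    MemLp (fun z : ℝ × ℝ => g z.2) (ENNReal.ofReal q) (wMeasure2 w)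

/-- Remark `rem: smirnov`: for a product density `w(x,y) = w_X(x)w_Y(y)`,
if `f(x), g(y) ∈ L^1(w)` and `f(x)+g(y) ∈ L^2(w)`, then `∫ f² w_X < ∞` and
`∫ g² w_Y < ∞`, i.e. `f(x), g(y) ∈ L^2(w)`. -/
theorem product_density_Ltwo_smirnov
    (wX wY : ℝ → ℝ) (hwXmeas : Measurable wX) (hwYmeas : Measurable wY)
    (hwXpos : ∀ x, 0 < wX x) (hwYpos : ∀ y, 0 < wY y)
    (hwXint : (∫ x, wX x) = 1) (hwYint : (∫ y, wY y) = 1)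
    (w : ℝ × ℝ → ℝ) (hw : ∀ z : ℝ × ℝ, w z = wX z.1 * wY z.2)
    (f g : ℝ → ℝ) (hfmeas : Measurable f) (hgmeas : Measurable g)
    (hf1 : MemLp (fun z : ℝ × ℝ => f z.1) 1 (wMeasure2 w))
    (hg1 : MemLp (fun z : ℝ × ℝ => g z.2) 1 (wMeasure2 w))
    (hsum : MemLp (fun z : ℝ × ℝ => f z.1 + g z.2) 2 (wMeasure2 w)) :
    (∫⁻ x, ENNReal.ofReal (f x ^ 2 * wX x)) < ⊤ ∧
    (∫⁻ y, ENNReal.ofReal (g y ^ 2 * wY y)) < ⊤ ∧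
    MemLp (fun z : ℝ × ℝ => f z.1) 2 (wMeasure2 w) ∧
    MemLp (fun z : ℝ × ℝ => g z.2) 2 (wMeasure2 w) := by
  -- set up the marginal measures
  set μX : Measure ℝ := volume.withDensity (fun x => ENNReal.ofReal (wX x)) with hμX
  set μY : Measure ℝ := volume.withDensity (fun y => ENNReal.ofReal (wY y)) with hμY
  -- integrability of the densities
  have hwXi : Integrable wX volume := by
    by_contra h
    rw [integral_undef h] at hwXint; norm_num at hwXint
  have hwYi : Integrable wY volume := by
    by_contra h
    rw [integral_undef h] at hwYint; norm_num at hwYint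
  -- probability measures
  have hXuniv : μX Set.univ = 1 := by
    rw [hμX, withDensity_apply _ MeasurableSet.univ, Measure.restrict_univ,
      ← MeasureTheory.ofReal_integral_eq_lintegral_ofReal hwXi
        (Filter.Eventually.of_forall fun x => (hwXpos x).le), hwXint]
    simp
  have hYuniv : μY Set.univ = 1 := by
    rw [hμY, withDensity_apply _ MeasurableSet.univ, Measure.restrict_univ,
      ← MeasureTheory.ofReal_integral_eq_lintegral_ofReal hwYi
        (Filter.Eventually.of_forall fun y => (hwYpos y).le), hwYint]
    simp
  haveI : IsProbabilityMeasure μX := ⟨hXuniv⟩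
  haveI : IsProbabilityMeasure μY := ⟨hYuniv⟩
  -- the weighted measure is the product of the marginals
  have hprod : wMeasure2 w = μX.prod μY := by
    refine (Measure.prod_eq fun s t hs ht => ?_).symm
    rw [wMeasure2, withDensity_apply _ (hs.prod ht)]
    rw [Measure.volume_eq_prod, ← Measure.prod_restrict]
    have : ∫⁻ z : ℝ × ℝ, ENNReal.ofReal (w z)
        ∂((volume.restrict s).prod (volume.restrict t))
        = ∫⁻ z : ℝ × ℝ, ENNReal.ofReal (wX z.1) * ENNReal.ofReal (wY z.2)
          ∂((volume.restrict s).prod (volume.restrict t)) := by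
      congr 1
      funext z
      rw [hw z, ENNReal.ofReal_mul (hwXpos z.1).le]
    rw [this,
      MeasureTheory.lintegral_prod_mul (hwXmeas.ennreal_ofReal.aemeasurable)
        (hwYmeas.ennreal_ofReal.aemeasurable),
      hμX, hμY, withDensity_apply _ hs, withDensity_apply _ ht]
  -- the sum is square integrable over the product
  rw [hprod] at hsum
  have hsumsq : Integrable (fun z : ℝ × ℝ => (f z.1 + g z.2) ^ 2) (μX.prod μY) :=
    hsum.integrable_sq
  -- fix a good section in each direction
  have hXae : ∀ᵐ x ∂μX, Integrable (fun y => (f x + g y) ^ 2) μY :=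
    hsumsq.prod_right_ae
  have hYae : ∀ᵐ y ∂μY, Integrable (fun x => (f x + g y) ^ 2) μX :=
    hsumsq.prod_left_ae
  obtain ⟨x₀, hx₀⟩ := hXae.exists
  obtain ⟨y₀, hy₀⟩ := hYae.exists
  -- g ∈ L²(μY)
  have hgsum : MemLp (fun y => f x₀ + g y) 2 μY :=
    (memLp_two_iff_integrable_sq
      ((hgmeas.const_add (f x₀)).aestronglyMeasurable)).mpr hx₀
  have hg2 : MemLp g 2 μY := by
    have h := hgsum.sub (memLp_const (f x₀))
    have he : ((fun y => f x₀ + g y) - fun _ => f x₀) = g := by funext y; simp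
    rwa [he] at h
  -- f ∈ L²(μX)
  have hfsum : MemLp (fun x => f x + g y₀) 2 μX :=
    (memLp_two_iff_integrable_sq
      ((hfmeas.add_const (g y₀)).aestronglyMeasurable)).mpr hy₀
  have hf2 : MemLp f 2 μX := by
    have h := hfsum.sub (memLp_const (g y₀))
    have he : ((fun x => f x + g y₀) - fun _ => g y₀) = f := by funext x; simp
    rwa [he] at h
  -- translate back
  have hfsq : Integrable (fun x => f x ^ 2) μX := hf2.integrable_sq
  have hgsq : Integrable (fun y => g y ^ 2) μY := hg2.integrable_sq
  have hfin : (∫⁻ x, ENNReal.ofReal (f x ^ 2 * wX x)) < ⊤ := by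
    have : (∫⁻ x, ENNReal.ofReal (f x ^ 2 * wX x))
        = ∫⁻ x, ENNReal.ofReal (f x ^ 2) ∂μX := by
      rw [hμX, lintegral_withDensity_eq_lintegral_mul _ hwXmeas.ennreal_ofReal
        (hfmeas.pow_const 2).ennreal_ofReal]
      congr 1
      funext x
      simp only [Pi.mul_apply]
      rw [mul_comm (f x ^ 2) (wX x), ENNReal.ofReal_mul (hwXpos x).le]
    rw [this]
    exact hfsq.lintegral_lt_top
  have hgfin : (∫⁻ y, ENNReal.ofReal (g y ^ 2 * wY y)) < ⊤ := by
    have : (∫⁻ y, ENNReal.ofReal (g y ^ 2 * wY y))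
        = ∫⁻ y, ENNReal.ofReal (g y ^ 2) ∂μY := by
      rw [hμY, lintegral_withDensity_eq_lintegral_mul _ hwYmeas.ennreal_ofReal
        (hgmeas.pow_const 2).ennreal_ofReal]
      congr 1
      funext y
      simp only [Pi.mul_apply]
      rw [mul_comm (g y ^ 2) (wY y), ENNReal.ofReal_mul (hwYpos y).le]
    rw [this]
    exact hgsq.lintegral_lt_top
  -- measure-preserving projections
  have mpfst : MeasurePreserving (Prod.fst : ℝ × ℝ → ℝ) (μX.prod μY) μX :=
    ⟨measurable_fst, by rw [Measure.map_fst_prod, hYuniv, one_smul]⟩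
  have mpsnd : MeasurePreserving (Prod.snd : ℝ × ℝ → ℝ) (μX.prod μY) μY :=
    ⟨measurable_snd, by rw [Measure.map_snd_prod, hXuniv, one_smul]⟩
  refine ⟨hfin, hgfin, ?_, ?_⟩
  · rw [hprod]
    exact hf2.comp_measurePreserving mpfst
  · rw [hprod]
    exact hg2.comp_measurePreserving mpsnd
end
end

section
/- Let 1 < p < ∞ with conjugate exponent q = p/(p−1), let w be a strictly positive density on U satisfying (★) and the Smirnov property for exponent q, and let g_i ∈ L^p(w) (1 ≤ i ≤ n) be given marginal data. Suppose Φ_i ∈ L^1(w) and Ψ_i ∈ L^1(w) (each depending only on ξ_i) both solve the system: ∫ sign(Φ̄(ξ))|Φ̄(ξ)|^{1/(p−1)} w(ξ)dξ_i^c = g_i(ξ_i) and ∫ sign(Ψ̄(ξ))|Ψ̄(ξ)|^{1/(p−1)} w(ξ)dξ_i^c = g_i(ξ_i) for all 1 ≤ i ≤ n, together with the normalizations ∫ Φ_i w_i dξ_i = ∫ Ψ_i w_i dξ_i = 0 for 2 ≤ i ≤ n, where Φ̄ := (1/n)∑_i Φ_i and Ψ̄ := (1/n)∑_i Ψ_i,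 and suppose both sign(Φ̄)|Φ̄|^{1/(p−1)} and sign(Ψ̄)|Ψ̄|^{1/(p−1)} belong to L^p(w). Then Φ_i = Ψ_i holds w_i-almost everywhere for every 1 ≤ i ≤ n. -/
open MeasureTheory

noncomputable section

namespace U14

open ENNReal NNReal

lemma S_strictMono {r : ℝ} (hr : 0 < r) :
    StrictMono (fun x : ℝ => Real.sign x * |x| ^ r) := by
  set S : ℝ → ℝ := fun x => Real.sign x * |x| ^ r with hS
  have hpos : ∀ x : ℝ, 0 < x → S x = x ^ r := by
    intro x hx
    simp [hS, Real.sign_of_pos hx, abs_of_pos hx]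
  have hzero : S 0 = 0 := by simp [hS]
  have hneg : ∀ x : ℝ, S (-x) = - S x := by
    intro x
    rcases lt_trichotomy x 0 with h | h | h
    · simp [hS, Real.sign_of_pos (by linarith : (0:ℝ) < -x), Real.sign_of_neg h, abs_of_neg h,
        abs_of_pos (by linarith : (0:ℝ) < -x)]
    · simp [h, hzero, hS]
    · simp [hS, Real.sign_of_pos h, Real.sign_of_neg (by linarith : -x < 0), abs_of_pos h,
        abs_of_neg (by linarith : -x < 0)]
  have key : ∀ a b : ℝ, 0 ≤ a → a < b → S a < S b := by
    intro a b ha hab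
    have hb : 0 < b := lt_of_le_of_lt ha hab
    rcases eq_or_lt_of_le ha with h0 | h0
    · rw [← h0, hzero, hpos b hb]
      exact Real.rpow_pos_of_pos hb r
    · rw [hpos a h0, hpos b hb]
      exact Real.rpow_lt_rpow h0.le hab hr
  intro a b hab
  rcases le_or_gt 0 a with ha | ha
  · exact key a b ha hab
  · rcases le_or_gt b 0 with hb | hb
    · have := key (-b) (-a) (by linarith) (by linarith)
      rw [hneg, hneg] at this
      simpa using by linarith [this]
    · calc S a < 0 := by
            have := key 0 (-a) le_rfl (by linarith)
            rw [hzero, hneg] at this; linarith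
        _ < S b := by
            have := key 0 b le_rfl hb
            rw [hzero] at this; exact this

lemma S_diff_mul_nonneg {r : ℝ} (hr : 0 < r) (a b : ℝ) :
    0 ≤ (Real.sign a * |a| ^ r - Real.sign b * |b| ^ r) * (a - b) := by
  rcases lt_trichotomy a b with h | h | h
  · have := S_strictMono hr h
    simp only at this
    nlinarith
  · simp [h]
  · have := S_strictMono hr h
    simp only at this
    nlinarith

lemma S_diff_mul_eq_zero {r : ℝ} (hr : 0 < r) {a b : ℝ}
    (h : (Real.sign a * |a| ^ r - Real.sign b * |b| ^ r) * (a - b) = 0) : a = b := by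
  by_contra hne
  rcases lt_or_gt_of_ne hne with hlt | hlt
  · have := S_strictMono hr hlt; simp only at this; nlinarith
  · have := S_strictMono hr hlt; simp only at this; nlinarith

lemma abs_S (r : ℝ) (hr : r ≠ 0) (x : ℝ) : |Real.sign x * |x| ^ r| = |x| ^ r := by
  rcases lt_trichotomy x 0 with h | h | h
  · rw [Real.sign_of_neg h, abs_mul]
    simp [abs_of_nonneg (Real.rpow_nonneg (abs_nonneg x) r)]
  · simp [h, Real.zero_rpow hr]
  · rw [Real.sign_of_pos h, abs_mul]
    simp [abs_of_nonneg (Real.rpow_nonneg (abs_nonneg x) r)]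

section WD
variable {α : Type*} [MeasurableSpace α]

lemma integral_wd (ν : Measure α) {w : α → ℝ} (hw : Measurable w) (h0 : ∀ x, 0 ≤ w x)
    (f : α → ℝ) :
    ∫ x, f x ∂(ν.withDensity fun x => ENNReal.ofReal (w x)) = ∫ x, f x * w x ∂ν := by
  have hm : Measurable (fun x => (w x).toNNReal) := hw.real_toNNReal
  have hrw : ν.withDensity (fun x => ENNReal.ofReal (w x))
      = ν.withDensity (fun x => ((w x).toNNReal : ℝ≥0∞)) := rfl
  rw [hrw, integral_withDensity_eq_integral_smul hm f]
  congr 1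
  ext x
  simp [NNReal.smul_def, Real.coe_toNNReal _ (h0 x), mul_comm]

lemma integrable_wd_iff (ν : Measure α) {w : α → ℝ} (hw : Measurable w) (h0 : ∀ x, 0 ≤ w x)
    (f : α → ℝ) :
    Integrable f (ν.withDensity fun x => ENNReal.ofReal (w x)) ↔
      Integrable (fun x => f x * w x) ν := by
  rw [integrable_withDensity_iff hw.ennreal_ofReal
    (Filter.Eventually.of_forall fun x => ENNReal.ofReal_lt_top)]
  constructor <;> intro h <;> refine h.congr (Filter.Eventually.of_forall fun x => ?_) <;>
    simp [ENNReal.toReal_ofReal (h0 x)]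

lemma memℒp_of_S {μ : Measure α} {F : α → ℝ} (hF : AEStronglyMeasurable F μ) {p : ℝ}
    (hp : 1 < p)
    (h : MemLp (fun x => Real.sign (F x) * |F x| ^ (1/(p-1))) (ENNReal.ofReal p) μ) :
    MemLp F (ENNReal.ofReal (p/(p-1))) μ := by
  have hp1 : (0:ℝ) < p - 1 := by linarith
  have hr : (0:ℝ) < 1/(p-1) := by positivity
  have heq : (fun x => ‖Real.sign (F x) * |F x| ^ (1/(p-1))‖) = fun x => ‖F x‖ ^ (1/(p-1)) :=
    funext fun x => by
      rw [Real.norm_eq_abs, Real.norm_eq_abs]; exact abs_S _ hr.ne' (F x)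
  have h1 : MemLp (fun x => ‖F x‖ ^ (1/(p-1))) (ENNReal.ofReal p) μ := heq ▸ h.norm
  have hdiv : ENNReal.ofReal (p/(p-1)) / ENNReal.ofReal (1/(p-1)) = ENNReal.ofReal p := by
    rw [← ENNReal.ofReal_div_of_pos hr]
    congr 1
    field_simp
  refine (memLp_norm_rpow_iff hF (ne_of_gt (ENNReal.ofReal_pos.2 hr))
    ENNReal.ofReal_ne_top).mp ?_
  rw [hdiv, ENNReal.toReal_ofReal hr.le]
  exact h1

lemma integrable_mul_holder {μ : Measure α} {f g : α → ℝ} {p q : ℝ} (hp : 1 < p)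
    (hq : q = p/(p-1)) (hf : MemLp f (ENNReal.ofReal p) μ) (hg : MemLp g (ENNReal.ofReal q) μ) :
    Integrable (fun x => f x * g x) μ := by
  have hp1 : (0:ℝ) < p - 1 := by linarith
  have hp0 : (0:ℝ) < p := by linarith
  have hq0 : (0:ℝ) < q := by rw [hq]; exact div_pos hp0 hp1
  have hpqr : (1 : ℝ≥0∞) / 1 = 1 / ENNReal.ofReal p + 1 / ENNReal.ofReal q := by
    rw [one_div, one_div, one_div, inv_one, ← ENNReal.ofReal_inv_of_pos hp0,
      ← ENNReal.ofReal_inv_of_pos hq0, ← ENNReal.ofReal_add (by positivity) (by positivity),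
      show p⁻¹ + q⁻¹ = 1 by rw [hq]; field_simp; ring]
    simp
  have h2 := (haveI : ENNReal.HolderTriple (ENNReal.ofReal p) (ENNReal.ofReal q) 1 :=
    ⟨by simpa [one_div] using hpqr.symm⟩; MemLp.smul (r := 1) hg hf)
  rw [memLp_one_iff_integrable] at h2
  exact h2.congr (Filter.Eventually.of_forall fun x => by simp [smul_eq_mul])

end WD

def ins {n : ℕ} (i : Fin n) (t : ℝ) (y : {j : Fin n // j ≠ i} → ℝ) : Fin n → ℝ :=
  fun j => if h : j = i then t else y ⟨j, h⟩

lemma ins_self {n : ℕ} (i : Fin n) (t : ℝ) (y : {j : Fin n // j ≠ i} → ℝ) :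
    ins i t y i = t := dif_pos rfl

lemma margC_eq_ins {n : ℕ} (i : Fin n) (F : (Fin n → ℝ) → ℝ) (t : ℝ) :
    margC i F t = ∫ y, F (ins i t y) := rfl

instance {n : ℕ} (i : Fin n) : Unique {j : Fin n // j = i} :=
  ⟨⟨⟨i, rfl⟩⟩, fun x => Subtype.ext x.2⟩

def eqv {n : ℕ} (i : Fin n) : (Fin n → ℝ) ≃ᵐ (ℝ × ({j : Fin n // j ≠ i} → ℝ)) :=
  (MeasurableEquiv.piEquivPiSubtypeProd (fun _ : Fin n => ℝ) (fun j => j = i)).trans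
    ((MeasurableEquiv.funUnique {j : Fin n // j = i} ℝ).prodCongr
      (MeasurableEquiv.refl ({j : Fin n // ¬ j = i} → ℝ)))

lemma eqv_symm_apply {n : ℕ} (i : Fin n) (t : ℝ) (y : {j : Fin n // j ≠ i} → ℝ) :
    (eqv i).symm (t, y) = ins i t y := rfl

lemma mp_eqv {n : ℕ} (i : Fin n) :
    MeasurePreserving (eqv i) (volume : Measure (Fin n → ℝ))
      ((volume : Measure ℝ).prod (volume : Measure ({j : Fin n // j ≠ i} → ℝ))) := by
  have h1 := volume_preserving_piEquivPiSubtypeProd (fun _ : Fin n => ℝ) (fun j => j = i)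
  have ha := volume_preserving_funUnique {j : Fin n // j = i} ℝ
  have hb : MeasurePreserving (MeasurableEquiv.refl ({j : Fin n // ¬ j = i} → ℝ))
      volume volume := MeasurePreserving.id _
  have h2 : MeasurePreserving
      ((MeasurableEquiv.funUnique {j : Fin n // j = i} ℝ).prodCongr
        (MeasurableEquiv.refl ({j : Fin n // ¬ j = i} → ℝ)))
      (((volume : Measure ({j : Fin n // j = i} → ℝ))).prod volume)
      ((volume : Measure ℝ).prod volume) := ha.prod hb
  rw [Measure.volume_eq_prod] at h1
  rw [show (Subtype.fintype (fun j : Fin n => j = i)) = (Fintype.subtypeEq i) from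
    Subsingleton.elim _ _] at h1
  exact h2.comp h1

variable {n : ℕ}

lemma mp_eqv_symm (i : Fin n) :
    MeasurePreserving (eqv i).symm
      ((volume : Measure ℝ).prod (volume : Measure ({j : Fin n // j ≠ i} → ℝ)))
      (volume : Measure (Fin n → ℝ)) :=
  MeasurePreserving.symm (eqv i) (mp_eqv i)

lemma integral_eq_marg (i : Fin n) {H : (Fin n → ℝ) → ℝ}
    (hH : Integrable H (volume : Measure (Fin n → ℝ))) :
    ∫ ξ, H ξ = ∫ t : ℝ, ∫ y, H (ins i t y) := by
  have h := mp_eqv_symm i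
  have hint : Integrable (fun z => H ((eqv i).symm z)) (volume.prod volume) :=
    (h.integrable_comp_emb (eqv i).symm.measurableEmbedding).2 hH
  rw [← h.integral_comp (eqv i).symm.measurableEmbedding H]
  rw [integral_prod _ hint]
  rfl

lemma slice_integrable (i : Fin n) {H : (Fin n → ℝ) → ℝ}
    (hH : Integrable H (volume : Measure (Fin n → ℝ))) :
    ∀ᵐ t : ℝ, Integrable (fun y => H (ins i t y)) volume := by
  have h := mp_eqv_symm i
  have hint : Integrable (fun z => H ((eqv i).symm z)) (volume.prod volume) :=
    (h.integrable_comp_emb (eqv i).symm.measurableEmbedding).2 hH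
  filter_upwards [hint.prod_right_ae] with t ht
  exact ht

lemma marg_integrable (i : Fin n) {H : (Fin n → ℝ) → ℝ}
    (hH : Integrable H (volume : Measure (Fin n → ℝ))) :
    Integrable (fun t : ℝ => ∫ y, H (ins i t y)) volume := by
  have h := mp_eqv_symm i
  have hint : Integrable (fun z => H ((eqv i).symm z)) (volume.prod volume) :=
    (h.integrable_comp_emb (eqv i).symm.measurableEmbedding).2 hH
  exact hint.integral_prod_left

lemma ae_ins (i : Fin n) {P : (Fin n → ℝ) → Prop} (h : ∀ᵐ ξ : Fin n → ℝ, P ξ) :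
    ∀ᵐ y : {j : Fin n // j ≠ i} → ℝ, ∀ᵐ t : ℝ, P (ins i t y) := by
  have h1 : ∀ᵐ z : ℝ × ({j : Fin n // j ≠ i} → ℝ) ∂(volume.prod volume), P ((eqv i).symm z) :=
    (mp_eqv_symm i).quasiMeasurePreserving.ae h
  have h2 : ∀ᵐ z : ({j : Fin n // j ≠ i} → ℝ) × ℝ ∂(volume.prod volume),
      P ((eqv i).symm z.swap) :=
    Measure.measurePreserving_swap.quasiMeasurePreserving.ae h1
  have := Measure.ae_ae_of_ae_prod h2
  filter_upwards [this] with y hy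
  filter_upwards [hy] with t ht
  exact ht

lemma marg_pull (i : Fin n) (f : ℝ → ℝ) (H : (Fin n → ℝ) → ℝ) (t : ℝ) :
    ∫ y, f ((ins i t y) i) * H (ins i t y) = f t * margC i H t := by
  rw [margC_eq_ins]
  rw [← integral_const_mul]
  congr 1
  funext y
  rw [ins_self]

end U14
set_option maxHeartbeats 1000000 in
/-- uniqueness part of Theorem `th: main4`: under (★) and the Smirnov
property for `q = p/(p-1)`, two normalized solutions `Φᵢ`, `Ψᵢ` of the integral-equation
system with the same marginal data `gᵢ`, whose associated functions
`sign(Φ̄)|Φ̄|^{1/(p-1)}`, `sign(Ψ̄)|Ψ̄|^{1/(p-1)}` are in `L^p(w)`, coincide: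
`Φᵢ = Ψᵢ` holds `wᵢ`-almost everywhere for every `i`. -/
theorem uniqueness_of_solutions
    {n : ℕ} (hn : 1 ≤ n) (I : Fin n → Set ℝ) (hI : ∀ i, IsClosedIntervalType (I i))
    (U : Set (Fin n → ℝ)) (hU : U = Set.univ.pi I)
    (w : (Fin n → ℝ) → ℝ) (hw : IsDensityOn w U)
    (p q : ℝ) (hp : 1 < p) (hq : q = p / (p - 1))
    (hstar : StarCondition w p) (hsmir : SmirnovProperty w q)
    (gi : Fin n → ℝ → ℝ)
    (hgi : ∀ i, MemLp (fun ξ => gi i (ξ i)) (ENNReal.ofReal p) (wMeasure w))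
    (Φ Ψ : Fin n → ℝ → ℝ)
    (hΦ1 : ∀ i, MemLp (fun ξ => Φ i (ξ i)) 1 (wMeasure w))
    (hΨ1 : ∀ i, MemLp (fun ξ => Ψ i (ξ i)) 1 (wMeasure w))
    (hΦsolve : ∀ i : Fin n, ∀ᵐ t : ℝ,
      margC i (fun ξ =>
        (Real.sign ((1 / (n : ℝ)) * ∑ j, Φ j (ξ j)) *
          |(1 / (n : ℝ)) * ∑ j, Φ j (ξ j)| ^ (1 / (p - 1))) * w ξ) t = gi i t)
    (hΨsolve : ∀ i : Fin n, ∀ᵐ t : ℝ,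
      margC i (fun ξ =>
        (Real.sign ((1 / (n : ℝ)) * ∑ j, Ψ j (ξ j)) *
          |(1 / (n : ℝ)) * ∑ j, Ψ j (ξ j)| ^ (1 / (p - 1))) * w ξ) t = gi i t)
    (hΦnorm : ∀ i : Fin n, (i : ℕ) ≠ 0 → (∫ t : ℝ, Φ i t * margC i w t) = 0)
    (hΨnorm : ∀ i : Fin n, (i : ℕ) ≠ 0 → (∫ t : ℝ, Ψ i t * margC i w t) = 0)
    (hΦmem : MemLp (fun ξ =>
        Real.sign ((1 / (n : ℝ)) * ∑ j, Φ j (ξ j)) *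
          |(1 / (n : ℝ)) * ∑ j, Φ j (ξ j)| ^ (1 / (p - 1)))
      (ENNReal.ofReal p) (wMeasure w))
    (hΨmem : MemLp (fun ξ =>
        Real.sign ((1 / (n : ℝ)) * ∑ j, Ψ j (ξ j)) *
          |(1 / (n : ℝ)) * ∑ j, Ψ j (ξ j)| ^ (1 / (p - 1)))
      (ENNReal.ofReal p) (wMeasure w)) :
    ∀ i : Fin n,
      ∀ᵐ t ∂(volume.withDensity (fun s => ENNReal.ofReal (margC i w s))),
        Φ i t = Ψ i t := by
  classical
  have hp1 : (0:ℝ) < p - 1 := by linarith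
  have hp0 : (0:ℝ) < p := by linarith
  have hr : (0:ℝ) < 1/(p-1) := by positivity
  have hn0 : ((n:ℝ)) ≠ 0 := Nat.cast_ne_zero.mpr (by omega)
  have hwm : Measurable w := hw.measurable
  have hw0 : ∀ ξ, 0 ≤ w ξ := by
    intro ξ
    by_cases h : ξ ∈ U
    · exact (hw.pos ξ h).le
    · exact le_of_eq (hw.zero ξ h).symm
  have hIntw : Integrable w (volume : Measure (Fin n → ℝ)) := by
    by_contra hcon
    have h1 := hw.integral_one
    rw [integral_undef hcon] at h1
    norm_num at h1
  -- abbreviations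
  set F : (Fin n → ℝ) → ℝ := fun ξ => (1/(n:ℝ)) * ∑ j, Φ j (ξ j) with hFdef
  set G : (Fin n → ℝ) → ℝ := fun ξ => (1/(n:ℝ)) * ∑ j, Ψ j (ξ j) with hGdef
  set SF : (Fin n → ℝ) → ℝ := fun ξ => Real.sign (F ξ) * |F ξ| ^ (1/(p-1)) with hSFdef
  set SG : (Fin n → ℝ) → ℝ := fun ξ => Real.sign (G ξ) * |G ξ| ^ (1/(p-1)) with hSGdef
  set D : Fin n → ℝ → ℝ := fun j t => Φ j t - Ψ j t with hDdef
  have hΦmem' : MemLp SF (ENNReal.ofReal p) (wMeasure w) := hΦmem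
  have hΨmem' : MemLp SG (ENNReal.ofReal p) (wMeasure w) := hΨmem
  have hΦsolve' : ∀ i : Fin n, ∀ᵐ t : ℝ, margC i (fun ξ => SF ξ * w ξ) t = gi i t := hΦsolve
  have hΨsolve' : ∀ i : Fin n, ∀ᵐ t : ℝ, margC i (fun ξ => SG ξ * w ξ) t = gi i t := hΨsolve
  -- probability measure
  have hμuniv : wMeasure w Set.univ = 1 := by
    show (volume.withDensity (fun ξ => ENNReal.ofReal (w ξ))) Set.univ = 1
    rw [withDensity_apply _ MeasurableSet.univ, setLIntegral_univ,
      ← ofReal_integral_eq_lintegral_ofReal hIntw (Filter.Eventually.of_forall hw0),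
      hw.integral_one, ENNReal.ofReal_one]
  haveI hprob : IsProbabilityMeasure (wMeasure w) := ⟨hμuniv⟩
  have key2 : ∀ f : (Fin n → ℝ) → ℝ,
      ∫ ξ, f ξ ∂(wMeasure w) = ∫ ξ, f ξ * w ξ := fun f =>
    U14.integral_wd volume hwm hw0 f
  have key1 : ∀ f : (Fin n → ℝ) → ℝ,
      Integrable f (wMeasure w) ↔ Integrable (fun ξ => f ξ * w ξ) volume := fun f =>
    U14.integrable_wd_iff volume hwm hw0 f
  -- L^q membership
  have hFaesm : AEStronglyMeasurable F (wMeasure w) :=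
    (Finset.aestronglyMeasurable_fun_sum Finset.univ fun j _ => (hΦ1 j).1).const_mul _
  have hGaesm : AEStronglyMeasurable G (wMeasure w) :=
    (Finset.aestronglyMeasurable_fun_sum Finset.univ fun j _ => (hΨ1 j).1).const_mul _
  have hFq : MemLp F (ENNReal.ofReal q) (wMeasure w) := by
    rw [hq]; exact U14.memℒp_of_S hFaesm hp hΦmem'
  have hGq : MemLp G (ENNReal.ofReal q) (wMeasure w) := by
    rw [hq]; exact U14.memℒp_of_S hGaesm hp hΨmem'
  have hΦq : ∀ j, MemLp (fun ξ => Φ j (ξ j)) (ENNReal.ofReal q) (wMeasure w) :=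
    hsmir Φ hΦ1 hFq
  have hΨq : ∀ j, MemLp (fun ξ => Ψ j (ξ j)) (ENNReal.ofReal q) (wMeasure w) :=
    hsmir Ψ hΨ1 hGq
  have hDq : ∀ j, MemLp (fun ξ => D j (ξ j)) (ENNReal.ofReal q) (wMeasure w) := fun j =>
    (hΦq j).sub (hΨq j)
  have hE : MemLp (fun ξ => SF ξ - SG ξ) (ENNReal.ofReal p) (wMeasure w) :=
    hΦmem'.sub hΨmem'
  have hED : ∀ j, Integrable (fun ξ => (SF ξ - SG ξ) * D j (ξ j)) (wMeasure w) := fun j =>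
    U14.integrable_mul_holder hp hq hE (hDq j)
  -- orthogonality
  have horto : ∀ j : Fin n, ∫ ξ, (SF ξ - SG ξ) * D j (ξ j) ∂(wMeasure w) = 0 := by
    intro j
    have hEDw : Integrable (fun ξ => ((SF ξ - SG ξ) * D j (ξ j)) * w ξ) volume :=
      (key1 _).1 (hED j)
    have hone : (1 : ENNReal) ≤ ENNReal.ofReal p := by
      rw [← ENNReal.ofReal_one]
      exact ENNReal.ofReal_le_ofReal hp.le
    have hSF1 : Integrable SF (wMeasure w) :=
      memLp_one_iff_integrable.mp (hΦmem'.mono_exponent hone)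
    have hSG1 : Integrable SG (wMeasure w) :=
      memLp_one_iff_integrable.mp (hΨmem'.mono_exponent hone)
    have hSFw : Integrable (fun ξ => SF ξ * w ξ) volume := (key1 _).1 hSF1
    have hSGw : Integrable (fun ξ => SG ξ * w ξ) volume := (key1 _).1 hSG1
    have hmarg0 : ∀ᵐ t : ℝ, margC j (fun ξ => (SF ξ - SG ξ) * w ξ) t = 0 := by
      filter_upwards [hΦsolve' j, hΨsolve' j, U14.slice_integrable j hSFw,
        U14.slice_integrable j hSGw] with t h1 h2 h3 h4
      rw [U14.margC_eq_ins]
      have heq : (fun y => ((fun ξ => (SF ξ - SG ξ) * w ξ) (U14.ins j t y)))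
          = fun y => (SF (U14.ins j t y) * w (U14.ins j t y))
            - (SG (U14.ins j t y) * w (U14.ins j t y)) := by
        funext y; ring
      rw [heq, integral_sub h3 h4]
      have e1 : (∫ y, SF (U14.ins j t y) * w (U14.ins j t y)) = gi j t := h1
      have e2 : (∫ y, SG (U14.ins j t y) * w (U14.ins j t y)) = gi j t := h2
      rw [e1, e2, sub_self]
    have step1 : ∫ ξ, (SF ξ - SG ξ) * D j (ξ j) ∂(wMeasure w)
        = ∫ ξ, ((SF ξ - SG ξ) * D j (ξ j)) * w ξ := key2 _
    have step2 : ∫ ξ, ((SF ξ - SG ξ) * D j (ξ j)) * w ξ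
        = ∫ t : ℝ, ∫ y, ((SF (U14.ins j t y) - SG (U14.ins j t y))
            * D j (U14.ins j t y j)) * w (U14.ins j t y) :=
      U14.integral_eq_marg j hEDw
    have step3 : (∫ t : ℝ, ∫ y, ((SF (U14.ins j t y) - SG (U14.ins j t y))
            * D j (U14.ins j t y j)) * w (U14.ins j t y))
        = ∫ t : ℝ, D j t * margC j (fun ξ => (SF ξ - SG ξ) * w ξ) t := by
      congr 1
      funext t
      rw [← U14.marg_pull j (D j) (fun ξ => (SF ξ - SG ξ) * w ξ) t]
      congr 1
      funext y
      show ((SF (U14.ins j t y) - SG (U14.ins j t y)) * D j (U14.ins j t y j))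
          * w (U14.ins j t y)
        = D j (U14.ins j t y j) * ((SF (U14.ins j t y) - SG (U14.ins j t y)) * w (U14.ins j t y))
      ring
    have step4 : (∫ t : ℝ, D j t * margC j (fun ξ => (SF ξ - SG ξ) * w ξ) t) = 0 := by
      have : (fun t : ℝ => D j t * margC j (fun ξ => (SF ξ - SG ξ) * w ξ) t)
          =ᵐ[volume] fun _ => (0:ℝ) := by
        filter_upwards [hmarg0] with t h
        rw [h, mul_zero]
      rw [integral_congr_ae this, integral_zero]
    rw [step1, step2, step3, step4]
  -- F = G a.e.
  have hFG : ∀ᵐ ξ ∂(wMeasure w), F ξ = G ξ := by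
    have heq : (fun ξ => (SF ξ - SG ξ) * (F ξ - G ξ))
        = fun ξ => (1/(n:ℝ)) * ∑ j, (SF ξ - SG ξ) * D j (ξ j) := by
      funext ξ
      rw [← Finset.mul_sum, hDdef]
      simp only [hFdef, hGdef]
      rw [Finset.sum_sub_distrib]
      ring
    have hEint : Integrable (fun ξ => (SF ξ - SG ξ) * (F ξ - G ξ)) (wMeasure w) := by
      rw [heq]
      exact (integrable_finset_sum _ fun j _ => hED j).const_mul _
    have hzero : ∫ ξ, (SF ξ - SG ξ) * (F ξ - G ξ) ∂(wMeasure w) = 0 := by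
      rw [heq, integral_const_mul, integral_finset_sum _ (fun j _ => hED j)]
      rw [Finset.sum_congr rfl fun j _ => horto j]
      simp
    have hnonneg : ∀ ξ, 0 ≤ (SF ξ - SG ξ) * (F ξ - G ξ) := fun ξ =>
      U14.S_diff_mul_nonneg hr (F ξ) (G ξ)
    have hae0 := (integral_eq_zero_iff_of_nonneg hnonneg hEint).mp hzero
    filter_upwards [hae0] with ξ h
    have h' : (SF ξ - SG ξ) * (F ξ - G ξ) = 0 := h
    exact U14.S_diff_mul_eq_zero hr h'
  -- marginal integral values
  have hΦw : ∀ j, Integrable (fun ξ => Φ j (ξ j) * w ξ) volume := fun j =>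
    (key1 _).1 (memLp_one_iff_integrable.mp (hΦ1 j))
  have hΨw : ∀ j, Integrable (fun ξ => Ψ j (ξ j) * w ξ) volume := fun j =>
    (key1 _).1 (memLp_one_iff_integrable.mp (hΨ1 j))
  have hD1 : ∀ j, Integrable (fun ξ => D j (ξ j)) (wMeasure w) := fun j =>
    memLp_one_iff_integrable.mp ((hΦ1 j).sub (hΨ1 j))
  have hDw : ∀ j, Integrable (fun ξ => D j (ξ j) * w ξ) volume := fun j =>
    (key1 _).1 (hD1 j)
  have hfub : ∀ (j : Fin n) (f : ℝ → ℝ), Integrable (fun ξ => f (ξ j) * w ξ) volume →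
      ∫ ξ, f (ξ j) * w ξ = ∫ t, f t * margC j w t := by
    intro j f hf
    rw [U14.integral_eq_marg j hf]
    congr 1
    funext t
    exact U14.marg_pull j f w t
  have hnormD : ∀ j : Fin n, (j : ℕ) ≠ 0 → ∫ ξ, D j (ξ j) * w ξ = 0 := by
    intro j hj
    have h1 : ∫ ξ, D j (ξ j) * w ξ = (∫ ξ, Φ j (ξ j) * w ξ) - ∫ ξ, Ψ j (ξ j) * w ξ := by
      rw [← integral_sub (hΦw j) (hΨw j)]
      congr 1
      funext ξ
      rw [hDdef]
      ring
    rw [h1, hfub j (Φ j) (hΦw j), hfub j (Ψ j) (hΨw j), hΦnorm j hj, hΨnorm j hj, sub_zero]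
  have hsumD : ∑ j, ∫ ξ, D j (ξ j) * w ξ = 0 := by
    have e1 : ∀ j : Fin n, ∫ ξ, D j (ξ j) * w ξ = ∫ ξ, D j (ξ j) ∂(wMeasure w) := fun j =>
      (key2 _).symm
    rw [Finset.sum_congr rfl fun j _ => e1 j,
      ← integral_finset_sum _ (fun j _ => hD1 j)]
    have e2 : (fun ξ => ∑ j, D j (ξ j)) = fun ξ => (n:ℝ) * (F ξ - G ξ) := by
      funext ξ
      rw [hDdef]
      simp only [hFdef, hGdef]
      rw [Finset.sum_sub_distrib]
      field_simp
    rw [e2]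
    have e3 : ∫ ξ, (n:ℝ) * (F ξ - G ξ) ∂(wMeasure w) = (n:ℝ) * ∫ ξ, (F ξ - G ξ) ∂(wMeasure w) :=
      integral_const_mul _ _
    rw [e3]
    have e4 : ∫ ξ, (F ξ - G ξ) ∂(wMeasure w) = 0 := by
      have : (fun ξ => F ξ - G ξ) =ᵐ[wMeasure w] fun _ => (0:ℝ) := by
        filter_upwards [hFG] with ξ h
        rw [h, sub_self]
      rw [integral_congr_ae this, integral_zero]
    rw [e4, mul_zero]
  have hDval : ∀ j : Fin n, ∫ ξ, D j (ξ j) * w ξ = 0 := by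
    intro j
    by_cases hj : (j : ℕ) = 0
    · have hrest : ∑ k ∈ Finset.univ.erase j, ∫ ξ, D k (ξ k) * w ξ = 0 := by
        refine Finset.sum_eq_zero fun k hk => hnormD k ?_
        intro h0
        exact (Finset.ne_of_mem_erase hk) (Fin.ext (by rw [h0, hj]))
      have := hsumD
      rw [← Finset.add_sum_erase _ _ (Finset.mem_univ j), hrest, add_zero] at this
      exact this
    · exact hnormD j hj
  -- transfer F = G to volume
  have hFGU : ∀ᵐ ξ : Fin n → ℝ, ξ ∈ U → F ξ = G ξ := by
    have h1 : ∀ᵐ ξ : Fin n → ℝ, ENNReal.ofReal (w ξ) ≠ 0 → F ξ = G ξ := by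
      rw [← ae_withDensity_iff hwm.ennreal_ofReal]
      exact hFG
    filter_upwards [h1] with ξ h hmem
    exact h (ne_of_gt (ENNReal.ofReal_pos.2 (hw.pos ξ hmem)))
  -- per-coordinate conclusion
  intro i
  have hwi_nonneg : ∀ t, 0 ≤ margC i w t := fun t => integral_nonneg fun y => hw0 _
  have hwi_zero : ∀ t, t ∉ I i → margC i w t = 0 := by
    intro t ht
    rw [U14.margC_eq_ins]
    have hz : ∀ y : {j : Fin n // j ≠ i} → ℝ, w (U14.ins i t y) = 0 := by
      intro y
      refine hw.zero _ ?_
      rw [hU]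
      intro hmem
      have := (Set.mem_univ_pi.mp hmem) i
      rw [U14.ins_self] at this
      exact ht this
    simp only [hz]
    exact integral_zero _ _
  have hwi_meas : Measurable (margC i w) := by
    have hsm : StronglyMeasurable (fun z : ℝ × ({j : Fin n // j ≠ i} → ℝ) =>
        w ((U14.eqv i).symm z)) :=
      (hwm.comp (U14.eqv i).symm.measurable).stronglyMeasurable
    exact hsm.integral_prod_right'.measurable
  have hwi_total : ∫ t, margC i w t = 1 := by
    have h1 := U14.integral_eq_marg i hIntw
    rw [hw.integral_one] at h1
    exact h1.symm
  have hae := U14.ae_ins i hFGU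
  have hA0 : volume (Set.univ.pi (fun j : {j : Fin n // j ≠ i} => I (j : Fin n))) ≠ 0 := by
    rw [volume_pi_pi]
    rw [Finset.prod_ne_zero_iff]
    intro j _
    rcases hI (j : Fin n) with ⟨b, hb⟩ | ⟨a, ha⟩ | ⟨a, b, hab, hab2⟩
    · rw [hb, Real.volume_Iic]; exact ENNReal.top_ne_zero
    · rw [ha, Real.volume_Ici]; exact ENNReal.top_ne_zero
    · rw [hab2, Real.volume_Icc]
      simp only [ne_eq, ENNReal.ofReal_eq_zero, not_le]
      linarith
  obtain ⟨y₀, hy₀A, hy₀⟩ : ∃ y₀, y₀ ∈ Set.univ.pi (fun j : {j : Fin n // j ≠ i} => I (j : Fin n))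
      ∧ ∀ᵐ t : ℝ, (U14.ins i t y₀ ∈ U → F (U14.ins i t y₀) = G (U14.ins i t y₀)) := by
    by_contra hcon
    push_neg at hcon
    have hsub : Set.univ.pi (fun j : {j : Fin n // j ≠ i} => I (j : Fin n))
        ⊆ {y | ¬ ∀ᵐ t : ℝ, (U14.ins i t y ∈ U → F (U14.ins i t y) = G (U14.ins i t y))} :=
      fun y hy => by simpa only [Set.mem_setOf_eq, Filter.not_eventually, _root_.not_imp] using hcon y hy
    exact hA0 (measure_mono_null hsub (ae_iff.mp hae))
  have hmemU : ∀ t, t ∈ I i → U14.ins i t y₀ ∈ U := by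
    intro t ht
    rw [hU, Set.mem_univ_pi]
    intro j
    by_cases hji : j = i
    · subst hji
      rw [U14.ins_self]
      exact ht
    · have e : U14.ins i t y₀ j = y₀ ⟨j, hji⟩ := dif_neg hji
      rw [e]
      exact (Set.mem_univ_pi.mp hy₀A) ⟨j, hji⟩
  set c : ℝ := ∑ j ∈ Finset.univ.erase i, D j (U14.ins i 0 y₀ j) with hc
  have hconst : ∀ᵐ t : ℝ, t ∈ I i → D i t = -c := by
    filter_upwards [hy₀] with t h ht
    have hfg := h (hmemU t ht)
    have hsum : ∑ j, D j (U14.ins i t y₀ j) = 0 := by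
      have h2 : ∑ j, Φ j (U14.ins i t y₀ j) = ∑ j, Ψ j (U14.ins i t y₀ j) :=
        mul_left_cancel₀ (one_div_ne_zero hn0) hfg
      rw [hDdef]
      rw [Finset.sum_sub_distrib, h2, sub_self]
    have hsplit : ∑ j, D j (U14.ins i t y₀ j) = D i t + c := by
      rw [← Finset.add_sum_erase _ _ (Finset.mem_univ i)]
      congr 1
      · rw [U14.ins_self]
      · rw [hc]
        refine Finset.sum_congr rfl fun j hj => ?_
        have hji : j ≠ i := Finset.ne_of_mem_erase hj
        have e : U14.ins i t y₀ j = U14.ins i 0 y₀ j := by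
          simp [U14.ins, dif_neg hji]
        rw [e]
    rw [hsplit] at hsum
    linarith
  have hcval : -c = 0 := by
    have hval : ∫ t, D i t * margC i w t = 0 := by
      rw [← hfub i (D i) (hDw i)]
      exact hDval i
    have h1 : ∫ t, D i t * margC i w t = ∫ t, (-c) * margC i w t := by
      refine integral_congr_ae ?_
      filter_upwards [hconst] with t h
      by_cases ht : t ∈ I i
      · rw [h ht]
      · rw [hwi_zero t ht, mul_zero, mul_zero]
    have h2 : ∫ t, (-c) * margC i w t = -c := by
      rw [integral_const_mul, hwi_total, mul_one]
    rw [hval] at h1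
    rw [h2] at h1
    exact h1.symm
  rw [ae_withDensity_iff hwi_meas.ennreal_ofReal]
  filter_upwards [hconst] with t h hne
  have htI : t ∈ I i := by
    by_contra hcontra
    exact hne (by rw [hwi_zero t hcontra, ENNReal.ofReal_zero])
  have hDi : D i t = 0 := by rw [h htI, hcval]
  have : Φ i t - Ψ i t = 0 := hDi
  linarith
end
end

section
/- For every q > 1 there exist a strictly positive density w on ℝ² and measurable functions f, g : ℝ → ℝ such that f(x) ∈ L^1(w) and g(y) ∈ L^1(w), the function (x,y) ↦ f(x)+g(y) belongs to L^q(w), and yet f(x) ∉ L^q(w) and g(y) ∉ L^q(w). In particular, there exist strictly positive densities on ℝ² that do not satisfy the Smirnov property for exponent q. -/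
open MeasureTheory
open scoped ENNReal

noncomputable section

section Aux
open Set
open scoped ENNReal
namespace SmirnovCounter


def u0 (q : ℝ) (x : ℝ) : ℝ := (1 + |x|) ^ (-(q+1))
def v0 (t : ℝ) : ℝ := Real.exp (-t^2)
def W0 (q : ℝ) (z : ℝ × ℝ) : ℝ := u0 q z.1 * v0 (z.2 - z.1)

lemma u0_pos (q x : ℝ) : 0 < u0 q x := Real.rpow_pos_of_pos (by positivity) _
lemma v0_pos (t : ℝ) : 0 < v0 t := Real.exp_pos _
lemma W0_pos (q : ℝ) (z : ℝ × ℝ) : 0 < W0 q z := mul_pos (u0_pos q _) (v0_pos _)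

lemma continuous_u0 (q : ℝ) : Continuous (u0 q) := by
  apply Continuous.rpow_const (by continuity)
  intro x; left; positivity

lemma measurable_u0 (q : ℝ) : Measurable (u0 q) := (continuous_u0 q).measurable
lemma continuous_v0 : Continuous v0 := by unfold v0; continuity
lemma measurable_v0 : Measurable v0 := continuous_v0.measurable
lemma measurable_W0 (q : ℝ) : Measurable (W0 q) :=
  ((measurable_u0 q).comp measurable_fst).mul
    (measurable_v0.comp (measurable_snd.sub measurable_fst))

lemma lintegral_ofReal_lt_top {f : ℝ → ℝ} (hf : Integrable f) :
    ∫⁻ t, ENNReal.ofReal (f t) < ⊤ :=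
  lt_of_le_of_lt (lintegral_mono fun t => Real.ofReal_le_enorm (f t)) hf.2

lemma gauss_fin (r : ℝ) (hr : 0 ≤ r) : ∫⁻ t : ℝ, ENNReal.ofReal (|t| ^ r * v0 t) < ⊤ := by
  have key : ∀ t : ℝ, |t| ^ r * v0 t ≤ Real.exp (r^2/2) * Real.exp (-(1/2 * t^2)) := by
    intro t
    have h1 : |t| ^ r ≤ Real.exp (r * |t|) := by
      calc |t| ^ r ≤ (Real.exp |t|) ^ r :=
            Real.rpow_le_rpow (abs_nonneg t) (by linarith [Real.add_one_le_exp |t|]) hr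
        _ = Real.exp (|t| * r) := (Real.exp_mul _ _).symm
        _ = Real.exp (r * |t|) := by rw [mul_comm]
    calc |t| ^ r * v0 t ≤ Real.exp (r * |t|) * Real.exp (-t^2) :=
          mul_le_mul_of_nonneg_right h1 (Real.exp_pos _).le
      _ = Real.exp (r * |t| - t^2) := by rw [← Real.exp_add]; ring_nf
      _ ≤ Real.exp (r^2/2 + -(1/2 * t^2)) := by
          apply Real.exp_le_exp.2
          nlinarith [two_mul_le_add_sq r |t|, sq_abs t, abs_nonneg t]
      _ = Real.exp (r^2/2) * Real.exp (-(1/2 * t^2)) := Real.exp_add _ _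
  have hint : Integrable fun t : ℝ => Real.exp (r^2/2) * Real.exp (-(1/2 * t^2)) := by
    have := (integrable_exp_neg_mul_sq (show (0:ℝ) < 1/2 by norm_num)).const_mul
      (Real.exp (r^2/2))
    simpa [neg_mul] using this
  exact lt_of_le_of_lt
    (lintegral_mono fun t => ENNReal.ofReal_le_ofReal (key t))
    (lintegral_ofReal_lt_top hint)

lemma integrable_one_add_abs {r : ℝ} (hr : 1 < r) :
    Integrable fun x : ℝ => (1 + |x|) ^ (-r) := by
  have := integrable_one_add_norm (E := ℝ) (μ := volume) (r := r) (by simpa using hr)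
  simpa [Real.norm_eq_abs] using this

lemma factor (a b : ℝ → ℝ≥0∞) (ha : Measurable a) (hb : Measurable b) :
    ∫⁻ z : ℝ × ℝ, a z.1 * b (z.2 - z.1) = (∫⁻ x, a x) * ∫⁻ t, b t := by
  have hm : Measurable fun z : ℝ × ℝ => a z.1 * b (z.2 - z.1) :=
    (ha.comp measurable_fst).mul (hb.comp (measurable_snd.sub measurable_fst))
  rw [Measure.volume_eq_prod, lintegral_prod _ hm.aemeasurable]
  have inner : ∀ x : ℝ, (∫⁻ y, a x * b (y - x)) = a x * ∫⁻ t, b t := by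
    intro x
    rw [lintegral_const_mul _ (show Measurable fun y : ℝ => b (y - x) from hb.comp (measurable_id.sub measurable_const))]
    congr 1
    exact lintegral_sub_right_eq_self b x
  simp only
  simp_rw [inner]
  exact lintegral_mul_const _ ha

lemma inv_lint : ∫⁻ x in Ioi (1:ℝ), ENNReal.ofReal x⁻¹ = ⊤ := by
  by_contra h
  apply not_IntegrableOn_Ioi_inv (a := (1:ℝ))
  refine ⟨measurable_inv.aestronglyMeasurable, ?_⟩
  rw [hasFiniteIntegral_iff_ofReal
    ((ae_restrict_iff' measurableSet_Ioi).2 (ae_of_all _ fun x hx => by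
      have : (1:ℝ) < x := hx
      positivity))]
  exact Ne.lt_top h

lemma u0_tail (q : ℝ) (hq : 1 < q) {x : ℝ} (hx : (1:ℝ) < x) :
    (2:ℝ) ^ (-(q+1)) * x⁻¹ ≤ x ^ q * u0 q x := by
  have hx0 : (0:ℝ) < x := by linarith
  have hq1 : (0:ℝ) ≤ q + 1 := by linarith
  have h12 : (1 + x) ^ (q+1) ≤ (2*x) ^ (q+1) :=
    Real.rpow_le_rpow (by linarith) (by linarith) hq1
  have hpos : (0:ℝ) < (1+x) ^ (q+1) := Real.rpow_pos_of_pos (by linarith) _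
  have h3 : ((2*x) ^ (q+1))⁻¹ ≤ ((1+x) ^ (q+1))⁻¹ := by
    exact inv_anti₀ hpos h12
  have key : (2:ℝ) ^ (-(q+1)) * x⁻¹ = x ^ q * ((2*x) ^ (q+1))⁻¹ := by
    rw [Real.mul_rpow (by norm_num) hx0.le, mul_inv,
      Real.rpow_neg (by norm_num : (0:ℝ) ≤ 2)]
    have hx1 : x ^ q * (x ^ (q+1))⁻¹ = x⁻¹ := by
      rw [← Real.rpow_neg hx0.le, ← Real.rpow_add hx0]
      have : q + -(q+1) = -1 := by ring
      rw [this, Real.rpow_neg_one]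
    calc ((2:ℝ) ^ (q+1))⁻¹ * x⁻¹ = ((2:ℝ) ^ (q+1))⁻¹ * (x ^ q * (x ^ (q+1))⁻¹) := by
          rw [hx1]
      _ = x ^ q * (((2:ℝ) ^ (q+1))⁻¹ * (x ^ (q+1))⁻¹) := by ring
  rw [key]
  have habs : |x| = x := abs_of_pos hx0
  rw [u0, habs, Real.rpow_neg (by linarith : (0:ℝ) ≤ 1 + x)]
  exact mul_le_mul_of_nonneg_left h3 (Real.rpow_nonneg hx0.le q)

lemma tail_lint (q : ℝ) (hq : 1 < q) :
    ∫⁻ x in Ioi (1:ℝ), ENNReal.ofReal (x ^ q * u0 q x) = ⊤ := by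
  have c2 : (0:ℝ) < 2 ^ (-(q+1)) := Real.rpow_pos_of_pos two_pos _
  rw [eq_top_iff]
  calc (⊤ : ℝ≥0∞) = ∫⁻ x in Ioi (1:ℝ), ENNReal.ofReal ((2:ℝ) ^ (-(q+1)) * x⁻¹) := by
        have : ∀ x : ℝ, ENNReal.ofReal ((2:ℝ) ^ (-(q+1)) * x⁻¹)
            = ENNReal.ofReal ((2:ℝ) ^ (-(q+1))) * ENNReal.ofReal x⁻¹ := fun x =>
          ENNReal.ofReal_mul c2.le
        simp_rw [this]
        rw [lintegral_const_mul' _ _ ENNReal.ofReal_ne_top, inv_lint,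
          ENNReal.mul_top (by simp only [ne_eq, ENNReal.ofReal_eq_zero, not_le]; exact c2)]
    _ ≤ ∫⁻ x in Ioi (1:ℝ), ENNReal.ofReal (x ^ q * u0 q x) := by
        apply setLIntegral_mono' measurableSet_Ioi
        intro x hx
        exact ENNReal.ofReal_le_ofReal (u0_tail q hq hx)

lemma lint_weight (q : ℝ) (a : ℝ → ℝ) (ha : Measurable a) (ha0 : ∀ x, 0 ≤ a x) :
    ∫⁻ z : ℝ × ℝ, ENNReal.ofReal (a z.1) * ENNReal.ofReal (W0 q z)
      = (∫⁻ x, ENNReal.ofReal (a x * u0 q x)) * ∫⁻ t, ENNReal.ofReal (v0 t) := by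
  have h : ∀ z : ℝ × ℝ, ENNReal.ofReal (a z.1) * ENNReal.ofReal (W0 q z)
      = (fun x => ENNReal.ofReal (a x * u0 q x)) z.1
        * (fun t => ENNReal.ofReal (v0 t)) (z.2 - z.1) := by
    intro z
    simp only [W0]
    rw [ENNReal.ofReal_mul (u0_pos q _).le, ENNReal.ofReal_mul (ha0 _)]
    ring
  simp_rw [h]
  exact factor _ _ (ENNReal.measurable_ofReal.comp (ha.mul (measurable_u0 q)))
    (ENNReal.measurable_ofReal.comp measurable_v0)

lemma lint_diff (q : ℝ) (b : ℝ → ℝ) (hb : Measurable b) (hb0 : ∀ t, 0 ≤ b t) :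
    ∫⁻ z : ℝ × ℝ, ENNReal.ofReal (b (z.2 - z.1)) * ENNReal.ofReal (W0 q z)
      = (∫⁻ x, ENNReal.ofReal (u0 q x)) * ∫⁻ t, ENNReal.ofReal (b t * v0 t) := by
  have h : ∀ z : ℝ × ℝ, ENNReal.ofReal (b (z.2 - z.1)) * ENNReal.ofReal (W0 q z)
      = (fun x => ENNReal.ofReal (u0 q x)) z.1
        * (fun t => ENNReal.ofReal (b t * v0 t)) (z.2 - z.1) := by
    intro z
    simp only [W0]
    rw [ENNReal.ofReal_mul (hb0 _), ENNReal.ofReal_mul (u0_pos q _).le]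
    ring
  simp_rw [h]
  exact factor _ _ (ENNReal.measurable_ofReal.comp (measurable_u0 q))
    (ENNReal.measurable_ofReal.comp (hb.mul measurable_v0))

lemma cv_pos : 0 < ∫⁻ t, ENNReal.ofReal (v0 t) := by
  rw [lintegral_pos_iff_support (f := fun t => ENNReal.ofReal (v0 t)) measurable_v0.ennreal_ofReal]
  have : (Function.support fun t => ENNReal.ofReal (v0 t)) = Set.univ := by
    ext t
    simp [Function.mem_support, ENNReal.ofReal_eq_zero, not_le, v0_pos t]
  rw [this]
  simpa using (isOpen_univ (X := ℝ)).measure_pos volume ⟨0, trivial⟩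



lemma U_fin (q : ℝ) (hq : 1 < q) : ∫⁻ x, ENNReal.ofReal (u0 q x) < ⊤ := by
  apply lintegral_ofReal_lt_top
  exact integrable_one_add_abs (by linarith : (1:ℝ) < q + 1)

lemma U1_fin (q : ℝ) (hq : 1 < q) : ∫⁻ x, ENNReal.ofReal (|x| * u0 q x) < ⊤ := by
  have hpt : ∀ x : ℝ, |x| * u0 q x ≤ (1 + |x|) ^ (-q) := by
    intro x
    have hs : (0:ℝ) < 1 + |x| := by positivity
    have h1 : |x| * u0 q x ≤ (1 + |x|) * (1 + |x|) ^ (-(q+1)) :=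
      mul_le_mul_of_nonneg_right (by linarith) (Real.rpow_nonneg hs.le _)
    have h2 : (1 + |x|) * (1 + |x|) ^ (-(q+1)) = (1 + |x|) ^ (-q) := by
      nth_rewrite 1 [← Real.rpow_one (1 + |x|)]
      rw [← Real.rpow_add hs]
      norm_num
    rw [u0] at h1
    rw [u0]
    linarith [h1, h2.symm.le, h2.le]
  calc ∫⁻ x, ENNReal.ofReal (|x| * u0 q x)
      ≤ ∫⁻ x, ENNReal.ofReal ((1 + |x|) ^ (-q)) :=
        lintegral_mono fun x => ENNReal.ofReal_le_ofReal (hpt x)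
    _ < ⊤ := lintegral_ofReal_lt_top (integrable_one_add_abs hq)

lemma Uq_inf (q : ℝ) (hq : 1 < q) : ∫⁻ x, ENNReal.ofReal (|x| ^ q * u0 q x) = ⊤ := by
  rw [eq_top_iff]
  calc (⊤ : ℝ≥0∞) = ∫⁻ x in Ioi (1:ℝ), ENNReal.ofReal (x ^ q * u0 q x) :=
        (tail_lint q hq).symm
    _ = ∫⁻ x in Ioi (1:ℝ), ENNReal.ofReal (|x| ^ q * u0 q x) := by
        apply setLIntegral_congr_fun measurableSet_Ioi
        intro x hx
        dsimp only
        rw [abs_of_pos (lt_trans one_pos hx)]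
    _ ≤ ∫⁻ x, ENNReal.ofReal (|x| ^ q * u0 q x) := setLIntegral_le_lintegral _ _

end SmirnovCounter
end Aux

open SmirnovCounter Set in
/-- Section `sec: counter`: for every `q > 1` there is a strictly positive
density `w` on `ℝ²` and functions `f, g` with `f(x), g(y) ∈ L^1(w)`,
`f(x)+g(y) ∈ L^q(w)`, but `f(x), g(y) ∉ L^q(w)`; in particular `w` fails the Smirnov
property for exponent `q`. -/
theorem exists_density_without_smirnov (q : ℝ) (hq : 1 < q) :
    ∃ (w : ℝ × ℝ → ℝ) (f g : ℝ → ℝ),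
      IsDensity2 w ∧ Measurable f ∧ Measurable g ∧
      MemLp (fun z : ℝ × ℝ => f z.1) 1 (wMeasure2 w) ∧
      MemLp (fun z : ℝ × ℝ => g z.2) 1 (wMeasure2 w) ∧
      MemLp (fun z : ℝ × ℝ => f z.1 + g z.2) (ENNReal.ofReal q) (wMeasure2 w) ∧
      ¬ MemLp (fun z : ℝ × ℝ => f z.1) (ENNReal.ofReal q) (wMeasure2 w) ∧
      ¬ MemLp (fun z : ℝ × ℝ => g z.2) (ENNReal.ofReal q) (wMeasure2 w) ∧
      ¬ SmirnovProperty2 w q := by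
  have hq0 : 0 < q := by linarith
  have hp0 : (ENNReal.ofReal q) ≠ 0 := by
    simp only [ne_eq, ENNReal.ofReal_eq_zero, not_le]; exact hq0
  have hpt : (ENNReal.ofReal q) ≠ ⊤ := ENNReal.ofReal_ne_top
  have hpr : (ENNReal.ofReal q).toReal = q := ENNReal.toReal_ofReal hq0.le
  have hW0meas : Measurable (W0 q) := measurable_W0 q
  have hmrpow : Measurable fun s : ℝ => s ^ q :=
    (continuous_id.rpow_const fun _ => Or.inr hq0.le).measurable
  -- finiteness facts
  have hcvfin : ∫⁻ t, ENNReal.ofReal (v0 t) < ⊤ := by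
    apply lintegral_ofReal_lt_top
    have := integrable_exp_neg_mul_sq (show (0:ℝ) < 1 by norm_num)
    have e : v0 = fun t => Real.exp (-t^2) := rfl
    rw [e]; simpa using this
  have hUfin := U_fin q hq
  have hU1fin := U1_fin q hq
  have hL : ∫⁻ z : ℝ × ℝ, ENNReal.ofReal (W0 q z)
      = (∫⁻ x, ENNReal.ofReal (u0 q x)) * ∫⁻ t, ENNReal.ofReal (v0 t) := by
    have h := lint_weight q (fun _ => 1) measurable_const (fun _ => zero_le_one)
    simpa using h
  have hLfin : ∫⁻ z : ℝ × ℝ, ENNReal.ofReal (W0 q z) < ⊤ := by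
    rw [hL]; exact ENNReal.mul_lt_top hUfin hcvfin
  have hInt : Integrable (W0 q) := by
    refine ⟨hW0meas.aestronglyMeasurable, ?_⟩
    rw [hasFiniteIntegral_iff_ofReal (ae_of_all _ fun z => (W0_pos q z).le)]
    exact hLfin
  set I : ℝ := ∫ z, W0 q z with hIdef
  have hIpos : 0 < I := by
    rw [hIdef, integral_pos_iff_support_of_nonneg (fun z => (W0_pos q z).le) hInt]
    have hsupp : Function.support (W0 q) = Set.univ := by
      ext z; simp [Function.mem_support, (W0_pos q z).ne']
    rw [hsupp]
    exact (isOpen_univ (X := ℝ × ℝ)).measure_pos volume ⟨(0, 0), trivial⟩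
  set w : ℝ × ℝ → ℝ := fun z => W0 q z / I with hwdef
  have hwmeas : Measurable w := hW0meas.div_const I
  -- key integral identity for the weighted measure
  have key : ∀ h : ℝ × ℝ → ℝ≥0∞, Measurable h →
      ∫⁻ z, h z ∂(wMeasure2 w)
        = (ENNReal.ofReal I)⁻¹ * ∫⁻ z, h z * ENNReal.ofReal (W0 q z) := by
    intro h hh
    rw [wMeasure2, lintegral_withDensity_eq_lintegral_mul _ hwmeas.ennreal_ofReal hh]
    have hptw : ∀ z : ℝ × ℝ, ENNReal.ofReal (w z) * h z
        = (ENNReal.ofReal I)⁻¹ * (h z * ENNReal.ofReal (W0 q z)) := by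
      intro z
      rw [hwdef]
      simp only
      rw [ENNReal.ofReal_div_of_pos hIpos, div_eq_mul_inv]
      ring
    simp only [Pi.mul_apply]
    simp_rw [hptw]
    exact lintegral_const_mul _ (hh.mul hW0meas.ennreal_ofReal)
  have hinvne0 : (ENNReal.ofReal I)⁻¹ ≠ 0 := by
    simp [ENNReal.inv_eq_zero]
  have hinvlt : (ENNReal.ofReal I)⁻¹ < ⊤ :=
    ENNReal.inv_lt_top.2 (ENNReal.ofReal_pos.2 hIpos)
  -- membership helpers
  have memL1 : ∀ h : ℝ × ℝ → ℝ, Measurable h →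
      (∫⁻ z : ℝ × ℝ, ENNReal.ofReal |h z| * ENNReal.ofReal (W0 q z) < ⊤) →
      MemLp h 1 (wMeasure2 w) := by
    intro h hh hfin
    refine ⟨hh.aestronglyMeasurable, ?_⟩
    rw [eLpNorm_one_eq_lintegral_enorm]
    have hrw : ∀ z : ℝ × ℝ, ‖h z‖ₑ = ENNReal.ofReal |h z| := fun z => by
      rw [← ofReal_norm, Real.norm_eq_abs]
    simp_rw [hrw]
    rw [key _ hh.abs.ennreal_ofReal]
    exact ENNReal.mul_lt_top hinvlt hfin
  have hrwq : ∀ h : ℝ × ℝ → ℝ, ∀ z : ℝ × ℝ,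
      ‖h z‖ₑ ^ (ENNReal.ofReal q).toReal = ENNReal.ofReal (|h z| ^ q) := by
    intro h z
    rw [hpr, ← ofReal_norm, Real.norm_eq_abs,
      ← ENNReal.ofReal_rpow_of_nonneg (abs_nonneg _) hq0.le]
  have memLq : ∀ h : ℝ × ℝ → ℝ, Measurable h →
      (∫⁻ z : ℝ × ℝ, ENNReal.ofReal (|h z| ^ q) * ENNReal.ofReal (W0 q z) < ⊤) →
      MemLp h (ENNReal.ofReal q) (wMeasure2 w) := by
    intro h hh hfin
    refine ⟨hh.aestronglyMeasurable, ?_⟩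
    rw [eLpNorm_lt_top_iff_lintegral_rpow_enorm_lt_top hp0 hpt]
    simp_rw [hrwq h]
    rw [key (fun z => ENNReal.ofReal (|h z| ^ q)) ((hmrpow.comp hh.abs).ennreal_ofReal)]
    exact ENNReal.mul_lt_top hinvlt hfin
  have notmemLq : ∀ h : ℝ × ℝ → ℝ, Measurable h →
      (∫⁻ z : ℝ × ℝ, ENNReal.ofReal (|h z| ^ q) * ENNReal.ofReal (W0 q z) = ⊤) →
      ¬ MemLp h (ENNReal.ofReal q) (wMeasure2 w) := by
    intro h hh htop hmem
    have hfin := (eLpNorm_lt_top_iff_lintegral_rpow_enorm_lt_top hp0 hpt).1 hmem.2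
    simp_rw [hrwq h] at hfin
    rw [key (fun z => ENNReal.ofReal (|h z| ^ q)) ((hmrpow.comp hh.abs).ennreal_ofReal), htop, ENNReal.mul_top hinvne0] at hfin
    exact (lt_irrefl _ hfin)
  -- the actual estimates
  have fin1 : ∫⁻ z : ℝ × ℝ, ENNReal.ofReal |z.1| * ENNReal.ofReal (W0 q z) < ⊤ := by
    rw [lint_weight q (fun x => |x|) measurable_abs (fun x => abs_nonneg x)]
    exact ENNReal.mul_lt_top hU1fin hcvfin
  have hg1 : ∫⁻ t, ENNReal.ofReal (|t| * v0 t) < ⊤ := by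
    have := gauss_fin 1 zero_le_one
    simpa [Real.rpow_one] using this
  have fin2 : ∫⁻ z : ℝ × ℝ, ENNReal.ofReal |z.2| * ENNReal.ofReal (W0 q z) < ⊤ := by
    have hbd : ∀ z : ℝ × ℝ, ENNReal.ofReal |z.2| * ENNReal.ofReal (W0 q z)
        ≤ ENNReal.ofReal |z.1| * ENNReal.ofReal (W0 q z)
          + ENNReal.ofReal |z.2 - z.1| * ENNReal.ofReal (W0 q z) := by
      intro z
      rw [← add_mul]
      apply mul_le_mul_left
      rw [← ENNReal.ofReal_add (abs_nonneg _) (abs_nonneg _)]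
      apply ENNReal.ofReal_le_ofReal
      have := abs_sub_abs_le_abs_sub z.2 z.1
      linarith
    calc ∫⁻ z : ℝ × ℝ, ENNReal.ofReal |z.2| * ENNReal.ofReal (W0 q z)
        ≤ ∫⁻ z : ℝ × ℝ, (ENNReal.ofReal |z.1| * ENNReal.ofReal (W0 q z)
            + ENNReal.ofReal |z.2 - z.1| * ENNReal.ofReal (W0 q z)) :=
          lintegral_mono hbd
      _ = (∫⁻ z : ℝ × ℝ, ENNReal.ofReal |z.1| * ENNReal.ofReal (W0 q z))
            + ∫⁻ z : ℝ × ℝ, ENNReal.ofReal |z.2 - z.1| * ENNReal.ofReal (W0 q z) := by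
          apply lintegral_add_left
          exact ((measurable_fst.abs).ennreal_ofReal).mul hW0meas.ennreal_ofReal
      _ < ⊤ := by
          rw [lint_diff q (fun t => |t|) measurable_abs (fun t => abs_nonneg t)]
          refine ENNReal.add_lt_top.2 ⟨fin1, ENNReal.mul_lt_top hUfin hg1⟩
  have finq : ∫⁻ z : ℝ × ℝ, ENNReal.ofReal (|z.1 + -z.2| ^ q) * ENNReal.ofReal (W0 q z) < ⊤ := by
    have hrw : ∀ z : ℝ × ℝ, |z.1 + -z.2| ^ q = |z.2 - z.1| ^ q := fun z => by
      rw [show z.1 + -z.2 = -(z.2 - z.1) by ring, abs_neg]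
    simp_rw [hrw]
    rw [lint_diff q (fun t => |t| ^ q)
      ((continuous_abs.rpow_const fun x => Or.inr hq0.le).measurable)
      (fun t => Real.rpow_nonneg (abs_nonneg t) q)]
    exact ENNReal.mul_lt_top hUfin (gauss_fin q hq0.le)
  have topf : ∫⁻ z : ℝ × ℝ, ENNReal.ofReal (|z.1| ^ q) * ENNReal.ofReal (W0 q z) = ⊤ := by
    rw [lint_weight q (fun x => |x| ^ q)
      ((continuous_abs.rpow_const fun x => Or.inr hq0.le).measurable)
      (fun x => Real.rpow_nonneg (abs_nonneg x) q)]
    rw [Uq_inf q hq]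
    exact ENNReal.top_mul (cv_pos).ne'
  have topg : ∫⁻ z : ℝ × ℝ, ENNReal.ofReal (|z.2| ^ q) * ENNReal.ofReal (W0 q z) = ⊤ := by
    set a' : ℝ → ℝ≥0∞ := (Ioi (1:ℝ)).indicator (fun x => ENNReal.ofReal (x ^ q * u0 q x))
      with ha'def
    set b' : ℝ → ℝ≥0∞ := (Icc (0:ℝ) 1).indicator (fun _ => ENNReal.ofReal (Real.exp (-1)))
      with hb'def
    have hma : Measurable a' := by
      apply Measurable.indicator _ measurableSet_Ioi
      exact (((continuous_id.rpow_const fun x => Or.inr hq0.le).measurable).mul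
        (measurable_u0 q)).ennreal_ofReal
    have hmb : Measurable b' := measurable_const.indicator measurableSet_Icc
    have hpoint : ∀ z : ℝ × ℝ, a' z.1 * b' (z.2 - z.1)
        ≤ ENNReal.ofReal (|z.2| ^ q) * ENNReal.ofReal (W0 q z) := by
      intro z
      by_cases h1 : z.1 ∈ Ioi (1:ℝ)
      · by_cases h2 : z.2 - z.1 ∈ Icc (0:ℝ) 1
        · rw [ha'def, hb'def]
          simp only [Set.indicator_of_mem h1, Set.indicator_of_mem h2]
          have hx1 : (1:ℝ) < z.1 := h1
          rw [← ENNReal.ofReal_mul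
            (mul_nonneg (Real.rpow_nonneg (by linarith) q) (u0_pos q z.1).le)]
          rw [← ENNReal.ofReal_mul (Real.rpow_nonneg (abs_nonneg _) q)]
          apply ENNReal.ofReal_le_ofReal
          have h21 : (0:ℝ) ≤ z.2 - z.1 := h2.1
          have h22 : z.2 - z.1 ≤ 1 := h2.2
          have habs2 : z.1 ≤ |z.2| := by
            rw [abs_of_pos (by linarith : (0:ℝ) < z.2)]
            linarith
          have hq1 : z.1 ^ q ≤ |z.2| ^ q :=
            Real.rpow_le_rpow (by linarith) habs2 hq0.le
          have hv : Real.exp (-1) ≤ v0 (z.2 - z.1) := by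
            rw [v0]
            apply Real.exp_le_exp.2
            nlinarith
          calc z.1 ^ q * u0 q z.1 * Real.exp (-1)
              = z.1 ^ q * (u0 q z.1 * Real.exp (-1)) := by ring
            _ ≤ |z.2| ^ q * (u0 q z.1 * v0 (z.2 - z.1)) := by
                apply mul_le_mul hq1
                  (mul_le_mul_of_nonneg_left hv (u0_pos q _).le)
                  (mul_nonneg (u0_pos q _).le (Real.exp_pos _).le)
                  (Real.rpow_nonneg (abs_nonneg _) q)
            _ = |z.2| ^ q * W0 q z := rfl
        · rw [hb'def]
          simp only [Set.indicator_of_notMem h2, mul_zero]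
          exact zero_le
      · rw [ha'def]
        simp only [Set.indicator_of_notMem h1, zero_mul]
        exact zero_le
    have hA : ∫⁻ x, a' x = ⊤ := by
      rw [ha'def, lintegral_indicator measurableSet_Ioi]
      exact tail_lint q hq
    have hB : (∫⁻ t, b' t) ≠ 0 := by
      rw [hb'def, lintegral_indicator measurableSet_Icc, setLIntegral_const]
      simp [Real.volume_Icc, ENNReal.ofReal_eq_zero, not_le, Real.exp_pos]
    rw [eq_top_iff]
    calc (⊤ : ℝ≥0∞) = (∫⁻ x, a' x) * ∫⁻ t, b' t := by rw [hA, ENNReal.top_mul hB]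
      _ = ∫⁻ z : ℝ × ℝ, a' z.1 * b' (z.2 - z.1) := (factor a' b' hma hmb).symm
      _ ≤ ∫⁻ z : ℝ × ℝ, ENNReal.ofReal (|z.2| ^ q) * ENNReal.ofReal (W0 q z) :=
          lintegral_mono hpoint
  -- assemble
  have hmemf1 : MemLp (fun z : ℝ × ℝ => z.1) 1 (wMeasure2 w) :=
    memL1 _ measurable_fst fin1
  have hmemg1 : MemLp (fun z : ℝ × ℝ => -z.2) 1 (wMeasure2 w) := by
    apply memL1 _ measurable_snd.neg
    simpa [abs_neg] using fin2
  have hmemfg : MemLp (fun z : ℝ × ℝ => z.1 + -z.2) (ENNReal.ofReal q) (wMeasure2 w) :=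
    memLq _ (measurable_fst.add measurable_snd.neg) finq
  have hnotf : ¬ MemLp (fun z : ℝ × ℝ => z.1) (ENNReal.ofReal q) (wMeasure2 w) :=
    notmemLq _ measurable_fst topf
  have hnotg : ¬ MemLp (fun z : ℝ × ℝ => -z.2) (ENNReal.ofReal q) (wMeasure2 w) := by
    apply notmemLq _ measurable_snd.neg
    simpa [abs_neg] using topg
  refine ⟨w, (fun x => x), (fun y => -y), ?_, measurable_id, measurable_id.neg,
    hmemf1, hmemg1, hmemfg, hnotf, hnotg, ?_⟩
  · refine ⟨hwmeas, fun z => div_pos (W0_pos q z) hIpos, ?_⟩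
    rw [hwdef]
    simp only
    rw [integral_div]
    exact div_self hIpos.ne'
  · intro hS
    exact hnotf (hS (fun x => x) (fun y => -y) measurable_id measurable_id.neg
      hmemf1 hmemg1 hmemfg).1

end
end
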